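/- arXiv:2206.08207 — 5 statements merged into one kernel-verified Lean document; each statement's English description precedes it below -/
import Mathlib

section
/- Let 𝐊 be an invertible symmetric real m×m matrix, 𝐇 an invertible symmetric real n×n matrix, y₁ ∈ ℝ^m, y₂ ∈ ℝ^n. Set U = 𝐊y₁, W = 𝐇y₂, K = ½·y₁ᵀU, H = ½·y₂ᵀW. Let f, f_K, f_H, f_KK, f_KH, f_HH be real numbers satisfying f_K·K + f_H·H = f, f_KK·K + f_KH·H = 0, f_KH·K + f_HH·H = 0, with f_K ≠ 0 and f_K + 2K·f_KK ≠ 0. Set A = f_K·𝐊 + f_KK·UUᵀ, B = f_KH·UWᵀ, C = f_KH·WUᵀ, D = f_H·𝐇 + f_HH·WWᵀ. Then A is invertible with A⁻¹ = (1/f_K)·(𝐊⁻¹ − (f_KK/(f_K + 2K·f_KK))·y₁y₁ᵀ), the Schur complement satisfies D − C·A⁻¹·B = f_H·𝐇 + (f_K·f_HH/(f_K + 2K·f_KK))·WWᵀ, and moreover f_H·(f_K + 2K·f_KK) + 2H·f_K·f_HH = f_K·f_H − 2f·f_KH. -/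
open Matrix

lemma my_mul_vecMulVec {m n p : ℕ} (M : Matrix (Fin m) (Fin n) ℝ) (a : Fin n → ℝ) (b : Fin p → ℝ) :
    M * vecMulVec a b = vecMulVec (M.mulVec a) b := by
  ext i j
  simp [mul_apply, vecMulVec_apply, mulVec, dotProduct, Finset.sum_mul, mul_assoc]

lemma my_vecMulVec_mul {m n p : ℕ} (a : Fin m → ℝ) (b : Fin n → ℝ) (M : Matrix (Fin n) (Fin p) ℝ) :
    vecMulVec a b * M = vecMulVec a (vecMul b M) := by
  ext i j
  simp [mul_apply, vecMulVec_apply, vecMul, dotProduct, Finset.mul_sum, mul_assoc]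

lemma my_vecMulVec_smulvec {m n : ℕ} (a : Fin m → ℝ) (c : ℝ) (b : Fin n → ℝ) :
    vecMulVec a (c • b) = c • vecMulVec a b := by
  ext i j; simp [vecMulVec_apply]; ring

lemma my_smulvec_vecMulVec {m n : ℕ} (c : ℝ) (a : Fin m → ℝ) (b : Fin n → ℝ) :
    vecMulVec (c • a) b = c • vecMulVec a b := by
  ext i j; simp [vecMulVec_apply]; ring

lemma my_vecMul_vecMulVec {m n : ℕ} (u : Fin m → ℝ) (a : Fin m → ℝ) (b : Fin n → ℝ) :
    vecMul u (vecMulVec a b) = (u ⬝ᵥ a) • b := by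
  ext j
  simp [vecMul, vecMulVec_apply, dotProduct, Finset.sum_mul, mul_assoc]

lemma my_vecMul_smulMat {m n : ℕ} (u : Fin m → ℝ) (c : ℝ) (M : Matrix (Fin m) (Fin n) ℝ) :
    vecMul u (c • M) = c • vecMul u M := by
  ext j
  simp [vecMul, dotProduct, Finset.mul_sum]
  exact Finset.sum_congr rfl fun k _ => by ring

/-- Inverse of the first diagonal block and the Schur complement identity for the
fundamental tensor of a Minkowskian product metric. -/
theorem block_inverse_and_schur_complement {m n : ℕ}
    (Kmat : Matrix (Fin m) (Fin m) ℝ) (Hmat : Matrix (Fin n) (Fin n) ℝ)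
    (hKmat : IsUnit Kmat) (hKmatsym : Kmat.IsSymm) (hHmat : IsUnit Hmat) (hHmatsym : Hmat.IsSymm)
    (y₁ : Fin m → ℝ) (y₂ : Fin n → ℝ)
    (U : Fin m → ℝ) (W : Fin n → ℝ)
    (hU : U = Kmat.mulVec y₁) (hW : W = Hmat.mulVec y₂)
    (K H : ℝ) (hK : K = (1 / 2) * (y₁ ⬝ᵥ U)) (hH : H = (1 / 2) * (y₂ ⬝ᵥ W))
    (f fK fH fKK fKH fHH : ℝ)
    (heuler1 : fK * K + fH * H = f)
    (heuler2 : fKK * K + fKH * H = 0)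
    (heuler3 : fKH * K + fHH * H = 0)
    (hfK : fK ≠ 0) (hden : fK + 2 * K * fKK ≠ 0)
    (A : Matrix (Fin m) (Fin m) ℝ) (B : Matrix (Fin m) (Fin n) ℝ)
    (C : Matrix (Fin n) (Fin m) ℝ) (D : Matrix (Fin n) (Fin n) ℝ)
    (hA : A = fK • Kmat + fKK • vecMulVec U U)
    (hB : B = fKH • vecMulVec U W)
    (hC : C = fKH • vecMulVec W U)
    (hD : D = fH • Hmat + fHH • vecMulVec W W) :
    IsUnit A ∧
    A⁻¹ = (1 / fK) • (Kmat⁻¹ - (fKK / (fK + 2 * K * fKK)) • vecMulVec y₁ y₁) ∧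
    D - C * A⁻¹ * B = fH • Hmat + (fK * fHH / (fK + 2 * K * fKK)) • vecMulVec W W ∧
    fH * (fK + 2 * K * fKK) + 2 * H * fK * fHH = fK * fH - 2 * f * fKH := by
  have hdet : IsUnit Kmat.det := (Matrix.isUnit_iff_isUnit_det Kmat).mp hKmat
  have hKK1 : Kmat * Kmat⁻¹ = 1 := Matrix.mul_nonsing_inv _ hdet
  have hvecU : vecMul U Kmat⁻¹ = y₁ := by
    rw [hU, Matrix.vecMul_mulVec, hKmatsym.eq, hKK1, vecMul_one]
  have hUy : U ⬝ᵥ y₁ = 2 * K := by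
    rw [dotProduct_comm, hK]; ring
  set c : ℝ := fKK / (fK + 2 * K * fKK) with hc
  set M : Matrix (Fin m) (Fin m) ℝ := (1 / fK) • (Kmat⁻¹ - c • vecMulVec y₁ y₁) with hM
  have hAM : A * M = 1 := by
    rw [hM, hA, Matrix.mul_smul, add_mul, Matrix.smul_mul, Matrix.smul_mul,
      Matrix.mul_sub, Matrix.mul_sub, Matrix.mul_smul, Matrix.mul_smul, hKK1,
      my_mul_vecMulVec, ← hU, my_vecMulVec_mul, hvecU,
      my_vecMulVec_mul, my_vecMul_vecMulVec, hUy, my_vecMulVec_smulvec]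
    match_scalars
    · field_simp
    · have hden' : fK + fKK * 2 * K ≠ 0 := by contrapose! hden; linarith
      rw [hc]; field_simp; ring
  refine ⟨⟨⟨A, M, hAM, mul_eq_one_comm.mp hAM⟩, rfl⟩, Matrix.inv_eq_right_inv hAM, ?_, ?_⟩
  · have hAinv : A⁻¹ = M := Matrix.inv_eq_right_inv hAM
    have hvecUM : vecMul U M = ((1 / fK) * (1 - 2 * K * c)) • y₁ := by
      rw [hM, my_vecMul_smulMat, vecMul_sub, hvecU, my_vecMul_smulMat,
        my_vecMul_vecMulVec, hUy]
      ext j; simp; ring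
    rw [hAinv, hD, hC, hB, Matrix.smul_mul, my_vecMulVec_mul, hvecUM,
      my_vecMulVec_smulvec, Matrix.mul_smul, Matrix.smul_mul, Matrix.smul_mul,
      my_vecMulVec_mul, my_vecMul_vecMulVec, dotProduct_comm, hUy, my_vecMulVec_smulvec]
    have key : K * (fKK * fHH) = K * (fKH * fKH) := by
      linear_combination fHH * heuler2 - fKH * heuler3
    match_scalars
    · ring
    · rw [hc]; field_simp; linear_combination 2 * fK * key
  · linear_combination 2 * fH * heuler2 + 2 * fK * heuler3 - 2 * fKH * heuler1
end

section
/- Let 𝐊 be an invertible symmetric real m×m matrix, 𝐇 an invertible symmetric real n×n matrix, y₁ ∈ ℝ^m, y₂ ∈ ℝ^n. Set U = 𝐊y₁, W = 𝐇y₂, K = ½·y₁ᵀU, H = ½·y₂ᵀW. Let f, f_K, f_H, f_KK, f_KH, f_HH be real numbers satisfying f_K·K + f_H·H = f, f_KK·K + f_KH·H = 0, f_KH·K + f_HH·H = 0, f_KH² = f_KK·f_HH, with f_K ≠ 0, f_H ≠ 0, and Δ := f_K·f_H − 2f·f_KH ≠ 0. Then the block matrix 𝐆 with blocks 𝐆₁₁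 = f_K·𝐊 + f_KK·UUᵀ, 𝐆₁₂ = f_KH·UWᵀ, 𝐆₂₁ = f_KH·WUᵀ, 𝐆₂₂ = f_H·𝐇 + f_HH·WWᵀ is invertible, and its inverse is the block matrix with blocks (1/f_K)·(𝐊⁻¹ − (f_H·f_KK/Δ)·y₁y₁ᵀ), −(f_KH/Δ)·y₁y₂ᵀ, −(f_KH/Δ)·y₂y₁ᵀ, and (1/f_H)·(𝐇⁻¹ − (f_K·f_HH/Δ)·y₂y₂ᵀ). -/
open Matrix

private lemma mul_vmv {l m n : Type*} [Fintype m] (A : Matrix l m ℝ) (u : m → ℝ) (v : n → ℝ) :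
    A * vecMulVec u v = vecMulVec (A.mulVec u) v := by
  ext i j
  simp [Matrix.mul_apply, vecMulVec_apply, Matrix.mulVec, dotProduct, Finset.sum_mul, mul_assoc]

private lemma vmv_mul {l m n : Type*} [Fintype n] (u : m → ℝ) (v : n → ℝ) (A : Matrix n l ℝ) :
    vecMulVec u v * A = vecMulVec u (Matrix.vecMul v A) := by
  ext i j
  simp [Matrix.mul_apply, vecMulVec_apply, Matrix.vecMul, dotProduct, Finset.mul_sum, mul_assoc]

private lemma vmv_vmv {l m n : Type*} [Fintype m] (u : l → ℝ) (v x : m → ℝ) (w : n → ℝ) :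
    vecMulVec u v * vecMulVec x w = (v ⬝ᵥ x) • vecMulVec u w := by
  ext i j
  simp only [Matrix.mul_apply, vecMulVec_apply, dotProduct, Matrix.smul_apply, smul_eq_mul,
    Finset.sum_mul]
  apply Finset.sum_congr rfl
  intros; ring

private lemma vmv_mulVec {m n : Type*} [Fintype n] (u : m → ℝ) (v : n → ℝ) (x : n → ℝ) :
    vecMulVec u v *ᵥ x = (v ⬝ᵥ x) • u := by
  ext i
  simp only [Matrix.mulVec, vecMulVec_apply, dotProduct, Pi.smul_apply, smul_eq_mul,
    Finset.sum_mul]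
  apply Finset.sum_congr rfl
  intros; ring

private lemma smul_vmv {m n : Type*} (c : ℝ) (u : m → ℝ) (v : n → ℝ) :
    vecMulVec (c • u) v = c • vecMulVec u v := by
  ext i j
  simp [vecMulVec_apply, mul_assoc]

/-- The inverse of the fundamental tensor matrix of a Minkowskian product metric,
expressed as a block matrix. -/
theorem block_matrix_inverse_of_product_tensor {m n : ℕ}
    (Kmat : Matrix (Fin m) (Fin m) ℝ) (Hmat : Matrix (Fin n) (Fin n) ℝ)
    (hKmat : IsUnit Kmat) (hKsym : Kmat.IsSymm) (hHmat : IsUnit Hmat) (hHsym : Hmat.IsSymm)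
    (y₁ : Fin m → ℝ) (y₂ : Fin n → ℝ)
    (U : Fin m → ℝ) (W : Fin n → ℝ)
    (hU : U = Kmat.mulVec y₁) (hW : W = Hmat.mulVec y₂)
    (K H : ℝ) (hK : K = (1 / 2) * (y₁ ⬝ᵥ U)) (hH : H = (1 / 2) * (y₂ ⬝ᵥ W))
    (f fK fH fKK fKH fHH Δ : ℝ)
    (heuler1 : fK * K + fH * H = f)
    (heuler2 : fKK * K + fKH * H = 0)
    (heuler3 : fKH * K + fHH * H = 0)
    (heuler4 : fKH ^ 2 = fKK * fHH)
    (hfK : fK ≠ 0) (hfH : fH ≠ 0)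
    (hΔ : Δ = fK * fH - 2 * f * fKH) (hΔ0 : Δ ≠ 0)
    (G : Matrix (Fin m ⊕ Fin n) (Fin m ⊕ Fin n) ℝ)
    (hG : G = fromBlocks
      (fK • Kmat + fKK • vecMulVec U U) (fKH • vecMulVec U W)
      (fKH • vecMulVec W U) (fH • Hmat + fHH • vecMulVec W W)) :
    IsUnit G ∧
    G⁻¹ = fromBlocks
      ((1 / fK) • (Kmat⁻¹ - (fH * fKK / Δ) • vecMulVec y₁ y₁))
      (-(fKH / Δ) • vecMulVec y₁ y₂)
      (-(fKH / Δ) • vecMulVec y₂ y₁)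
      ((1 / fH) • (Hmat⁻¹ - (fK * fHH / Δ) • vecMulVec y₂ y₂)) := by
  have hKd : IsUnit Kmat.det := (Matrix.isUnit_iff_isUnit_det _).mp hKmat
  have hHd : IsUnit Hmat.det := (Matrix.isUnit_iff_isUnit_det _).mp hHmat
  have hKinv : Kmat * Kmat⁻¹ = 1 := Matrix.mul_nonsing_inv _ hKd
  have hHinv : Hmat * Hmat⁻¹ = 1 := Matrix.mul_nonsing_inv _ hHd
  have hU' : U = Matrix.vecMul y₁ Kmat := by
    rw [hU, ← Matrix.mulVec_transpose, hKsym.eq]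
  have hW' : W = Matrix.vecMul y₂ Hmat := by
    rw [hW, ← Matrix.mulVec_transpose, hHsym.eq]
  have hUy : Matrix.vecMul U Kmat⁻¹ = y₁ := by
    rw [hU', Matrix.vecMul_vecMul, hKinv, Matrix.vecMul_one]
  have hWy : Matrix.vecMul W Hmat⁻¹ = y₂ := by
    rw [hW', Matrix.vecMul_vecMul, hHinv, Matrix.vecMul_one]
  have hUy₁ : U ⬝ᵥ y₁ = 2 * K := by rw [dotProduct_comm]; rw [hK]; ring
  have hWy₂ : W ⬝ᵥ y₂ = 2 * H := by rw [dotProduct_comm]; rw [hH]; ring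
  set B := fromBlocks
      ((1 / fK) • (Kmat⁻¹ - (fH * fKK / Δ) • vecMulVec y₁ y₁))
      (-(fKH / Δ) • vecMulVec y₁ y₂)
      (-(fKH / Δ) • vecMulVec y₂ y₁)
      ((1 / fH) • (Hmat⁻¹ - (fK * fHH / Δ) • vecMulVec y₂ y₂)) with hB
  have key : G * B = 1 := by
    rw [hG, hB, Matrix.fromBlocks_multiply, ← Matrix.fromBlocks_one, Matrix.fromBlocks_inj]
    refine ⟨?_, ?_, ?_, ?_⟩
    · -- block (1,1)
      simp only [Matrix.add_mul, Matrix.mul_add, Matrix.mul_sub, Matrix.sub_mul,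
        Matrix.smul_mul, Matrix.mul_smul, smul_smul, hKinv, hHinv, mul_vmv, vmv_mul, vmv_vmv,
        vmv_mulVec, smul_vmv, ← hU, ← hW, hUy, hWy, hUy₁, hWy₂]
      match_scalars
      · field_simp
      · field_simp
        linear_combination (fKK*hΔ - 2*H*fK*heuler4 + 2*fKK*fKH*heuler1 - 2*fKK*fH*heuler2 - 2*fKK*fK*heuler3)
    · -- block (1,2)
      simp only [Matrix.add_mul, Matrix.mul_add, Matrix.mul_sub, Matrix.sub_mul,
        Matrix.smul_mul, Matrix.mul_smul, smul_smul, hKinv, hHinv, mul_vmv, vmv_mul, vmv_vmv,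
        vmv_mulVec, smul_vmv, ← hU, ← hW, hUy, hWy, hUy₁, hWy₂]
      match_scalars
      field_simp
      linear_combination (fKH*hΔ + 2*fKH^2*heuler1 - 2*fKH*fH*heuler2 - 2*fKH*fK*heuler3)
    · -- block (2,1)
      simp only [Matrix.add_mul, Matrix.mul_add, Matrix.mul_sub, Matrix.sub_mul,
        Matrix.smul_mul, Matrix.mul_smul, smul_smul, hKinv, hHinv, mul_vmv, vmv_mul, vmv_vmv,
        vmv_mulVec, smul_vmv, ← hU, ← hW, hUy, hWy, hUy₁, hWy₂]
      match_scalars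
      field_simp
      linear_combination (fKH*hΔ + 2*fKH^2*heuler1 - 2*fKH*fH*heuler2 - 2*fKH*fK*heuler3)
    · -- block (2,2)
      simp only [Matrix.add_mul, Matrix.mul_add, Matrix.mul_sub, Matrix.sub_mul,
        Matrix.smul_mul, Matrix.mul_smul, smul_smul, hKinv, hHinv, mul_vmv, vmv_mul, vmv_vmv,
        vmv_mulVec, smul_vmv, ← hU, ← hW, hUy, hWy, hUy₁, hWy₂]
      match_scalars
      all_goals field_simp
      all_goals linear_combination (fHH*hΔ - 2*K*fH*heuler4 + 2*fHH*fKH*heuler1 - 2*fHH*fH*heuler2 - 2*fHH*fK*heuler3)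
  exact ⟨(Matrix.isUnit_iff_isUnit_det _).mpr (Matrix.isUnit_det_of_right_inverse key), Matrix.inv_eq_right_inv key⟩
end

section
/- Let 𝐊 be an invertible symmetric real m×m matrix, y₁ ∈ ℝ^m, y₂ ∈ ℝ^n, 𝐇 an invertible symmetric real n×n matrix, U = 𝐊y₁, W = 𝐇y₂, K = ½·y₁ᵀU, H = ½·y₂ᵀW. Let f, f_K, f_H, f_KK, f_KH, f_HH be real numbers satisfying f_K·K + f_H·H = f, f_KK·K + f_KH·H = 0, f_KH·K + f_HH·H = 0, with f_K ≠ 0 and Δ := f_K·f_H − 2f·f_KH ≠ 0. Then (1/f_K)·(𝐊⁻¹ − (f_H·f_KK/Δ)·y₁y₁ᵀ)·U = (1/Δ)·(f_H − 2K·f_KH)·y₁, and −(f_KH/Δ)·y₁y₂ᵀ·W = −(2H·f_KH/Δ)·y₁. -/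
open Matrix

lemma vecMulVec_mulVec' {m n : ℕ} (x : Fin m → ℝ) (y : Fin n → ℝ) (w : Fin n → ℝ) :
    (vecMulVec x y).mulVec w = (y ⬝ᵥ w) • x := by
  ext i
  simp only [vecMulVec, mulVec, dotProduct, of_apply, Pi.smul_apply, smul_eq_mul,
    Finset.mul_sum]
  rw [Finset.sum_mul]
  exact Finset.sum_congr rfl fun j _ => by ring

/-- The coordinate identities `G^{ih}K_h = (1/Δ)(f_H − 2K f_KH)y^i` and
`G^{ih'}H_{h'} = −(2H f_KH/Δ)y^i` for the inverse fundamental tensor of a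
Minkowskian product Finsler metric. -/
theorem inverse_tensor_contraction_identities {m n : ℕ}
    (Kmat : Matrix (Fin m) (Fin m) ℝ) (Hmat : Matrix (Fin n) (Fin n) ℝ)
    (hKmat : IsUnit Kmat) (hKsym : Kmat.IsSymm) (hHmat : IsUnit Hmat) (hHsym : Hmat.IsSymm)
    (y₁ : Fin m → ℝ) (y₂ : Fin n → ℝ)
    (U : Fin m → ℝ) (W : Fin n → ℝ)
    (hU : U = Kmat.mulVec y₁) (hW : W = Hmat.mulVec y₂)
    (K H : ℝ) (hK : K = (1 / 2) * (y₁ ⬝ᵥ U)) (hH : H = (1 / 2) * (y₂ ⬝ᵥ W))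
    (f fK fH fKK fKH fHH Δ : ℝ)
    (heuler1 : fK * K + fH * H = f)
    (heuler2 : fKK * K + fKH * H = 0)
    (heuler3 : fKH * K + fHH * H = 0)
    (hfK : fK ≠ 0)
    (hΔ : Δ = fK * fH - 2 * f * fKH) (hΔ0 : Δ ≠ 0) :
    ((1 / fK) • (Kmat⁻¹ - (fH * fKK / Δ) • vecMulVec y₁ y₁)).mulVec U =
      ((1 / Δ) * (fH - 2 * K * fKH)) • y₁ ∧
    ((-(fKH / Δ)) • vecMulVec y₁ y₂).mulVec W = (-(2 * H * fKH / Δ)) • y₁ := by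
  have hdet : IsUnit Kmat.det := (Matrix.isUnit_iff_isUnit_det Kmat).mp hKmat
  have hinv : Kmat⁻¹.mulVec U = y₁ := by
    rw [hU, Matrix.mulVec_mulVec, Matrix.nonsing_inv_mul Kmat hdet, Matrix.one_mulVec]
  have h1U : y₁ ⬝ᵥ U = 2 * K := by rw [hK]; ring
  have h2W : y₂ ⬝ᵥ W = 2 * H := by rw [hH]; ring
  have key : Δ - 2 * K * fH * fKK = fK * (fH - 2 * K * fKH) := by
    rw [hΔ]; linear_combination 2 * fKH * heuler1 - 2 * fH * heuler2
  constructor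
  · rw [Matrix.smul_mulVec, Matrix.sub_mulVec, Matrix.smul_mulVec, hinv,
      vecMulVec_mulVec', h1U, smul_smul, smul_sub, smul_smul, ← sub_smul]
    congr 1
    field_simp
    linear_combination key
  · rw [Matrix.smul_mulVec, vecMulVec_mulVec', h2W, smul_smul]
    ring_nf
end

section
/- Let F be the Minkowskian product of Finsler metrics F₁ and F₂ with respect to a product function f. Then at every point (x,y) = ((x₁,x₂),(y₁,y₂)) with y₁ ≠ 0 and y₂ ≠ 0, the geodesic spray coefficients of F split: 𝔾^i(x,y) = 𝔾₁^i(x₁,y₁) for every index i in the first block (1 ≤ i ≤ m), and 𝔾^{i'}(x,y) = 𝔾₂^{i'}(x₂,y₂) for every index i' in the second block (m+1 ≤ i' ≤ m+n), where 𝔾₁ and 𝔾₂ are the spray coefficients of F₁ and F₂. -/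
open Matrix

/-- Partial derivative in the fiber variable `y` in the direction of the `α`-th
coordinate, for a function `g (x, y)` of a base point and a fiber vector. -/
noncomputable def pdy {ι : Type*} [Fintype ι] [DecidableEq ι]
    (g : (ι → ℝ) → (ι → ℝ) → ℝ) (α : ι) : (ι → ℝ) → (ι → ℝ) → ℝ :=
  fun x y => fderiv ℝ (g x) y (Pi.single α 1)

/-- Partial derivative in the base variable `x` in the direction of the `γ`-th
coordinate, for a function `g (x, y)` of a base point and a fiber vector. -/
noncomputable def pdx {ι : Type*} [Fintype ι] [DecidableEq ι]
    (g : (ι → ℝ) → (ι → ℝ) → ℝ) (γ : ι) : (ι → ℝ) → (ι → ℝ) → ℝ :=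
  fun x y => fderiv ℝ (fun x' => g x' y) x (Pi.single γ 1)

/-- The fundamental tensor `(G_{αβ}) = (∂²(F²)/∂y^α∂y^β)` of a Finsler metric `F`. -/
noncomputable def fundTensor {ι : Type*} [Fintype ι] [DecidableEq ι]
    (F : (ι → ℝ) → (ι → ℝ) → ℝ) (x y : ι → ℝ) : Matrix ι ι ℝ :=
  fun α β => pdy (pdy (fun x' y' => (F x' y') ^ 2) β) α x y

/-- `F` is a Finsler metric on the open set `U`: `G = F²` is smooth on the slit
domain, `F` is positive for `y ≠ 0`, absolutely 1-homogeneous in `y`, and its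
fundamental tensor is positive definite for `y ≠ 0`. -/
structure IsFinslerMetric {ι : Type*} [Fintype ι] [DecidableEq ι]
    (U : Set (ι → ℝ)) (F : (ι → ℝ) → (ι → ℝ) → ℝ) : Prop where
  isOpen : IsOpen U
  smooth : ContDiffOn ℝ (⊤ : ℕ∞) (fun p : (ι → ℝ) × (ι → ℝ) => (F p.1 p.2) ^ 2)
    (U ×ˢ {y | y ≠ 0})
  pos : ∀ x ∈ U, ∀ y : ι → ℝ, y ≠ 0 → 0 < F x y
  homog : ∀ x ∈ U, ∀ (y : ι → ℝ) (c : ℝ), F x (c • y) = |c| * F x y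
  posDef : ∀ x ∈ U, ∀ y : ι → ℝ, y ≠ 0 → (fundTensor F x y).PosDef

/-- The geodesic spray coefficients
`𝔾^α = ½ G^{αβ}(∂²G/∂y^β∂x^γ · y^γ − ∂G/∂x^β)` of a Finsler metric `F`. -/
noncomputable def spray {ι : Type*} [Fintype ι] [DecidableEq ι]
    (F : (ι → ℝ) → (ι → ℝ) → ℝ) (α : ι) : (ι → ℝ) → (ι → ℝ) → ℝ :=
  fun x y => (1 / 2) * ∑ β, (fundTensor F x y)⁻¹ α β *
    ((∑ γ, pdx (pdy (fun x' y' => (F x' y') ^ 2) β) γ x y * y γ) -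
      pdx (fun x' y' => (F x' y') ^ 2) β x y)

/-- The Cartan nonlinear connection coefficients `Γ^α_β = ∂𝔾^α/∂y^β`. -/
noncomputable def nonlinConn {ι : Type*} [Fintype ι] [DecidableEq ι]
    (F : (ι → ℝ) → (ι → ℝ) → ℝ) (α β : ι) : (ι → ℝ) → (ι → ℝ) → ℝ :=
  pdy (spray F α) β

/-- The Berwald connection coefficients `Γ̌^α_{β;γ} = ∂Γ^α_γ/∂y^β = ∂²𝔾^α/∂y^β∂y^γ`. -/
noncomputable def berwaldConn {ι : Type*} [Fintype ι] [DecidableEq ι]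
    (F : (ι → ℝ) → (ι → ℝ) → ℝ) (α β γ : ι) : (ι → ℝ) → (ι → ℝ) → ℝ :=
  pdy (nonlinConn F α γ) β

/-- The Berwald curvature `B^α_{βγη} = ∂³𝔾^α/∂y^β∂y^γ∂y^η`. -/
noncomputable def berwaldCurv {ι : Type*} [Fintype ι] [DecidableEq ι]
    (F : (ι → ℝ) → (ι → ℝ) → ℝ) (α β γ η : ι) : (ι → ℝ) → (ι → ℝ) → ℝ :=
  pdy (pdy (pdy (spray F α) η) γ) β

/-- The mean Berwald curvature `E_{βγ} = ½ B^α_{βγα}` (sum over `α`). -/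
noncomputable def meanBerwaldCurv {ι : Type*} [Fintype ι] [DecidableEq ι]
    (F : (ι → ℝ) → (ι → ℝ) → ℝ) (β γ : ι) : (ι → ℝ) → (ι → ℝ) → ℝ :=
  fun x y => (1 / 2) * ∑ α, berwaldCurv F α β γ α x y

/-- The Landsberg curvature `L_{βγη} = −¼ y^ν G_{να} B^α_{βγη}` (sums over `ν, α`). -/
noncomputable def landsbergCurv {ι : Type*} [Fintype ι] [DecidableEq ι]
    (F : (ι → ℝ) → (ι → ℝ) → ℝ) (β γ η : ι) : (ι → ℝ) → (ι → ℝ) → ℝ :=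
  fun x y => -(1 / 4) * ∑ ν, ∑ α, y ν * fundTensor F x y ν α * berwaldCurv F α β γ η x y

/-- The mean Landsberg curvature `J_α = 2 G^{βγ} L_{αβγ}` (sums over `β, γ`). -/
noncomputable def meanLandsbergCurv {ι : Type*} [Fintype ι] [DecidableEq ι]
    (F : (ι → ℝ) → (ι → ℝ) → ℝ) (α : ι) : (ι → ℝ) → (ι → ℝ) → ℝ :=
  fun x y => 2 * ∑ β, ∑ γ, (fundTensor F x y)⁻¹ β γ * landsbergCurv F α β γ x y

/-- Partial derivative of `f : ℝ → ℝ → ℝ` with respect to the first variable. -/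
noncomputable def pderivS (f : ℝ → ℝ → ℝ) (s t : ℝ) : ℝ := deriv (fun u => f u t) s

/-- Partial derivative of `f : ℝ → ℝ → ℝ` with respect to the second variable. -/
noncomputable def pderivT (f : ℝ → ℝ → ℝ) (s t : ℝ) : ℝ := deriv (fun v => f s v) t

/-- `f_st = ∂²f/∂s∂t`. -/
noncomputable def pderivST (f : ℝ → ℝ → ℝ) (s t : ℝ) : ℝ :=
  deriv (fun u => pderivT f u t) s

/-- The data of a Minkowskian product: `F₁, F₂` are Finsler metrics on `U₁, U₂`,
`f` is an admissible product function, and `F = √(f(F₁², F₂²))` is the Minkowskian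
product metric, itself assumed to be a Finsler metric on `U₁ × U₂`. -/
structure IsMinkowskianProduct {m n : ℕ}
    (U₁ : Set (Fin m → ℝ)) (U₂ : Set (Fin n → ℝ))
    (F₁ : (Fin m → ℝ) → (Fin m → ℝ) → ℝ) (F₂ : (Fin n → ℝ) → (Fin n → ℝ) → ℝ)
    (f : ℝ → ℝ → ℝ)
    (F : (Fin m ⊕ Fin n → ℝ) → (Fin m ⊕ Fin n → ℝ) → ℝ) : Prop where
  finsler₁ : IsFinslerMetric U₁ F₁
  finsler₂ : IsFinslerMetric U₂ F₂
  f_cont : ContinuousOn (fun p : ℝ × ℝ => f p.1 p.2) (Set.Ici 0 ×ˢ Set.Ici 0)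
  f_nonneg : ∀ s ∈ Set.Ici (0 : ℝ), ∀ t ∈ Set.Ici (0 : ℝ), 0 ≤ f s t
  f_zero_iff : ∀ s ∈ Set.Ici (0 : ℝ), ∀ t ∈ Set.Ici (0 : ℝ),
    (f s t = 0 ↔ s = 0 ∧ t = 0)
  f_homog : ∀ c ∈ Set.Ici (0 : ℝ), ∀ s ∈ Set.Ici (0 : ℝ), ∀ t ∈ Set.Ici (0 : ℝ),
    f (c * s) (c * t) = c * f s t
  f_smooth : ContDiffOn ℝ (⊤ : ℕ∞) (fun p : ℝ × ℝ => f p.1 p.2)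
    (Set.Ioi 0 ×ˢ Set.Ioi 0)
  fs_ne : ∀ s > (0 : ℝ), ∀ t > (0 : ℝ), pderivS f s t ≠ 0
  ft_ne : ∀ s > (0 : ℝ), ∀ t > (0 : ℝ), pderivT f s t ≠ 0
  delta_ne : ∀ s > (0 : ℝ), ∀ t > (0 : ℝ),
    pderivS f s t * pderivT f s t - 2 * f s t * pderivST f s t ≠ 0
  F_def : ∀ (x y : Fin m ⊕ Fin n → ℝ),
    F x y = Real.sqrt (f ((F₁ (x ∘ Sum.inl) (y ∘ Sum.inl)) ^ 2)
      ((F₂ (x ∘ Sum.inr) (y ∘ Sum.inr)) ^ 2))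
  finsler : IsFinslerMetric
    {x : Fin m ⊕ Fin n → ℝ | (x ∘ Sum.inl) ∈ U₁ ∧ (x ∘ Sum.inr) ∈ U₂} F

/-! ### Auxiliary lemmas -/

section Bridge
variable {ι : Type*} [Fintype ι] [DecidableEq ι]

lemma pdy_of_hasFDerivAt' {g : (ι → ℝ) → (ι → ℝ) → ℝ} {x y : ι → ℝ}
    {L : ((ι → ℝ) × (ι → ℝ)) →L[ℝ] ℝ}
    (h : HasFDerivAt (fun p : (ι → ℝ) × (ι → ℝ) => g p.1 p.2) L (x, y)) (β : ι) :
    pdy g β x y = L (0, Pi.single β 1) := by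
  have h2 : HasFDerivAt (g x)
      (L.comp (ContinuousLinearMap.inr ℝ (ι → ℝ) (ι → ℝ))) y :=
    h.comp y (hasFDerivAt_prodMk_right x y)
  simp only [pdy, h2.fderiv, ContinuousLinearMap.comp_apply,
    ContinuousLinearMap.inr_apply]

lemma pdx_of_hasFDerivAt' {g : (ι → ℝ) → (ι → ℝ) → ℝ} {x y : ι → ℝ}
    {L : ((ι → ℝ) × (ι → ℝ)) →L[ℝ] ℝ}
    (h : HasFDerivAt (fun p : (ι → ℝ) × (ι → ℝ) => g p.1 p.2) L (x, y)) (γ : ι) :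
    pdx g γ x y = L (Pi.single γ 1, 0) := by
  have h2 : HasFDerivAt (fun x' => g x' y)
      (L.comp (ContinuousLinearMap.inl ℝ (ι → ℝ) (ι → ℝ))) x :=
    by have := h.comp x (hasFDerivAt_prodMk_left (𝕜 := ℝ) x y); exact this
  simp only [pdx, h2.fderiv, ContinuousLinearMap.comp_apply,
    ContinuousLinearMap.inl_apply]

lemma pdy_of_eventually' {g : (ι → ℝ) → (ι → ℝ) → ℝ} {x y : ι → ℝ}
    {h : ((ι → ℝ) × (ι → ℝ)) → ℝ} {L : ((ι → ℝ) × (ι → ℝ)) →L[ℝ] ℝ}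
    (heq : (fun p : (ι → ℝ) × (ι → ℝ) => g p.1 p.2) =ᶠ[nhds (x, y)] h)
    (hL : HasFDerivAt h L (x, y)) (β : ι) :
    pdy g β x y = L (0, Pi.single β 1) :=
  pdy_of_hasFDerivAt' (hL.congr_of_eventuallyEq heq) β

lemma pdx_of_eventually' {g : (ι → ℝ) → (ι → ℝ) → ℝ} {x y : ι → ℝ}
    {h : ((ι → ℝ) × (ι → ℝ)) → ℝ} {L : ((ι → ℝ) × (ι → ℝ)) →L[ℝ] ℝ}
    (heq : (fun p : (ι → ℝ) × (ι → ℝ) => g p.1 p.2) =ᶠ[nhds (x, y)] h)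
    (hL : HasFDerivAt h L (x, y)) (γ : ι) :
    pdx g γ x y = L (Pi.single γ 1, 0) :=
  pdx_of_hasFDerivAt' (hL.congr_of_eventuallyEq heq) γ

lemma pdy_pdy_eq' {g : (ι → ℝ) → (ι → ℝ) → ℝ} {x y : ι → ℝ}
    {S : ((ι → ℝ) × (ι → ℝ)) →L[ℝ] ((ι → ℝ) × (ι → ℝ)) →L[ℝ] ℝ}
    (hev : ∀ᶠ p in nhds (x, y),
      HasFDerivAt (fun p : (ι → ℝ) × (ι → ℝ) => g p.1 p.2)
        (fderiv ℝ (fun p : (ι → ℝ) × (ι → ℝ) => g p.1 p.2) p) p)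
    (hS : HasFDerivAt (fderiv ℝ (fun p : (ι → ℝ) × (ι → ℝ) => g p.1 p.2)) S (x, y))
    (α β : ι) :
    pdy (pdy g β) α x y = S (0, Pi.single α 1) (0, Pi.single β 1) := by
  have heq : (fun p : (ι → ℝ) × (ι → ℝ) => pdy g β p.1 p.2) =ᶠ[nhds (x, y)]
      (fun p => fderiv ℝ (fun p : (ι → ℝ) × (ι → ℝ) => g p.1 p.2) p (0, Pi.single β 1)) := by
    filter_upwards [hev] with p hp
    exact pdy_of_hasFDerivAt' (by simpa using hp) β
  have hL : HasFDerivAt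
      (fun p => fderiv ℝ (fun p : (ι → ℝ) × (ι → ℝ) => g p.1 p.2) p (0, Pi.single β 1))
      ((fderiv ℝ (fun p : (ι → ℝ) × (ι → ℝ) => g p.1 p.2) (x, y)).comp 0
        + S.flip ((0 : ι → ℝ), Pi.single β 1)) (x, y) :=
    hS.clm_apply (hasFDerivAt_const ((0 : ι → ℝ), Pi.single β 1) (x, y))
  have := pdy_of_hasFDerivAt' (g := fun a b => pdy g β a b)
    (hL.congr_of_eventuallyEq heq) α
  simpa using this

lemma pdx_pdy_eq' {g : (ι → ℝ) → (ι → ℝ) → ℝ} {x y : ι → ℝ}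
    {S : ((ι → ℝ) × (ι → ℝ)) →L[ℝ] ((ι → ℝ) × (ι → ℝ)) →L[ℝ] ℝ}
    (hev : ∀ᶠ p in nhds (x, y),
      HasFDerivAt (fun p : (ι → ℝ) × (ι → ℝ) => g p.1 p.2)
        (fderiv ℝ (fun p : (ι → ℝ) × (ι → ℝ) => g p.1 p.2) p) p)
    (hS : HasFDerivAt (fderiv ℝ (fun p : (ι → ℝ) × (ι → ℝ) => g p.1 p.2)) S (x, y))
    (γ β : ι) :
    pdx (pdy g β) γ x y = S (Pi.single γ 1, 0) (0, Pi.single β 1) := by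
  have heq : (fun p : (ι → ℝ) × (ι → ℝ) => pdy g β p.1 p.2) =ᶠ[nhds (x, y)]
      (fun p => fderiv ℝ (fun p : (ι → ℝ) × (ι → ℝ) => g p.1 p.2) p (0, Pi.single β 1)) := by
    filter_upwards [hev] with p hp
    exact pdy_of_hasFDerivAt' (by simpa using hp) β
  have hL : HasFDerivAt
      (fun p => fderiv ℝ (fun p : (ι → ℝ) × (ι → ℝ) => g p.1 p.2) p (0, Pi.single β 1))
      ((fderiv ℝ (fun p : (ι → ℝ) × (ι → ℝ) => g p.1 p.2) (x, y)).comp 0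
        + S.flip ((0 : ι → ℝ), Pi.single β 1)) (x, y) :=
    hS.clm_apply (hasFDerivAt_const ((0 : ι → ℝ), Pi.single β 1) (x, y))
  have := pdx_of_hasFDerivAt' (g := fun a b => pdy g β a b)
    (hL.congr_of_eventuallyEq heq) γ
  simpa using this

end Bridge

section Pack
variable {E : Type*} [NormedAddCommGroup E] [NormedSpace ℝ E]

lemma ev_hasFDerivAt_of_contDiffOn' {Ω : Set E} {gu : E → ℝ} {p₀ : E}
    (hΩ : IsOpen Ω) (hmem : p₀ ∈ Ω) (hsm : ContDiffOn ℝ (⊤ : ℕ∞) gu Ω) :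
    ∀ᶠ p in nhds p₀, HasFDerivAt gu (fderiv ℝ gu p) p := by
  filter_upwards [hΩ.mem_nhds hmem] with p hp
  exact ((hsm.contDiffAt (hΩ.mem_nhds hp)).differentiableAt
    (by simp)).hasFDerivAt

lemma hasFDerivAt_fderiv_of_contDiffOn' {Ω : Set E} {gu : E → ℝ} {p₀ : E}
    (hΩ : IsOpen Ω) (hmem : p₀ ∈ Ω) (hsm : ContDiffOn ℝ (⊤ : ℕ∞) gu Ω) :
    HasFDerivAt (fderiv ℝ gu) (fderiv ℝ (fderiv ℝ gu) p₀) p₀ := by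
  have h1 : ContDiffAt ℝ 1 (fderiv ℝ gu) p₀ := by
    refine ContDiffAt.fderiv_right (hsm.contDiffAt (hΩ.mem_nhds hmem)) ?_
    exact WithTop.coe_le_coe.mpr le_top
  exact (h1.differentiableAt one_ne_zero).hasFDerivAt

end Pack

section Euler
variable {A B : Type*} [NormedAddCommGroup A] [NormedSpace ℝ A]
  [NormedAddCommGroup B] [NormedSpace ℝ B]

lemma fderiv_homog' {Ku : A × B → ℝ} {U : Set A} (hU : IsOpen U)
    (hsm : ContDiffOn ℝ (⊤ : ℕ∞) Ku (U ×ˢ {b : B | b ≠ 0}))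
    (hhom : ∀ a ∈ U, ∀ (b : B) (c : ℝ), 0 < c → Ku (a, c • b) = c ^ 2 * Ku (a, b))
    {c : ℝ} (hc : 0 < c) {q : A × B} (hq : q ∈ U ×ˢ {b : B | b ≠ 0}) (w : A × B) :
    fderiv ℝ Ku (q.1, c • q.2) (w.1, c • w.2) = c ^ 2 * fderiv ℝ Ku q w := by
  have hΩ : IsOpen (U ×ˢ {b : B | b ≠ 0}) := hU.prod (isOpen_compl_singleton)
  set Mc : A × B →L[ℝ] A × B :=
    (ContinuousLinearMap.id ℝ A).prodMap (c • ContinuousLinearMap.id ℝ B) with hMcdef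
  have hMc : ∀ p : A × B, Mc p = (p.1, c • p.2) := fun p => rfl
  have hMcq : Mc q ∈ U ×ˢ {b : B | b ≠ 0} := by
    rw [hMc]
    exact ⟨hq.1, smul_ne_zero hc.ne' hq.2⟩
  have hKMcq : HasFDerivAt Ku (fderiv ℝ Ku (Mc q)) (Mc q) :=
    ((hsm.contDiffAt (hΩ.mem_nhds hMcq)).differentiableAt
      (by simp)).hasFDerivAt
  have hcomp : HasFDerivAt (Ku ∘ Mc) ((fderiv ℝ Ku (Mc q)).comp Mc) q :=
    hKMcq.comp q Mc.hasFDerivAt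
  have hKq : HasFDerivAt Ku (fderiv ℝ Ku q) q :=
    ((hsm.contDiffAt (hΩ.mem_nhds hq)).differentiableAt
      (by simp)).hasFDerivAt
  have hsc : HasFDerivAt (fun q' => c ^ 2 * Ku q') ((c ^ 2) • fderiv ℝ Ku q) q :=
    hKq.const_mul (c ^ 2)
  have heq : (Ku ∘ Mc) =ᶠ[nhds q] (fun q' => c ^ 2 * Ku q') := by
    filter_upwards [(hU.prod isOpen_univ).mem_nhds (⟨hq.1, trivial⟩ :
      q ∈ U ×ˢ (Set.univ : Set B))] with p hp
    simpa [hMc] using hhom p.1 hp.1 p.2 c hc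
  have huniq : (fderiv ℝ Ku (Mc q)).comp Mc = (c ^ 2) • fderiv ℝ Ku q :=
    (hcomp.congr_of_eventuallyEq heq.symm).unique hsc
  have := congrArg (fun L : A × B →L[ℝ] ℝ => L w) huniq
  simpa [hMc] using this

lemma euler_second' {Ku : A × B → ℝ} {U : Set A} (hU : IsOpen U)
    (hsm : ContDiffOn ℝ (⊤ : ℕ∞) Ku (U ×ˢ {b : B | b ≠ 0}))
    (hhom : ∀ a ∈ U, ∀ (b : B) (c : ℝ), 0 < c → Ku (a, c • b) = c ^ 2 * Ku (a, b))
    {x₁ : A} (hx : x₁ ∈ U) {y₁ : B} (hy : y₁ ≠ 0) (w : A × B) :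
    fderiv ℝ (fderiv ℝ Ku) (x₁, y₁) (0, y₁) w
      = 2 * fderiv ℝ Ku (x₁, y₁) (w.1, 0) + fderiv ℝ Ku (x₁, y₁) (0, w.2) := by
  have hΩ : IsOpen (U ×ˢ {b : B | b ≠ 0}) := hU.prod (isOpen_compl_singleton)
  have hq₀ : (x₁, y₁) ∈ U ×ˢ {b : B | b ≠ 0} := ⟨hx, hy⟩
  set X := fderiv ℝ Ku (x₁, y₁) (w.1, 0) with hX
  set Y := fderiv ℝ Ku (x₁, y₁) (0, w.2) with hY
  have step2 : ∀ c : ℝ, 0 < c →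
      fderiv ℝ Ku (x₁, c • y₁) w = c ^ 2 * X + c * Y := by
    intro c hc
    have h1 := fderiv_homog' hU hsm hhom hc hq₀ (w.1, c⁻¹ • w.2)
    simp only [smul_smul, mul_inv_cancel₀ hc.ne', one_smul] at h1
    have hdec : ((w.1, c⁻¹ • w.2) : A × B) = (w.1, 0) + c⁻¹ • (0, w.2) := by
      simp [Prod.ext_iff]
    rw [hdec, map_add, ContinuousLinearMap.map_smul] at h1
    have hw : w = (w.1, w.2) := rfl
    rw [hw, h1]
    simp only [smul_eq_mul, ← hX, ← hY]
    field_simp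
  have hS : HasFDerivAt (fderiv ℝ Ku) (fderiv ℝ (fderiv ℝ Ku) (x₁, y₁)) (x₁, y₁) := by
    have h1 : ContDiffAt ℝ 1 (fderiv ℝ Ku) (x₁, y₁) :=
      ContDiffAt.fderiv_right (hsm.contDiffAt (hΩ.mem_nhds hq₀))
        (WithTop.coe_le_coe.mpr le_top)
    exact (h1.differentiableAt one_ne_zero).hasFDerivAt
  have hγ : HasDerivAt (fun c : ℝ => ((x₁, c • y₁) : A × B)) ((0 : A), y₁) 1 := by
    have := (hasDerivAt_const (1:ℝ) x₁).prodMk ((hasDerivAt_id (1:ℝ)).smul_const y₁)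
    simpa using this
  have hScomp : HasDerivAt (fun c : ℝ => fderiv ℝ Ku (x₁, c • y₁))
      (fderiv ℝ (fderiv ℝ Ku) (x₁, y₁) (0, y₁)) 1 := by
    have hS' : HasFDerivAt (fderiv ℝ Ku) (fderiv ℝ (fderiv ℝ Ku) (x₁, y₁))
        (x₁, (1:ℝ) • y₁) := by rw [one_smul]; exact hS
    exact hS'.comp_hasDerivAt 1 hγ
  have hlhs : HasDerivAt (fun c : ℝ => fderiv ℝ Ku (x₁, c • y₁) w)
      (fderiv ℝ (fderiv ℝ Ku) (x₁, y₁) (0, y₁) w) 1 := by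
    have := hScomp.clm_apply (hasDerivAt_const (1:ℝ) w)
    simpa using this
  have hrhs : HasDerivAt (fun c : ℝ => c ^ 2 * X + c * Y) (2 * X + Y) 1 := by
    have h1 : HasDerivAt (fun c : ℝ => c ^ 2) 2 1 := by
      simpa using hasDerivAt_pow 2 (1:ℝ)
    have := (h1.mul_const X).add ((hasDerivAt_id (1:ℝ)).mul_const Y)
    simpa only [id_eq, one_mul, Pi.add_def] using this
  have heq : (fun c : ℝ => fderiv ℝ Ku (x₁, c • y₁) w) =ᶠ[nhds 1]
      (fun c : ℝ => c ^ 2 * X + c * Y) := by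
    filter_upwards [Ioi_mem_nhds (by norm_num : (0:ℝ) < 1)] with c hc
    exact step2 c hc
  exact (hlhs.congr_of_eventuallyEq heq.symm).unique hrhs

end Euler

section Sums

lemma sum_smul_single' {κ : Type*} [Fintype κ] [DecidableEq κ] (c : κ → ℝ) :
    ∑ l, c l • (Pi.single l (1:ℝ) : κ → ℝ) = c := by
  funext t
  simp [Finset.sum_apply, Pi.single_apply]

lemma clm_sum_left' {κ : Type*} [Fintype κ] [DecidableEq κ]
    {F : Type*} [NormedAddCommGroup F] [NormedSpace ℝ F]
    (T : ((κ → ℝ) × (κ → ℝ)) →L[ℝ] F) (c : κ → ℝ) :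
    T ((c, 0)) = ∑ l, c l • T (Pi.single l 1, 0) := by
  have h : ((c, (0 : κ → ℝ)) : (κ → ℝ) × (κ → ℝ))
      = ∑ l, c l • (((Pi.single l 1 : κ → ℝ), (0 : κ → ℝ)) : (κ → ℝ) × (κ → ℝ)) := by
    rw [Prod.ext_iff]
    refine ⟨?_, ?_⟩
    · rw [Prod.fst_sum]
      simp only [Prod.smul_mk, Prod.fst]
      rw [sum_smul_single' c]
    · rw [Prod.snd_sum]; simp
  rw [h, map_sum]
  refine Finset.sum_congr rfl fun l _ => ?_
  rw [_root_.map_smul]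

lemma clm_sum_right' {κ : Type*} [Fintype κ] [DecidableEq κ]
    {F : Type*} [NormedAddCommGroup F] [NormedSpace ℝ F]
    (T : ((κ → ℝ) × (κ → ℝ)) →L[ℝ] F) (c : κ → ℝ) :
    T ((0, c)) = ∑ l, c l • T (0, Pi.single l 1) := by
  have h : (((0 : κ → ℝ), c) : (κ → ℝ) × (κ → ℝ))
      = ∑ l, c l • ((((0 : κ → ℝ)), (Pi.single l 1 : κ → ℝ)) : (κ → ℝ) × (κ → ℝ)) := by
    rw [Prod.ext_iff]
    refine ⟨?_, ?_⟩
    · rw [Prod.fst_sum]; simp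
    · rw [Prod.snd_sum]
      simp only [Prod.smul_mk, Prod.snd]
      rw [sum_smul_single' c]
  rw [h, map_sum]
  refine Finset.sum_congr rfl fun l _ => ?_
  rw [_root_.map_smul]

end Sums

set_option maxHeartbeats 2000000 in
/-- The geodesic spray coefficients of a Minkowskian product Finsler metric split:
`𝔾^i = 𝔾₁^i` on the first block and `𝔾^{i'} = 𝔾₂^{i'}` on the second block. -/
theorem spray_of_minkowskian_product {m n : ℕ}
    (U₁ : Set (Fin m → ℝ)) (U₂ : Set (Fin n → ℝ))
    (F₁ : (Fin m → ℝ) → (Fin m → ℝ) → ℝ) (F₂ : (Fin n → ℝ) → (Fin n → ℝ) → ℝ)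
    (f : ℝ → ℝ → ℝ) (F : (Fin m ⊕ Fin n → ℝ) → (Fin m ⊕ Fin n → ℝ) → ℝ)
    (hprod : IsMinkowskianProduct U₁ U₂ F₁ F₂ f F) :
    ∀ x : Fin m ⊕ Fin n → ℝ, (x ∘ Sum.inl) ∈ U₁ → (x ∘ Sum.inr) ∈ U₂ →
    ∀ y : Fin m ⊕ Fin n → ℝ, (y ∘ Sum.inl) ≠ 0 → (y ∘ Sum.inr) ≠ 0 →
      (∀ i : Fin m,
        spray F (Sum.inl i) x y = spray F₁ i (x ∘ Sum.inl) (y ∘ Sum.inl)) ∧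
      (∀ i' : Fin n,
        spray F (Sum.inr i') x y = spray F₂ i' (x ∘ Sum.inr) (y ∘ Sum.inr)) := by
  intro x hx1 hx2 y hy1 hy2
  classical
  set x₁ : Fin m → ℝ := x ∘ Sum.inl with hx₁d
  set y₁ : Fin m → ℝ := y ∘ Sum.inl with hy₁d
  set x₂ : Fin n → ℝ := x ∘ Sum.inr with hx₂d
  set y₂ : Fin n → ℝ := y ∘ Sum.inr with hy₂d
  -- uncurried squared metrics
  set Ku : ((Fin m → ℝ) × (Fin m → ℝ)) → ℝ := fun q => (F₁ q.1 q.2) ^ 2 with hKud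
  set Hu : ((Fin n → ℝ) × (Fin n → ℝ)) → ℝ := fun q => (F₂ q.1 q.2) ^ 2 with hHud
  set fu : ℝ × ℝ → ℝ := fun z => f z.1 z.2 with hfud
  set Gu : ((Fin m ⊕ Fin n → ℝ) × (Fin m ⊕ Fin n → ℝ)) → ℝ :=
    fun p => (F p.1 p.2) ^ 2 with hGud
  -- K package
  have hΩ₁ : IsOpen (U₁ ×ˢ {b : Fin m → ℝ | b ≠ 0}) :=
    hprod.finsler₁.isOpen.prod isOpen_compl_singleton
  have hq₀ : (x₁, y₁) ∈ U₁ ×ˢ {b : Fin m → ℝ | b ≠ 0} := ⟨hx1, hy1⟩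
  have hKsm : ContDiffOn ℝ (⊤ : ℕ∞) Ku (U₁ ×ˢ {b : Fin m → ℝ | b ≠ 0}) :=
    hprod.finsler₁.smooth
  have hKev : ∀ᶠ q in nhds (x₁, y₁), HasFDerivAt Ku (fderiv ℝ Ku q) q :=
    ev_hasFDerivAt_of_contDiffOn' hΩ₁ hq₀ hKsm
  have hKS : HasFDerivAt (fderiv ℝ Ku) (fderiv ℝ (fderiv ℝ Ku) (x₁, y₁)) (x₁, y₁) :=
    hasFDerivAt_fderiv_of_contDiffOn' hΩ₁ hq₀ hKsm
  set DK := fderiv ℝ Ku (x₁, y₁) with hDKd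
  set SK := fderiv ℝ (fderiv ℝ Ku) (x₁, y₁) with hSKd
  have hKsymm : ∀ u v, SK u v = SK v u := fun u v =>
    second_derivative_symmetric_of_eventually hKev hKS u v
  have hKhom : ∀ a ∈ U₁, ∀ (b : Fin m → ℝ) (c : ℝ), 0 < c →
      Ku (a, c • b) = c ^ 2 * Ku (a, b) := by
    intro a ha b c hc
    simp only [hKud]
    rw [hprod.finsler₁.homog a ha b c, mul_pow, sq_abs]
  have hKE : ∀ w, SK (0, y₁) w = 2 * DK (w.1, 0) + DK (0, w.2) := fun w =>
    euler_second' hprod.finsler₁.isOpen hKsm hKhom hx1 hy1 w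
  -- H package
  have hΩ₂ : IsOpen (U₂ ×ˢ {b : Fin n → ℝ | b ≠ 0}) :=
    hprod.finsler₂.isOpen.prod isOpen_compl_singleton
  have hr₀ : (x₂, y₂) ∈ U₂ ×ˢ {b : Fin n → ℝ | b ≠ 0} := ⟨hx2, hy2⟩
  have hHsm : ContDiffOn ℝ (⊤ : ℕ∞) Hu (U₂ ×ˢ {b : Fin n → ℝ | b ≠ 0}) :=
    hprod.finsler₂.smooth
  have hHev : ∀ᶠ q in nhds (x₂, y₂), HasFDerivAt Hu (fderiv ℝ Hu q) q :=
    ev_hasFDerivAt_of_contDiffOn' hΩ₂ hr₀ hHsm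
  have hHS : HasFDerivAt (fderiv ℝ Hu) (fderiv ℝ (fderiv ℝ Hu) (x₂, y₂)) (x₂, y₂) :=
    hasFDerivAt_fderiv_of_contDiffOn' hΩ₂ hr₀ hHsm
  set DH := fderiv ℝ Hu (x₂, y₂) with hDHd
  set SH := fderiv ℝ (fderiv ℝ Hu) (x₂, y₂) with hSHd
  have hHsymm : ∀ u v, SH u v = SH v u := fun u v =>
    second_derivative_symmetric_of_eventually hHev hHS u v
  have hHhom : ∀ a ∈ U₂, ∀ (b : Fin n → ℝ) (c : ℝ), 0 < c →
      Hu (a, c • b) = c ^ 2 * Hu (a, b) := by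
    intro a ha b c hc
    simp only [hHud]
    rw [hprod.finsler₂.homog a ha b c, mul_pow, sq_abs]
  have hHE : ∀ w, SH (0, y₂) w = 2 * DH (w.1, 0) + DH (0, w.2) := fun w =>
    euler_second' hprod.finsler₂.isOpen hHsm hHhom hx2 hy2 w
  -- f package
  have hs₀ : (0:ℝ) < Ku (x₁, y₁) := pow_pos (hprod.finsler₁.pos x₁ hx1 y₁ hy1) 2
  have ht₀ : (0:ℝ) < Hu (x₂, y₂) := pow_pos (hprod.finsler₂.pos x₂ hx2 y₂ hy2) 2
  have hΩf : IsOpen ((Set.Ioi (0:ℝ)) ×ˢ (Set.Ioi (0:ℝ))) := isOpen_Ioi.prod isOpen_Ioi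
  have hz₀ : ((Ku (x₁, y₁), Hu (x₂, y₂)) : ℝ × ℝ) ∈ Set.Ioi (0:ℝ) ×ˢ Set.Ioi (0:ℝ) :=
    ⟨hs₀, ht₀⟩
  have hfsm : ContDiffOn ℝ (⊤ : ℕ∞) fu (Set.Ioi 0 ×ˢ Set.Ioi 0) := hprod.f_smooth
  have hfev : ∀ᶠ z in nhds ((Ku (x₁, y₁), Hu (x₂, y₂)) : ℝ × ℝ),
      HasFDerivAt fu (fderiv ℝ fu z) z := ev_hasFDerivAt_of_contDiffOn' hΩf hz₀ hfsm
  have hfS : HasFDerivAt (fderiv ℝ fu)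
      (fderiv ℝ (fderiv ℝ fu) ((Ku (x₁, y₁), Hu (x₂, y₂)) : ℝ × ℝ))
      ((Ku (x₁, y₁), Hu (x₂, y₂)) : ℝ × ℝ) :=
    hasFDerivAt_fderiv_of_contDiffOn' hΩf hz₀ hfsm
  set Df := fderiv ℝ fu ((Ku (x₁, y₁), Hu (x₂, y₂)) : ℝ × ℝ) with hDfd
  set Sf := fderiv ℝ (fderiv ℝ fu) ((Ku (x₁, y₁), Hu (x₂, y₂)) : ℝ × ℝ) with hSfd
  have hfsymm : ∀ u v, Sf u v = Sf v u := fun u v =>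
    second_derivative_symmetric_of_eventually hfev hfS u v
  -- restriction continuous linear maps
  set R1 : ((Fin m ⊕ Fin n) → ℝ) →L[ℝ] (Fin m → ℝ) :=
    LinearMap.toContinuousLinearMap (LinearMap.funLeft ℝ ℝ Sum.inl) with hR1d
  set R2 : ((Fin m ⊕ Fin n) → ℝ) →L[ℝ] (Fin n → ℝ) :=
    LinearMap.toContinuousLinearMap (LinearMap.funLeft ℝ ℝ Sum.inr) with hR2d
  set Lm := R1.prodMap R1 with hLmd
  set Ln := R2.prodMap R2 with hLnd
  have hLm : ∀ p : ((Fin m ⊕ Fin n) → ℝ) × ((Fin m ⊕ Fin n) → ℝ),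
      Lm p = (p.1 ∘ Sum.inl, p.2 ∘ Sum.inl) := fun p => rfl
  have hLn : ∀ p : ((Fin m ⊕ Fin n) → ℝ) × ((Fin m ⊕ Fin n) → ℝ),
      Ln p = (p.1 ∘ Sum.inr, p.2 ∘ Sum.inr) := fun p => rfl
  -- the map Φ and the global identity G = f ∘ Φ
  set Φ : ((Fin m ⊕ Fin n → ℝ) × (Fin m ⊕ Fin n → ℝ)) → ℝ × ℝ :=
    fun p => (Ku (Lm p), Hu (Ln p)) with hΦd
  have hGuΦ : ∀ p, Gu p = fu (Φ p) := by
    intro p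
    simp only [hGud, hfud, hΦd]
    rw [hprod.F_def p.1 p.2, Real.sq_sqrt
      (hprod.f_nonneg _ (Set.mem_Ici.mpr (sq_nonneg _)) _ (Set.mem_Ici.mpr (sq_nonneg _)))]
    rfl
  -- eventual differentiability of the composite
  have hKevp : ∀ᶠ p in nhds (x, y), HasFDerivAt Ku (fderiv ℝ Ku (Lm p)) (Lm p) :=
    (Lm.continuous.tendsto (x, y)).eventually hKev
  have hHevp : ∀ᶠ p in nhds (x, y), HasFDerivAt Hu (fderiv ℝ Hu (Ln p)) (Ln p) :=
    (Ln.continuous.tendsto (x, y)).eventually hHev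
  have hΦev : ∀ᶠ p in nhds (x, y), HasFDerivAt Φ
      (((fderiv ℝ Ku (Lm p)).comp Lm).prod ((fderiv ℝ Hu (Ln p)).comp Ln)) p := by
    filter_upwards [hKevp, hHevp] with p hK hH
    exact (hK.comp p Lm.hasFDerivAt).prodMk (hH.comp p Ln.hasFDerivAt)
  set DΦ₀ := ((DK.comp Lm).prod (DH.comp Ln)) with hDΦ₀d
  have hΦ₀ : HasFDerivAt Φ DΦ₀ (x, y) := hΦev.self_of_nhds
  have hfevp : ∀ᶠ p in nhds (x, y), HasFDerivAt fu (fderiv ℝ fu (Φ p)) (Φ p) :=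
    (hΦ₀.continuousAt.tendsto).eventually hfev
  have hGev : ∀ᶠ p in nhds (x, y), HasFDerivAt Gu
      ((fderiv ℝ fu (Φ p)).comp
        (((fderiv ℝ Ku (Lm p)).comp Lm).prod ((fderiv ℝ Hu (Ln p)).comp Ln))) p := by
    filter_upwards [hfevp, hΦev] with p hf hΦp
    have h1 := hf.comp p hΦp
    have heq : (fu ∘ Φ) = Gu := funext fun p' => (hGuΦ p').symm
    rw [← heq]
    exact h1
  -- first level: pdy of G as a function on a neighbourhood
  have hfirst : ∀ β : Fin m ⊕ Fin n,
      (fun p : (Fin m ⊕ Fin n → ℝ) × (Fin m ⊕ Fin n → ℝ) =>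
        pdy (fun a b => (F a b) ^ 2) β p.1 p.2) =ᶠ[nhds (x, y)]
      (fun p => (fderiv ℝ fu (Φ p))
        ((fderiv ℝ Ku (Lm p)) (Lm (0, Pi.single β 1)),
         (fderiv ℝ Hu (Ln p)) (Ln (0, Pi.single β 1)))) := by
    intro β
    filter_upwards [hGev] with p hp
    have h1 := pdy_of_hasFDerivAt' (g := fun a b => (F a b) ^ 2) hp β
    rw [h1]
    simp [ContinuousLinearMap.comp_apply, ContinuousLinearMap.prod_apply]
  -- second level: derivative of the above at (x,y)
  have hcΦ : HasFDerivAt (fun p => fderiv ℝ fu (Φ p)) (Sf.comp DΦ₀) (x, y) :=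
    hfS.comp (x, y) hΦ₀
  have hwK : ∀ v : (Fin m ⊕ Fin n → ℝ) × (Fin m ⊕ Fin n → ℝ),
      HasFDerivAt (fun p => (fderiv ℝ Ku (Lm p)) (Lm v))
        ((SK.comp Lm).flip (Lm v)) (x, y) := by
    intro v
    have h1 : HasFDerivAt (fun p => fderiv ℝ Ku (Lm p)) (SK.comp Lm) (x, y) :=
      hKS.comp (x, y) Lm.hasFDerivAt
    have h2 := h1.clm_apply (hasFDerivAt_const (Lm v) (x, y))
    simpa using h2
  have hwH : ∀ v : (Fin m ⊕ Fin n → ℝ) × (Fin m ⊕ Fin n → ℝ),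
      HasFDerivAt (fun p => (fderiv ℝ Hu (Ln p)) (Ln v))
        ((SH.comp Ln).flip (Ln v)) (x, y) := by
    intro v
    have h1 : HasFDerivAt (fun p => fderiv ℝ Hu (Ln p)) (SH.comp Ln) (x, y) :=
      hHS.comp (x, y) Ln.hasFDerivAt
    have h2 := h1.clm_apply (hasFDerivAt_const (Ln v) (x, y))
    simpa using h2
  have hRHS : ∀ v : (Fin m ⊕ Fin n → ℝ) × (Fin m ⊕ Fin n → ℝ),
      HasFDerivAt (fun p => (fderiv ℝ fu (Φ p))
          ((fderiv ℝ Ku (Lm p)) (Lm v), (fderiv ℝ Hu (Ln p)) (Ln v)))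
        (Df.comp (((SK.comp Lm).flip (Lm v)).prod ((SH.comp Ln).flip (Ln v)))
          + (Sf.comp DΦ₀).flip ((DK (Lm v), DH (Ln v)))) (x, y) := by
    intro v
    have h1 := hcΦ.clm_apply ((hwK v).prodMk (hwH v))
    exact h1
  -- the master formulas for the second derivatives of G
  have hSx : ∀ (β γ : Fin m ⊕ Fin n),
      pdx (pdy (fun a b => (F a b) ^ 2) β) γ x y
        = Df (SK (Lm (Pi.single γ 1, 0)) (Lm (0, Pi.single β 1)),
              SH (Ln (Pi.single γ 1, 0)) (Ln (0, Pi.single β 1)))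
          + Sf (DK (Lm (Pi.single γ 1, 0)), DH (Ln (Pi.single γ 1, 0)))
               (DK (Lm (0, Pi.single β 1)), DH (Ln (0, Pi.single β 1))) := by
    intro β γ
    have h := pdx_of_eventually' (hfirst β) (hRHS (0, Pi.single β 1)) γ
    rw [h]
    simp [ContinuousLinearMap.add_apply, ContinuousLinearMap.comp_apply,
      ContinuousLinearMap.flip_apply, ContinuousLinearMap.prod_apply, hDΦ₀d]
  have hSy : ∀ (β α : Fin m ⊕ Fin n),
      pdy (pdy (fun a b => (F a b) ^ 2) β) α x y
        = Df (SK (Lm (0, Pi.single α 1)) (Lm (0, Pi.single β 1)),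
              SH (Ln (0, Pi.single α 1)) (Ln (0, Pi.single β 1)))
          + Sf (DK (Lm (0, Pi.single α 1)), DH (Ln (0, Pi.single α 1)))
               (DK (Lm (0, Pi.single β 1)), DH (Ln (0, Pi.single β 1))) := by
    intro β α
    have h := pdy_of_eventually' (hfirst β) (hRHS (0, Pi.single β 1)) α
    rw [h]
    simp [ContinuousLinearMap.add_apply, ContinuousLinearMap.comp_apply,
      ContinuousLinearMap.flip_apply, ContinuousLinearMap.prod_apply, hDΦ₀d]
  have hpx : ∀ β : Fin m ⊕ Fin n,
      pdx (fun a b => (F a b) ^ 2) β x y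
        = Df (DK (Lm (Pi.single β 1, 0)), DH (Ln (Pi.single β 1, 0))) := by
    intro β
    have h := pdx_of_hasFDerivAt' (g := fun a b => (F a b) ^ 2) hGev.self_of_nhds β
    rw [h]
    simp only [ContinuousLinearMap.comp_apply, ContinuousLinearMap.prod_apply]
    rfl
  -- evaluation of the restriction maps on coordinate vectors
  have hcl : ∀ (i : Fin m), ((Pi.single (Sum.inl i) (1:ℝ) : Fin m ⊕ Fin n → ℝ) ∘ Sum.inl)
      = Pi.single i 1 := by
    intro i; funext j; simp [Function.comp_apply, Pi.single_apply]
  have hclz : ∀ (i' : Fin n), ((Pi.single (Sum.inr i') (1:ℝ) : Fin m ⊕ Fin n → ℝ) ∘ Sum.inl)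
      = 0 := by
    intro i'; funext j; simp [Function.comp_apply, Pi.single_apply]
  have hcr : ∀ (i' : Fin n), ((Pi.single (Sum.inr i') (1:ℝ) : Fin m ⊕ Fin n → ℝ) ∘ Sum.inr)
      = Pi.single i' 1 := by
    intro i'; funext j; simp [Function.comp_apply, Pi.single_apply]
  have hcrz : ∀ (i : Fin m), ((Pi.single (Sum.inl i) (1:ℝ) : Fin m ⊕ Fin n → ℝ) ∘ Sum.inr)
      = 0 := by
    intro i; funext j; simp [Function.comp_apply, Pi.single_apply]
  have hLm_y_inl : ∀ i : Fin m,
      Lm ((0 : Fin m ⊕ Fin n → ℝ), Pi.single (Sum.inl i) 1)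
        = ((0 : Fin m → ℝ), Pi.single i 1) := by
    intro i; rw [hLm]; rw [Prod.ext_iff]; exact ⟨rfl, hcl i⟩
  have hLm_y_inr : ∀ i' : Fin n,
      Lm ((0 : Fin m ⊕ Fin n → ℝ), Pi.single (Sum.inr i') 1) = 0 := by
    intro i'; rw [hLm]; rw [Prod.ext_iff]; exact ⟨rfl, hclz i'⟩
  have hLm_x_inl : ∀ l : Fin m,
      Lm (Pi.single (Sum.inl l) 1, (0 : Fin m ⊕ Fin n → ℝ))
        = (Pi.single l 1, (0 : Fin m → ℝ)) := by
    intro l; rw [hLm]; rw [Prod.ext_iff]; exact ⟨hcl l, rfl⟩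
  have hLm_x_inr : ∀ l' : Fin n,
      Lm (Pi.single (Sum.inr l') 1, (0 : Fin m ⊕ Fin n → ℝ)) = 0 := by
    intro l'; rw [hLm]; rw [Prod.ext_iff]; exact ⟨hclz l', rfl⟩
  have hLn_y_inl : ∀ i : Fin m,
      Ln ((0 : Fin m ⊕ Fin n → ℝ), Pi.single (Sum.inl i) 1) = 0 := by
    intro i; rw [hLn]; rw [Prod.ext_iff]; exact ⟨rfl, hcrz i⟩
  have hLn_y_inr : ∀ i' : Fin n,
      Ln ((0 : Fin m ⊕ Fin n → ℝ), Pi.single (Sum.inr i') 1)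
        = ((0 : Fin n → ℝ), Pi.single i' 1) := by
    intro i'; rw [hLn]; rw [Prod.ext_iff]; exact ⟨rfl, hcr i'⟩
  have hLn_x_inl : ∀ l : Fin m,
      Ln (Pi.single (Sum.inl l) 1, (0 : Fin m ⊕ Fin n → ℝ)) = 0 := by
    intro l; rw [hLn]; rw [Prod.ext_iff]; exact ⟨hcrz l, rfl⟩
  have hLn_x_inr : ∀ l' : Fin n,
      Ln (Pi.single (Sum.inr l') 1, (0 : Fin m ⊕ Fin n → ℝ))
        = (Pi.single l' 1, (0 : Fin n → ℝ)) := by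
    intro l'; rw [hLn]; rw [Prod.ext_iff]; exact ⟨hcr l', rfl⟩
  -- scalar coefficients of f
  set aa := Df (1, 0) with haad
  set bb := Df (0, 1) with hbbd
  set P11 := Sf (1, 0) (1, 0) with hP11d
  set P12 := Sf (1, 0) (0, 1) with hP12d
  set P21 := Sf (0, 1) (1, 0) with hP21d
  set P22 := Sf (0, 1) (0, 1) with hP22d
  have hP : P12 = P21 := hfsymm (1, 0) (0, 1)
  have hDfv : ∀ u v : ℝ, Df (u, v) = u * aa + v * bb := by
    intro u v
    have h : ((u, v) : ℝ × ℝ) = u • ((1:ℝ), (0:ℝ)) + v • ((0:ℝ), (1:ℝ)) := by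
      simp [Prod.ext_iff]
    rw [h, map_add, _root_.map_smul, _root_.map_smul, haad, hbbd]
    simp [smul_eq_mul]
  have hSfv : ∀ z w : ℝ × ℝ, Sf z w
      = z.1 * w.1 * P11 + z.1 * w.2 * P12 + z.2 * w.1 * P21 + z.2 * w.2 * P22 := by
    intro z w
    have hz : z = z.1 • ((1:ℝ), (0:ℝ)) + z.2 • ((0:ℝ), (1:ℝ)) := by simp [Prod.ext_iff]
    have hw : w = w.1 • ((1:ℝ), (0:ℝ)) + w.2 • ((0:ℝ), (1:ℝ)) := by simp [Prod.ext_iff]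
    have key : Sf (z.1 • ((1:ℝ), (0:ℝ)) + z.2 • ((0:ℝ), (1:ℝ)))
        (w.1 • ((1:ℝ), (0:ℝ)) + w.2 • ((0:ℝ), (1:ℝ)))
        = z.1 * w.1 * P11 + z.1 * w.2 * P12 + z.2 * w.1 * P21 + z.2 * w.2 * P22 := by
      simp only [map_add, _root_.map_smul, ContinuousLinearMap.add_apply,
        ContinuousLinearMap.smul_apply, smul_eq_mul]
      rw [← hP11d, ← hP12d, ← hP21d, ← hP22d]
      ring
    rw [← hz, ← hw] at key
    exact key
  -- coefficient vectors
  set kk : Fin m → ℝ := fun i => DK (0, Pi.single i 1) with hkkd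
  set kkx : Fin m → ℝ := fun l => DK (Pi.single l 1, 0) with hkkxd
  set hh : Fin n → ℝ := fun i' => DH (0, Pi.single i' 1) with hhhd
  set hhx : Fin n → ℝ := fun l' => DH (Pi.single l' 1, 0) with hhhxd
  -- bridges for K and H alone
  have hfund1 : ∀ l j : Fin m, fundTensor F₁ x₁ y₁ l j
      = SK (0, Pi.single l 1) (0, Pi.single j 1) :=
    fun l j => pdy_pdy_eq' hKev hKS l j
  have hKxy : ∀ (j l : Fin m), pdx (pdy (fun x' y' => (F₁ x' y') ^ 2) j) l x₁ y₁
      = SK (Pi.single l 1, 0) (0, Pi.single j 1) :=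
    fun j l => pdx_pdy_eq' hKev hKS l j
  have hKx1 : ∀ l : Fin m, pdx (fun x' y' => (F₁ x' y') ^ 2) l x₁ y₁
      = DK (Pi.single l 1, 0) :=
    fun l => pdx_of_hasFDerivAt' hKev.self_of_nhds l
  have hfund2 : ∀ l j : Fin n, fundTensor F₂ x₂ y₂ l j
      = SH (0, Pi.single l 1) (0, Pi.single j 1) :=
    fun l j => pdy_pdy_eq' hHev hHS l j
  have hHxy : ∀ (j l : Fin n), pdx (pdy (fun x' y' => (F₂ x' y') ^ 2) j) l x₂ y₂
      = SH (Pi.single l 1, 0) (0, Pi.single j 1) :=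
    fun j l => pdx_pdy_eq' hHev hHS l j
  have hHx1 : ∀ l : Fin n, pdx (fun x' y' => (F₂ x' y') ^ 2) l x₂ y₂
      = DH (Pi.single l 1, 0) :=
    fun l => pdx_of_hasFDerivAt' hHev.self_of_nhds l
  -- entries of the fundamental tensor of F
  have hD_ll : ∀ i j : Fin m, pdy (pdy (fun a b => (F a b) ^ 2) (Sum.inl j)) (Sum.inl i) x y
      = aa * SK (0, Pi.single i 1) (0, Pi.single j 1) + P11 * kk i * kk j := by
    intro i j
    rw [hSy (Sum.inl j) (Sum.inl i), hLm_y_inl i, hLm_y_inl j, hLn_y_inl i, hLn_y_inl j]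
    simp only [map_zero, ContinuousLinearMap.zero_apply, hDfv, hSfv, ← hkkd]
    simp only [hkkd]
    ring
  have hD_lr : ∀ (i : Fin m) (j' : Fin n),
      pdy (pdy (fun a b => (F a b) ^ 2) (Sum.inr j')) (Sum.inl i) x y
      = P12 * kk i * hh j' := by
    intro i j'
    rw [hSy (Sum.inr j') (Sum.inl i), hLm_y_inl i, hLm_y_inr j', hLn_y_inl i, hLn_y_inr j']
    simp only [map_zero, ContinuousLinearMap.zero_apply, hDfv, hSfv]
    simp only [hkkd, hhhd]
    ring
  have hD_rl : ∀ (i' : Fin n) (j : Fin m),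
      pdy (pdy (fun a b => (F a b) ^ 2) (Sum.inl j)) (Sum.inr i') x y
      = P21 * hh i' * kk j := by
    intro i' j
    rw [hSy (Sum.inl j) (Sum.inr i'), hLm_y_inr i', hLm_y_inl j, hLn_y_inr i', hLn_y_inl j]
    simp only [map_zero, ContinuousLinearMap.zero_apply, hDfv, hSfv]
    simp only [hkkd, hhhd]
    ring
  have hD_rr : ∀ i' j' : Fin n,
      pdy (pdy (fun a b => (F a b) ^ 2) (Sum.inr j')) (Sum.inr i') x y
      = bb * SH (0, Pi.single i' 1) (0, Pi.single j' 1) + P22 * hh i' * hh j' := by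
    intro i' j'
    rw [hSy (Sum.inr j') (Sum.inr i'), hLm_y_inr i', hLm_y_inr j', hLn_y_inr i', hLn_y_inr j']
    simp only [map_zero, ContinuousLinearMap.zero_apply, hDfv, hSfv]
    simp only [hhhd]
    ring
  have hX_ll : ∀ (j : Fin m) (l : Fin m),
      pdx (pdy (fun a b => (F a b) ^ 2) (Sum.inl j)) (Sum.inl l) x y
      = aa * SK (Pi.single l 1, 0) (0, Pi.single j 1) + P11 * kkx l * kk j := by
    intro j l
    rw [hSx (Sum.inl j) (Sum.inl l), hLm_x_inl l, hLm_y_inl j, hLn_x_inl l, hLn_y_inl j]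
    simp only [map_zero, ContinuousLinearMap.zero_apply, hDfv, hSfv]
    simp only [hkkd, hkkxd]
    ring
  have hX_lr : ∀ (j : Fin m) (l' : Fin n),
      pdx (pdy (fun a b => (F a b) ^ 2) (Sum.inl j)) (Sum.inr l') x y
      = P21 * hhx l' * kk j := by
    intro j l'
    rw [hSx (Sum.inl j) (Sum.inr l'), hLm_x_inr l', hLm_y_inl j, hLn_x_inr l', hLn_y_inl j]
    simp only [map_zero, ContinuousLinearMap.zero_apply, hDfv, hSfv]
    simp only [hkkd, hhhxd]
    ring
  have hX_rl : ∀ (j' : Fin n) (l : Fin m),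
      pdx (pdy (fun a b => (F a b) ^ 2) (Sum.inr j')) (Sum.inl l) x y
      = P12 * kkx l * hh j' := by
    intro j' l
    rw [hSx (Sum.inr j') (Sum.inl l), hLm_x_inl l, hLm_y_inr j', hLn_x_inl l, hLn_y_inr j']
    simp only [map_zero, ContinuousLinearMap.zero_apply, hDfv, hSfv]
    simp only [hkkxd, hhhd]
    ring
  have hX_rr : ∀ (j' : Fin n) (l' : Fin n),
      pdx (pdy (fun a b => (F a b) ^ 2) (Sum.inr j')) (Sum.inr l') x y
      = bb * SH (Pi.single l' 1, 0) (0, Pi.single j' 1) + P22 * hhx l' * hh j' := by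
    intro j' l'
    rw [hSx (Sum.inr j') (Sum.inr l'), hLm_x_inr l', hLm_y_inr j', hLn_x_inr l', hLn_y_inr j']
    simp only [map_zero, ContinuousLinearMap.zero_apply, hDfv, hSfv]
    simp only [hhhd, hhhxd]
    ring
  have hpx_l : ∀ l : Fin m, pdx (fun a b => (F a b) ^ 2) (Sum.inl l) x y = aa * kkx l := by
    intro l
    rw [hpx (Sum.inl l), hLm_x_inl l, hLn_x_inl l]
    simp only [map_zero, hDfv]
    simp only [hkkxd]
    ring
  have hpx_r : ∀ l' : Fin n, pdx (fun a b => (F a b) ^ 2) (Sum.inr l') x y = bb * hhx l' := by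
    intro l'
    rw [hpx (Sum.inr l'), hLm_x_inr l', hLn_x_inr l']
    simp only [map_zero, hDfv]
    simp only [hhhxd]
    ring
  have hPD₁ : (fundTensor F₁ x₁ y₁).PosDef := hprod.finsler₁.posDef x₁ hx1 y₁ hy1
  have hdet₁ : IsUnit (fundTensor F₁ x₁ y₁).det := hPD₁.det_pos.ne'.isUnit
  set ℓ₁ : Fin m → ℝ := fun j =>
      (∑ l, pdx (pdy (fun x' y' => (F₁ x' y') ^ 2) j) l x₁ y₁ * y₁ l)
        - pdx (fun x' y' => (F₁ x' y') ^ 2) j x₁ y₁ with hℓ₁d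
  have hsp₁ : ∀ j : Fin m, 2 * spray F₁ j x₁ y₁ = ((fundTensor F₁ x₁ y₁)⁻¹ *ᵥ ℓ₁) j := by
    intro j
    have h1 : spray F₁ j x₁ y₁ = (1/2) * ∑ l, (fundTensor F₁ x₁ y₁)⁻¹ j l * ℓ₁ l := rfl
    have h2 : ((fundTensor F₁ x₁ y₁)⁻¹ *ᵥ ℓ₁) j = ∑ l, (fundTensor F₁ x₁ y₁)⁻¹ j l * ℓ₁ l := rfl
    rw [h1, h2]; ring
  have hS1₁ : ∀ i, ∑ j, fundTensor F₁ x₁ y₁ i j * (2 * spray F₁ j x₁ y₁) = ℓ₁ i := by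
    intro i
    calc ∑ j, fundTensor F₁ x₁ y₁ i j * (2 * spray F₁ j x₁ y₁)
        = ∑ j, fundTensor F₁ x₁ y₁ i j * ((fundTensor F₁ x₁ y₁)⁻¹ *ᵥ ℓ₁) j :=
          Finset.sum_congr rfl fun j _ => by rw [hsp₁ j]
      _ = (fundTensor F₁ x₁ y₁ *ᵥ ((fundTensor F₁ x₁ y₁)⁻¹ *ᵥ ℓ₁)) i := rfl
      _ = ((fundTensor F₁ x₁ y₁ * (fundTensor F₁ x₁ y₁)⁻¹) *ᵥ ℓ₁) i := by
          rw [Matrix.mulVec_mulVec]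
      _ = ℓ₁ i := by rw [Matrix.mul_nonsing_inv _ hdet₁, Matrix.one_mulVec]
  have hℓ₁S : ∀ j, ℓ₁ j = SK ((y₁, 0)) (0, Pi.single j 1) - DK (Pi.single j 1, 0) := by
    intro j
    have h3 : ∑ l, pdx (pdy (fun x' y' => (F₁ x' y') ^ 2) j) l x₁ y₁ * y₁ l
        = SK ((y₁, 0)) (0, Pi.single j 1) := by
      rw [clm_sum_left' SK y₁, ContinuousLinearMap.sum_apply]
      refine Finset.sum_congr rfl fun l _ => ?_
      rw [hKxy j l]
      simp [ContinuousLinearMap.smul_apply, smul_eq_mul, mul_comm]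
    have h4 : ℓ₁ j = (∑ l, pdx (pdy (fun x' y' => (F₁ x' y') ^ 2) j) l x₁ y₁ * y₁ l)
        - pdx (fun x' y' => (F₁ x' y') ^ 2) j x₁ y₁ := rfl
    rw [h4, h3, hKx1 j]
  have hkkM₁ : ∀ j, kk j = ∑ l, y₁ l * fundTensor F₁ x₁ y₁ l j := by
    intro j
    have hz : ((0, 0) : (Fin m → ℝ) × (Fin m → ℝ)) = 0 := rfl
    have h1 : SK ((0 : Fin m → ℝ), y₁) (0, Pi.single j 1) = kk j := by
      calc SK ((0 : Fin m → ℝ), y₁) (0, Pi.single j 1)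
          = 2 * DK (0, 0) + DK (0, Pi.single j 1) := hKE _
        _ = kk j := by rw [hz, map_zero]; simp [kk]
    have h2 := clm_sum_right' SK y₁
    calc kk j = SK ((0 : Fin m → ℝ), y₁) (0, Pi.single j 1) := h1.symm
      _ = (∑ l, y₁ l • SK (0, Pi.single l 1)) (0, Pi.single j 1) := by rw [h2]
      _ = ∑ l, y₁ l * SK (0, Pi.single l 1) (0, Pi.single j 1) := by
          rw [ContinuousLinearMap.sum_apply]
          refine Finset.sum_congr rfl fun l _ => ?_
          simp
      _ = ∑ l, y₁ l * fundTensor F₁ x₁ y₁ l j := by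
          refine Finset.sum_congr rfl fun l _ => ?_
          rw [hfund1 l j]
  have hyl₁ : ∑ l, y₁ l * ℓ₁ l = ∑ l, kkx l * y₁ l := by
    have hz : ((0, 0) : (Fin m → ℝ) × (Fin m → ℝ)) = 0 := rfl
    have hDKy : DK ((y₁, 0)) = ∑ l, kkx l * y₁ l := by
      rw [clm_sum_left' DK y₁]
      refine Finset.sum_congr rfl fun l _ => ?_
      simp [kkx, mul_comm]
    have hSKy : SK ((y₁, 0)) ((0, y₁)) = 2 * DK ((y₁, 0)) := by
      rw [hKsymm ((y₁, 0)) ((0, y₁))]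
      calc SK ((0, y₁)) ((y₁, 0))
          = 2 * DK (y₁, 0) + DK (0, 0) := hKE _
        _ = 2 * DK ((y₁, 0)) := by rw [hz, map_zero, add_zero]
    have hsum : ∑ l, y₁ l * SK ((y₁, 0)) (0, Pi.single l 1) = SK ((y₁, 0)) ((0, y₁)) := by
      rw [clm_sum_right' (SK ((y₁, 0))) y₁]
      refine Finset.sum_congr rfl fun l _ => ?_
      simp
    have hsum2 : ∑ l, y₁ l * DK (Pi.single l 1, 0) = DK ((y₁, 0)) := by
      rw [clm_sum_left' DK y₁]
      refine Finset.sum_congr rfl fun l _ => ?_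
      simp
    calc ∑ l, y₁ l * ℓ₁ l
        = ∑ l, (y₁ l * SK ((y₁, 0)) (0, Pi.single l 1) - y₁ l * DK (Pi.single l 1, 0)) := by
          refine Finset.sum_congr rfl fun l _ => ?_
          rw [hℓ₁S l]; ring
      _ = (∑ l, y₁ l * SK ((y₁, 0)) (0, Pi.single l 1))
            - ∑ l, y₁ l * DK (Pi.single l 1, 0) := Finset.sum_sub_distrib _ _
      _ = 2 * DK ((y₁, 0)) - DK ((y₁, 0)) := by rw [hsum, hSKy, hsum2]
      _ = DK ((y₁, 0)) := by ring
      _ = ∑ l, kkx l * y₁ l := hDKy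
  have hS2₁ : ∑ j, kk j * (2 * spray F₁ j x₁ y₁) = ∑ l, kkx l * y₁ l := by
    calc ∑ j, kk j * (2 * spray F₁ j x₁ y₁)
        = ∑ j, ∑ l, y₁ l * fundTensor F₁ x₁ y₁ l j * (2 * spray F₁ j x₁ y₁) := by
          refine Finset.sum_congr rfl fun j _ => ?_
          rw [hkkM₁ j, Finset.sum_mul]
      _ = ∑ l, ∑ j, y₁ l * fundTensor F₁ x₁ y₁ l j * (2 * spray F₁ j x₁ y₁) :=
          Finset.sum_comm
      _ = ∑ l, y₁ l * ℓ₁ l := by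
          refine Finset.sum_congr rfl fun l _ => ?_
          calc ∑ j, y₁ l * fundTensor F₁ x₁ y₁ l j * (2 * spray F₁ j x₁ y₁)
              = y₁ l * ∑ j, fundTensor F₁ x₁ y₁ l j * (2 * spray F₁ j x₁ y₁) := by
                rw [Finset.mul_sum]
                refine Finset.sum_congr rfl fun j _ => ?_
                ring
            _ = y₁ l * ℓ₁ l := by rw [hS1₁ l]
      _ = ∑ l, kkx l * y₁ l := hyl₁
  have hPD₂ : (fundTensor F₂ x₂ y₂).PosDef := hprod.finsler₂.posDef x₂ hx2 y₂ hy2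
  have hdet₂ : IsUnit (fundTensor F₂ x₂ y₂).det := hPD₂.det_pos.ne'.isUnit
  set ℓ₂ : Fin n → ℝ := fun j =>
      (∑ l, pdx (pdy (fun x' y' => (F₂ x' y') ^ 2) j) l x₂ y₂ * y₂ l)
        - pdx (fun x' y' => (F₂ x' y') ^ 2) j x₂ y₂ with hℓ₂d
  have hsp₂ : ∀ j : Fin n, 2 * spray F₂ j x₂ y₂ = ((fundTensor F₂ x₂ y₂)⁻¹ *ᵥ ℓ₂) j := by
    intro j
    have h1 : spray F₂ j x₂ y₂ = (1/2) * ∑ l, (fundTensor F₂ x₂ y₂)⁻¹ j l * ℓ₂ l := rfl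
    have h2 : ((fundTensor F₂ x₂ y₂)⁻¹ *ᵥ ℓ₂) j = ∑ l, (fundTensor F₂ x₂ y₂)⁻¹ j l * ℓ₂ l := rfl
    rw [h1, h2]; ring
  have hS1₂ : ∀ i, ∑ j, fundTensor F₂ x₂ y₂ i j * (2 * spray F₂ j x₂ y₂) = ℓ₂ i := by
    intro i
    calc ∑ j, fundTensor F₂ x₂ y₂ i j * (2 * spray F₂ j x₂ y₂)
        = ∑ j, fundTensor F₂ x₂ y₂ i j * ((fundTensor F₂ x₂ y₂)⁻¹ *ᵥ ℓ₂) j :=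
          Finset.sum_congr rfl fun j _ => by rw [hsp₂ j]
      _ = (fundTensor F₂ x₂ y₂ *ᵥ ((fundTensor F₂ x₂ y₂)⁻¹ *ᵥ ℓ₂)) i := rfl
      _ = ((fundTensor F₂ x₂ y₂ * (fundTensor F₂ x₂ y₂)⁻¹) *ᵥ ℓ₂) i := by
          rw [Matrix.mulVec_mulVec]
      _ = ℓ₂ i := by rw [Matrix.mul_nonsing_inv _ hdet₂, Matrix.one_mulVec]
  have hℓ₂S : ∀ j, ℓ₂ j = SH ((y₂, 0)) (0, Pi.single j 1) - DH (Pi.single j 1, 0) := by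
    intro j
    have h3 : ∑ l, pdx (pdy (fun x' y' => (F₂ x' y') ^ 2) j) l x₂ y₂ * y₂ l
        = SH ((y₂, 0)) (0, Pi.single j 1) := by
      rw [clm_sum_left' SH y₂, ContinuousLinearMap.sum_apply]
      refine Finset.sum_congr rfl fun l _ => ?_
      rw [hHxy j l]
      simp [ContinuousLinearMap.smul_apply, smul_eq_mul, mul_comm]
    have h4 : ℓ₂ j = (∑ l, pdx (pdy (fun x' y' => (F₂ x' y') ^ 2) j) l x₂ y₂ * y₂ l)
        - pdx (fun x' y' => (F₂ x' y') ^ 2) j x₂ y₂ := rfl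
    rw [h4, h3, hHx1 j]
  have hkkM₂ : ∀ j, hh j = ∑ l, y₂ l * fundTensor F₂ x₂ y₂ l j := by
    intro j
    have hz : ((0, 0) : (Fin n → ℝ) × (Fin n → ℝ)) = 0 := rfl
    have h1 : SH ((0 : Fin n → ℝ), y₂) (0, Pi.single j 1) = hh j := by
      calc SH ((0 : Fin n → ℝ), y₂) (0, Pi.single j 1)
          = 2 * DH (0, 0) + DH (0, Pi.single j 1) := hHE _
        _ = hh j := by rw [hz, map_zero]; simp [hh]
    have h2 := clm_sum_right' SH y₂
    calc hh j = SH ((0 : Fin n → ℝ), y₂) (0, Pi.single j 1) := h1.symm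
      _ = (∑ l, y₂ l • SH (0, Pi.single l 1)) (0, Pi.single j 1) := by rw [h2]
      _ = ∑ l, y₂ l * SH (0, Pi.single l 1) (0, Pi.single j 1) := by
          rw [ContinuousLinearMap.sum_apply]
          refine Finset.sum_congr rfl fun l _ => ?_
          simp
      _ = ∑ l, y₂ l * fundTensor F₂ x₂ y₂ l j := by
          refine Finset.sum_congr rfl fun l _ => ?_
          rw [hfund2 l j]
  have hyl₂ : ∑ l, y₂ l * ℓ₂ l = ∑ l, hhx l * y₂ l := by
    have hz : ((0, 0) : (Fin n → ℝ) × (Fin n → ℝ)) = 0 := rfl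
    have hDKy : DH ((y₂, 0)) = ∑ l, hhx l * y₂ l := by
      rw [clm_sum_left' DH y₂]
      refine Finset.sum_congr rfl fun l _ => ?_
      simp [hhx, mul_comm]
    have hSKy : SH ((y₂, 0)) ((0, y₂)) = 2 * DH ((y₂, 0)) := by
      rw [hHsymm ((y₂, 0)) ((0, y₂))]
      calc SH ((0, y₂)) ((y₂, 0))
          = 2 * DH (y₂, 0) + DH (0, 0) := hHE _
        _ = 2 * DH ((y₂, 0)) := by rw [hz, map_zero, add_zero]
    have hsum : ∑ l, y₂ l * SH ((y₂, 0)) (0, Pi.single l 1) = SH ((y₂, 0)) ((0, y₂)) := by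
      rw [clm_sum_right' (SH ((y₂, 0))) y₂]
      refine Finset.sum_congr rfl fun l _ => ?_
      simp
    have hsum2 : ∑ l, y₂ l * DH (Pi.single l 1, 0) = DH ((y₂, 0)) := by
      rw [clm_sum_left' DH y₂]
      refine Finset.sum_congr rfl fun l _ => ?_
      simp
    calc ∑ l, y₂ l * ℓ₂ l
        = ∑ l, (y₂ l * SH ((y₂, 0)) (0, Pi.single l 1) - y₂ l * DH (Pi.single l 1, 0)) := by
          refine Finset.sum_congr rfl fun l _ => ?_
          rw [hℓ₂S l]; ring
      _ = (∑ l, y₂ l * SH ((y₂, 0)) (0, Pi.single l 1))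
            - ∑ l, y₂ l * DH (Pi.single l 1, 0) := Finset.sum_sub_distrib _ _
      _ = 2 * DH ((y₂, 0)) - DH ((y₂, 0)) := by rw [hsum, hSKy, hsum2]
      _ = DH ((y₂, 0)) := by ring
      _ = ∑ l, hhx l * y₂ l := hDKy
  have hS2₂ : ∑ j, hh j * (2 * spray F₂ j x₂ y₂) = ∑ l, hhx l * y₂ l := by
    calc ∑ j, hh j * (2 * spray F₂ j x₂ y₂)
        = ∑ j, ∑ l, y₂ l * fundTensor F₂ x₂ y₂ l j * (2 * spray F₂ j x₂ y₂) := by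
          refine Finset.sum_congr rfl fun j _ => ?_
          rw [hkkM₂ j, Finset.sum_mul]
      _ = ∑ l, ∑ j, y₂ l * fundTensor F₂ x₂ y₂ l j * (2 * spray F₂ j x₂ y₂) :=
          Finset.sum_comm
      _ = ∑ l, y₂ l * ℓ₂ l := by
          refine Finset.sum_congr rfl fun l _ => ?_
          calc ∑ j, y₂ l * fundTensor F₂ x₂ y₂ l j * (2 * spray F₂ j x₂ y₂)
              = y₂ l * ∑ j, fundTensor F₂ x₂ y₂ l j * (2 * spray F₂ j x₂ y₂) := by
                rw [Finset.mul_sum]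
                refine Finset.sum_congr rfl fun j _ => ?_
                ring
            _ = y₂ l * ℓ₂ l := by rw [hS1₂ l]
      _ = ∑ l, hhx l * y₂ l := hyl₂
  -- the velocity vector of the product sprays
  set vv : Fin m ⊕ Fin n → ℝ :=
    Sum.elim (fun j => 2 * spray F₁ j x₁ y₁) (fun j' => 2 * spray F₂ j' x₂ y₂) with hvvd
  have hyc1 : ∀ l : Fin m, y (Sum.inl l) = y₁ l := fun l => rfl
  have hyc2 : ∀ l' : Fin n, y (Sum.inr l') = y₂ l' := fun l' => rfl
  -- the key row identity
  have key : ∀ β : Fin m ⊕ Fin n,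
      ((∑ γ, pdx (pdy (fun x' y' => (F x' y') ^ 2) β) γ x y * y γ)
        - pdx (fun x' y' => (F x' y') ^ 2) β x y)
      = ∑ μ, fundTensor F x y β μ * vv μ := by
    intro β
    cases β with
    | inl i =>
      have hLHS : ((∑ γ, pdx (pdy (fun x' y' => (F x' y') ^ 2) (Sum.inl i)) γ x y * y γ)
            - pdx (fun x' y' => (F x' y') ^ 2) (Sum.inl i) x y)
          = aa * ℓ₁ i + P11 * kk i * (∑ l, kkx l * y₁ l)
            + P21 * kk i * (∑ l', hhx l' * y₂ l') := by
        rw [Fintype.sum_sum_type]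
        have e1 : ∀ l : Fin m,
            pdx (pdy (fun x' y' => (F x' y') ^ 2) (Sum.inl i)) (Sum.inl l) x y * y (Sum.inl l)
            = aa * (pdx (pdy (fun x' y' => (F₁ x' y') ^ 2) i) l x₁ y₁ * y₁ l)
              + P11 * kk i * (kkx l * y₁ l) := by
          intro l
          rw [hX_ll i l, ← hKxy i l, hyc1 l]
          ring
        have e2 : ∀ l' : Fin n,
            pdx (pdy (fun x' y' => (F x' y') ^ 2) (Sum.inl i)) (Sum.inr l') x y * y (Sum.inr l')
            = P21 * kk i * (hhx l' * y₂ l') := by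
          intro l'
          rw [hX_lr i l', hyc2 l']
          ring
        rw [Finset.sum_congr rfl (fun l _ => e1 l), Finset.sum_congr rfl (fun l' _ => e2 l'),
          hpx_l i]
        rw [Finset.sum_add_distrib, ← Finset.mul_sum, ← Finset.mul_sum, ← Finset.mul_sum]
        have e3 : ∑ l, pdx (pdy (fun x' y' => (F₁ x' y') ^ 2) i) l x₁ y₁ * y₁ l
            = ℓ₁ i + kkx i := by
          have h4 : ℓ₁ i = (∑ l, pdx (pdy (fun x' y' => (F₁ x' y') ^ 2) i) l x₁ y₁ * y₁ l)
              - pdx (fun x' y' => (F₁ x' y') ^ 2) i x₁ y₁ := rfl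
          rw [h4, hKx1 i]
          have h5 : kkx i = DK (Pi.single i 1, 0) := rfl
          rw [h5]; ring
        rw [e3]; ring
      have hRHS : ∑ μ, fundTensor F x y (Sum.inl i) μ * vv μ
          = aa * ℓ₁ i + P11 * kk i * (∑ l, kkx l * y₁ l)
            + P12 * kk i * (∑ l', hhx l' * y₂ l') := by
        rw [Fintype.sum_sum_type]
        have e1 : ∀ j : Fin m, fundTensor F x y (Sum.inl i) (Sum.inl j) * vv (Sum.inl j)
            = aa * (fundTensor F₁ x₁ y₁ i j * (2 * spray F₁ j x₁ y₁))
              + P11 * kk i * (kk j * (2 * spray F₁ j x₁ y₁)) := by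
          intro j
          have h0 : fundTensor F x y (Sum.inl i) (Sum.inl j)
              = pdy (pdy (fun x' y' => (F x' y') ^ 2) (Sum.inl j)) (Sum.inl i) x y := rfl
          have h1 : vv (Sum.inl j) = 2 * spray F₁ j x₁ y₁ := rfl
          rw [h0, hD_ll i j, ← hfund1 i j, h1]
          ring
        have e2 : ∀ j' : Fin n, fundTensor F x y (Sum.inl i) (Sum.inr j') * vv (Sum.inr j')
            = P12 * kk i * (hh j' * (2 * spray F₂ j' x₂ y₂)) := by
          intro j'
          have h0 : fundTensor F x y (Sum.inl i) (Sum.inr j')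
              = pdy (pdy (fun x' y' => (F x' y') ^ 2) (Sum.inr j')) (Sum.inl i) x y := rfl
          have h1 : vv (Sum.inr j') = 2 * spray F₂ j' x₂ y₂ := rfl
          rw [h0, hD_lr i j', h1]
          ring
        rw [Finset.sum_congr rfl (fun j _ => e1 j), Finset.sum_congr rfl (fun j' _ => e2 j')]
        rw [Finset.sum_add_distrib, ← Finset.mul_sum, ← Finset.mul_sum, ← Finset.mul_sum]
        rw [hS1₁ i, hS2₁, hS2₂]
      rw [hLHS, hRHS, hP]
    | inr i' =>
      have hLHS : ((∑ γ, pdx (pdy (fun x' y' => (F x' y') ^ 2) (Sum.inr i')) γ x y * y γ)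
            - pdx (fun x' y' => (F x' y') ^ 2) (Sum.inr i') x y)
          = bb * ℓ₂ i' + P22 * hh i' * (∑ l', hhx l' * y₂ l')
            + P12 * hh i' * (∑ l, kkx l * y₁ l) := by
        rw [Fintype.sum_sum_type]
        have e1 : ∀ l : Fin m,
            pdx (pdy (fun x' y' => (F x' y') ^ 2) (Sum.inr i')) (Sum.inl l) x y * y (Sum.inl l)
            = P12 * hh i' * (kkx l * y₁ l) := by
          intro l
          rw [hX_rl i' l, hyc1 l]
          ring
        have e2 : ∀ l' : Fin n,
            pdx (pdy (fun x' y' => (F x' y') ^ 2) (Sum.inr i')) (Sum.inr l') x y * y (Sum.inr l')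
            = bb * (pdx (pdy (fun x' y' => (F₂ x' y') ^ 2) i') l' x₂ y₂ * y₂ l')
              + P22 * hh i' * (hhx l' * y₂ l') := by
          intro l'
          rw [hX_rr i' l', ← hHxy i' l', hyc2 l']
          ring
        rw [Finset.sum_congr rfl (fun l _ => e1 l), Finset.sum_congr rfl (fun l' _ => e2 l'),
          hpx_r i']
        rw [Finset.sum_add_distrib, ← Finset.mul_sum, ← Finset.mul_sum, ← Finset.mul_sum]
        have e3 : ∑ l', pdx (pdy (fun x' y' => (F₂ x' y') ^ 2) i') l' x₂ y₂ * y₂ l'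
            = ℓ₂ i' + hhx i' := by
          have h4 : ℓ₂ i' = (∑ l', pdx (pdy (fun x' y' => (F₂ x' y') ^ 2) i') l' x₂ y₂ * y₂ l')
              - pdx (fun x' y' => (F₂ x' y') ^ 2) i' x₂ y₂ := rfl
          rw [h4, hHx1 i']
          have h5 : hhx i' = DH (Pi.single i' 1, 0) := rfl
          rw [h5]; ring
        rw [e3]; ring
      have hRHS : ∑ μ, fundTensor F x y (Sum.inr i') μ * vv μ
          = bb * ℓ₂ i' + P22 * hh i' * (∑ l', hhx l' * y₂ l')
            + P21 * hh i' * (∑ l, kkx l * y₁ l) := by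
        rw [Fintype.sum_sum_type]
        have e1 : ∀ j : Fin m, fundTensor F x y (Sum.inr i') (Sum.inl j) * vv (Sum.inl j)
            = P21 * hh i' * (kk j * (2 * spray F₁ j x₁ y₁)) := by
          intro j
          have h0 : fundTensor F x y (Sum.inr i') (Sum.inl j)
              = pdy (pdy (fun x' y' => (F x' y') ^ 2) (Sum.inl j)) (Sum.inr i') x y := rfl
          have h1 : vv (Sum.inl j) = 2 * spray F₁ j x₁ y₁ := rfl
          rw [h0, hD_rl i' j, h1]
          ring
        have e2 : ∀ j' : Fin n, fundTensor F x y (Sum.inr i') (Sum.inr j') * vv (Sum.inr j')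
            = bb * (fundTensor F₂ x₂ y₂ i' j' * (2 * spray F₂ j' x₂ y₂))
              + P22 * hh i' * (hh j' * (2 * spray F₂ j' x₂ y₂)) := by
          intro j'
          have h0 : fundTensor F x y (Sum.inr i') (Sum.inr j')
              = pdy (pdy (fun x' y' => (F x' y') ^ 2) (Sum.inr j')) (Sum.inr i') x y := rfl
          have h1 : vv (Sum.inr j') = 2 * spray F₂ j' x₂ y₂ := rfl
          rw [h0, hD_rr i' j', ← hfund2 i' j', h1]
          ring
        rw [Finset.sum_congr rfl (fun j _ => e1 j), Finset.sum_congr rfl (fun j' _ => e2 j')]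
        rw [Finset.sum_add_distrib, ← Finset.mul_sum, ← Finset.mul_sum, ← Finset.mul_sum]
        rw [hS1₂ i', hS2₂, hS2₁]
        ring
      rw [hLHS, hRHS, hP]
  -- invertibility of the fundamental tensor of F
  have hy0 : y ≠ 0 := by
    intro h
    apply hy1
    rw [hy₁d, h]
    rfl
  have hPDg : (fundTensor F x y).PosDef := hprod.finsler.posDef x ⟨hx1, hx2⟩ y hy0
  have hdetg : IsUnit (fundTensor F x y).det := hPDg.det_pos.ne'.isUnit
  have hfin : ∀ α : Fin m ⊕ Fin n, spray F α x y = (1 / 2) * vv α := by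
    intro α
    have h1 : spray F α x y = (1 / 2) * ∑ β, (fundTensor F x y)⁻¹ α β *
        ((∑ γ, pdx (pdy (fun x' y' => (F x' y') ^ 2) β) γ x y * y γ)
          - pdx (fun x' y' => (F x' y') ^ 2) β x y) := rfl
    rw [h1]
    have h2 : ∀ β, (fundTensor F x y)⁻¹ α β *
        ((∑ γ, pdx (pdy (fun x' y' => (F x' y') ^ 2) β) γ x y * y γ)
          - pdx (fun x' y' => (F x' y') ^ 2) β x y)
        = (fundTensor F x y)⁻¹ α β * (fundTensor F x y *ᵥ vv) β := by
      intro β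
      rw [key β]
      rfl
    rw [Finset.sum_congr rfl (fun β _ => h2 β)]
    have h3 : ∑ β, (fundTensor F x y)⁻¹ α β * (fundTensor F x y *ᵥ vv) β
        = ((fundTensor F x y)⁻¹ *ᵥ (fundTensor F x y *ᵥ vv)) α := rfl
    rw [h3, Matrix.mulVec_mulVec, Matrix.nonsing_inv_mul _ hdetg, Matrix.one_mulVec]
  constructor
  · intro i
    rw [hfin (Sum.inl i)]
    have h : vv (Sum.inl i) = 2 * spray F₁ i x₁ y₁ := rfl
    rw [h]
    ring
  · intro i'
    rw [hfin (Sum.inr i')]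
    have h : vv (Sum.inr i') = 2 * spray F₂ i' x₂ y₂ := rfl
    rw [h]
    ring
end

section
/- Let F be the Minkowskian product of Finsler metrics F₁ and F₂ with respect to a product function f. Then at every point (x,y) = ((x₁,x₂),(y₁,y₂)) with y₁ ≠ 0 and y₂ ≠ 0, the Cartan nonlinear connection coefficients Γ^α_β = ∂𝔾^α/∂y^β of F satisfy: Γ^i_j(x,y) = Γ₁^i_j(x₁,y₁), Γ^{i'}_{j'}(x,y) = Γ₂^{i'}_{j'}(x₂,y₂), and Γ^{i'}_j(x,y) = Γ^i_{j'}(x,y) = 0, where Γ₁ and Γ₂ are the nonlinear connection coefficients of F₁ and F₂. -/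
open Matrix

section FinslerAux
set_option maxHeartbeats 1000000

set_option linter.unusedSectionVars false

variable {ι : Type*} [Fintype ι] [DecidableEq ι]
variable {U : Set (ι → ℝ)} {F : (ι → ℝ) → (ι → ℝ) → ℝ}
variable {x w : ι → ℝ}

lemma clm_apply_eq_sum (L : ((ι → ℝ)) →L[ℝ] ℝ) (v : ι → ℝ) :
    L v = ∑ l, v l * L (Pi.single l 1) := by
  conv_lhs => rw [← Finset.univ_sum_single v, map_sum]
  refine Finset.sum_congr rfl fun l _ => ?_
  have h : Pi.single l (v l) = v l • (Pi.single l 1 : ι → ℝ) := by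
    funext k
    by_cases hk : k = l <;> simp [Pi.single_apply, hk]
  rw [h, _root_.map_smul, smul_eq_mul]

lemma clm2_apply (L : (ℝ × ℝ) →L[ℝ] ℝ) (a b : ℝ) :
    L (a, b) = a * L (1, 0) + b * L (0, 1) := by
  have h : (a, b) = a • ((1:ℝ), (0:ℝ)) + b • ((0:ℝ), (1:ℝ)) := by
    simp [Prod.ext_iff]
  rw [h, map_add, _root_.map_smul, _root_.map_smul, smul_eq_mul, smul_eq_mul]

lemma hasDerivAt_along_ray {g : (ι → ℝ) → ℝ} {D : (ι → ℝ) →L[ℝ] ℝ} (hg : HasFDerivAt g D w) :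
    HasDerivAt (fun c : ℝ => g (c • w)) (D w) 1 := by
  have hline : HasDerivAt (fun c : ℝ => c • w) w 1 := by
    simpa using (hasDerivAt_id (1:ℝ)).smul_const w
  have hg' : HasFDerivAt g D ((fun c : ℝ => c • w) 1) := by simpa using hg
  simpa [Function.comp_def] using hg'.comp_hasDerivAt 1 hline

lemma isOpen_slit : IsOpen {y : ι → ℝ | y ≠ 0} := isOpen_compl_singleton

lemma one_le_top' : ((⊤ : ℕ∞) : WithTop ℕ∞) ≠ 0 := by
  simp

lemma top_add_one_le : ((⊤ : ℕ∞) : WithTop ℕ∞) + 1 ≤ ((⊤ : ℕ∞) : WithTop ℕ∞) := by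
  norm_cast

lemma IsFinslerMetric.contDiffAt_joint (h : IsFinslerMetric U F) (hx : x ∈ U) (hw : w ≠ 0) :
    ContDiffAt ℝ ((⊤:ℕ∞) : WithTop ℕ∞) (fun p : (ι → ℝ) × (ι → ℝ) => (F p.1 p.2) ^ 2) (x, w) :=
  h.smooth.contDiffAt ((h.isOpen.prod isOpen_slit).mem_nhds ⟨hx, hw⟩)

lemma IsFinslerMetric.contDiffAt_sliceY (h : IsFinslerMetric U F) (hx : x ∈ U) (hw : w ≠ 0) :
    ContDiffAt ℝ ((⊤:ℕ∞) : WithTop ℕ∞) (fun y => F x y ^ 2) w :=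
  (h.contDiffAt_joint hx hw).comp w (contDiffAt_const.prodMk contDiffAt_id)

lemma IsFinslerMetric.diffY (h : IsFinslerMetric U F) (hx : x ∈ U) (hw : w ≠ 0) :
    DifferentiableAt ℝ (fun y => F x y ^ 2) w :=
  (h.contDiffAt_sliceY hx hw).differentiableAt one_le_top'

lemma IsFinslerMetric.contDiffOn_sliceY (h : IsFinslerMetric U F) (hx : x ∈ U) :
    ContDiffOn ℝ ((⊤:ℕ∞) : WithTop ℕ∞) (fun y => F x y ^ 2) {y : ι → ℝ | y ≠ 0} :=
  h.smooth.comp (contDiffOn_const.prodMk contDiffOn_id) (fun y hy => ⟨hx, hy⟩)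

lemma IsFinslerMetric.contDiffOn_fderiv_sliceY (h : IsFinslerMetric U F) (hx : x ∈ U) :
    ContDiffOn ℝ ((⊤:ℕ∞) : WithTop ℕ∞) (fderiv ℝ (fun y => F x y ^ 2)) {y : ι → ℝ | y ≠ 0} :=
  (h.contDiffOn_sliceY hx).fderiv_of_isOpen isOpen_slit top_add_one_le

lemma IsFinslerMetric.diffY_fderiv (h : IsFinslerMetric U F) (hx : x ∈ U) (hw : w ≠ 0) :
    DifferentiableAt ℝ (fderiv ℝ (fun y => F x y ^ 2)) w :=
  (((h.contDiffOn_fderiv_sliceY hx).differentiableOn one_le_top').differentiableAt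
    (isOpen_slit.mem_nhds hw))

lemma IsFinslerMetric.hasFDerivAt_pdyY (h : IsFinslerMetric U F) (hx : x ∈ U) (hw : w ≠ 0) (β : ι) :
    HasFDerivAt (fun y => fderiv ℝ (fun y' => F x y' ^ 2) y (Pi.single β 1))
      ((fderiv ℝ (fderiv ℝ (fun y => F x y ^ 2)) w).flip (Pi.single β 1)) w := by
  have h1 := (h.diffY_fderiv hx hw).hasFDerivAt.clm_apply
    (hasFDerivAt_const (Pi.single β (1:ℝ)) w)
  simpa using h1

lemma IsFinslerMetric.fundTensor_eq (h : IsFinslerMetric U F) (hx : x ∈ U) (hw : w ≠ 0) (α β : ι) :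
    fundTensor F x w α β
      = fderiv ℝ (fderiv ℝ (fun y => F x y ^ 2)) w (Pi.single α 1) (Pi.single β 1) := by
  have h1 := (h.hasFDerivAt_pdyY hx hw β).fderiv
  show fderiv ℝ (fun y => fderiv ℝ (fun y' => F x y' ^ 2) y (Pi.single β 1)) w (Pi.single α 1) = _
  rw [h1]
  rfl

lemma IsFinslerMetric.homog_sq (h : IsFinslerMetric U F) (hx : x ∈ U) (c : ℝ) (y : ι → ℝ) :
    F x (c • y) ^ 2 = c ^ 2 * F x y ^ 2 := by
  rw [h.homog x hx y c, mul_pow, sq_abs]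

lemma IsFinslerMetric.euler1 (h : IsFinslerMetric U F) (hx : x ∈ U) (hw : w ≠ 0) :
    ∑ l, pdy (fun x' y' => F x' y' ^ 2) l x w * w l = 2 * F x w ^ 2 := by
  have h1 : HasDerivAt (fun c : ℝ => F x (c • w) ^ 2)
      (fderiv ℝ (fun y => F x y ^ 2) w w) 1 :=
    hasDerivAt_along_ray (h.diffY hx hw).hasFDerivAt
  have h2 : HasDerivAt (fun c : ℝ => c ^ 2 * F x w ^ 2) (2 * F x w ^ 2) 1 := by
    have := (hasDerivAt_pow 2 (1:ℝ)).mul_const (F x w ^ 2)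
    simpa using this
  have heq : (fun c : ℝ => F x (c • w) ^ 2) = fun c : ℝ => c ^ 2 * F x w ^ 2 :=
    funext fun c => h.homog_sq hx c w
  rw [heq] at h1
  have hval : fderiv ℝ (fun y => F x y ^ 2) w w = 2 * F x w ^ 2 := h1.unique h2
  calc ∑ l, pdy (fun x' y' => F x' y' ^ 2) l x w * w l
      = ∑ l, w l * fderiv ℝ (fun y => F x y ^ 2) w (Pi.single l 1) := by
        refine Finset.sum_congr rfl fun l _ => ?_
        show fderiv ℝ (fun y' => F x y' ^ 2) w (Pi.single l 1) * w l = _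
        ring
    _ = fderiv ℝ (fun y => F x y ^ 2) w w := (clm_apply_eq_sum _ _).symm
    _ = 2 * F x w ^ 2 := hval

lemma IsFinslerMetric.fderiv_slice_smul (h : IsFinslerMetric U F) (hx : x ∈ U) (hw : w ≠ 0)
    {c : ℝ} (hc : 0 < c) :
    fderiv ℝ (fun y => F x y ^ 2) (c • w) = c • fderiv ℝ (fun y => F x y ^ 2) w := by
  have hcw : c • w ≠ 0 := smul_ne_zero hc.ne' hw
  have hsm : HasFDerivAt (fun y : ι → ℝ => c • y)
      (c • ContinuousLinearMap.id ℝ (ι → ℝ)) w :=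
    (c • ContinuousLinearMap.id ℝ (ι → ℝ)).hasFDerivAt
  have hd1 : HasFDerivAt (fun y : ι → ℝ => F x (c • y) ^ 2)
      ((fderiv ℝ (fun y => F x y ^ 2) (c • w)).comp
        (c • ContinuousLinearMap.id ℝ (ι → ℝ))) w := by
    have := (h.diffY hx hcw).hasFDerivAt.comp w hsm
    simpa [Function.comp_def] using this
  have hd2 : HasFDerivAt (fun y : ι → ℝ => c ^ 2 * F x y ^ 2)
      (c ^ 2 • fderiv ℝ (fun y => F x y ^ 2) w) w :=
    (h.diffY hx hw).hasFDerivAt.const_mul (c ^ 2)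
  have heq : (fun y : ι → ℝ => F x (c • y) ^ 2) = fun y : ι → ℝ => c ^ 2 * F x y ^ 2 :=
    funext fun y => h.homog_sq hx c y
  rw [heq] at hd1
  have hu := hd1.unique hd2
  ext v
  have h1 : fderiv ℝ (fun y => F x y ^ 2) (c • w) (c • v)
      = c ^ 2 * fderiv ℝ (fun y => F x y ^ 2) w v := by
    have := congrFun (congrArg DFunLike.coe hu) v
    simpa using this
  rw [_root_.map_smul, smul_eq_mul] at h1
  have h2 : c * fderiv ℝ (fun y => F x y ^ 2) (c • w) v
      = c * (c * fderiv ℝ (fun y => F x y ^ 2) w v) := by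
    rw [h1]; ring
  have h3 := mul_left_cancel₀ hc.ne' h2
  simpa [smul_eq_mul] using h3

lemma IsFinslerMetric.euler2 (h : IsFinslerMetric U F) (hx : x ∈ U) (hw : w ≠ 0) (β : ι) :
    ∑ l, pdy (pdy (fun x' y' => F x' y' ^ 2) β) l x w * w l
      = pdy (fun x' y' => F x' y' ^ 2) β x w := by
  set g : (ι → ℝ) → ℝ := fun y => fderiv ℝ (fun y' => F x y' ^ 2) y (Pi.single β 1) with hgdef
  have hgd := h.hasFDerivAt_pdyY hx hw β
  have h1 : HasDerivAt (fun c : ℝ => g (c • w))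
      (((fderiv ℝ (fderiv ℝ (fun y => F x y ^ 2)) w).flip (Pi.single β 1)) w) 1 :=
    hasDerivAt_along_ray hgd
  have hev : (fun c : ℝ => g (c • w)) =ᶠ[nhds (1:ℝ)] fun c : ℝ => c * g w := by
    filter_upwards [Ioi_mem_nhds (by norm_num : (0:ℝ) < 1)] with c hc
    have := h.fderiv_slice_smul hx hw (Set.mem_Ioi.mp hc)
    simp only [hgdef, this, ContinuousLinearMap.smul_apply, smul_eq_mul]
  have h2 : HasDerivAt (fun c : ℝ => c * g w) (g w) 1 := by
    simpa using (hasDerivAt_id (1:ℝ)).mul_const (g w)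
  have h2' : HasDerivAt (fun c : ℝ => g (c • w)) (g w) 1 := by
    exact h2.congr_of_eventuallyEq hev
  have hval := h1.unique h2'
  calc ∑ l, pdy (pdy (fun x' y' => F x' y' ^ 2) β) l x w * w l
      = ∑ l, w l * ((fderiv ℝ (fderiv ℝ (fun y => F x y ^ 2)) w).flip (Pi.single β 1))
          (Pi.single l 1) := by
        refine Finset.sum_congr rfl fun l _ => ?_
        have : pdy (pdy (fun x' y' => F x' y' ^ 2) β) l x w
            = ((fderiv ℝ (fderiv ℝ (fun y => F x y ^ 2)) w).flip (Pi.single β 1))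
              (Pi.single l 1) := by
          show fderiv ℝ g w (Pi.single l 1) = _
          rw [hgd.fderiv]
        rw [this]; ring
    _ = ((fderiv ℝ (fderiv ℝ (fun y => F x y ^ 2)) w).flip (Pi.single β 1)) w :=
        (clm_apply_eq_sum _ _).symm
    _ = g w := hval
    _ = pdy (fun x' y' => F x' y' ^ 2) β x w := rfl

end FinslerAux

section FinslerAux2

set_option linter.unusedSectionVars false
set_option maxHeartbeats 1000000

variable {ι : Type*} [Fintype ι] [DecidableEq ι]
variable {U : Set (ι → ℝ)} {F : (ι → ℝ) → (ι → ℝ) → ℝ}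
variable {x w : ι → ℝ}

lemma IsFinslerMetric.hasFDerivAt_sliceX (h : IsFinslerMetric U F) (hx : x ∈ U) (hw : w ≠ 0) :
    HasFDerivAt (fun x' => F x' w ^ 2)
      ((fderiv ℝ (fun p : (ι → ℝ) × (ι → ℝ) => (F p.1 p.2) ^ 2) (x, w)).comp
        ((ContinuousLinearMap.id ℝ (ι → ℝ)).prod (0 : (ι → ℝ) →L[ℝ] (ι → ℝ)))) x := by
  have hJ : HasFDerivAt (fun p : (ι → ℝ) × (ι → ℝ) => (F p.1 p.2) ^ 2)
      (fderiv ℝ (fun p : (ι → ℝ) × (ι → ℝ) => (F p.1 p.2) ^ 2) (x, w)) (x, w) :=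
    ((h.contDiffAt_joint hx hw).differentiableAt one_le_top').hasFDerivAt
  have hincl : HasFDerivAt (fun x' : ι → ℝ => ((x', w) : (ι → ℝ) × (ι → ℝ)))
      ((ContinuousLinearMap.id ℝ (ι → ℝ)).prod (0 : (ι → ℝ) →L[ℝ] (ι → ℝ))) x :=
    (hasFDerivAt_id x).prodMk (hasFDerivAt_const w x)
  exact hJ.comp x hincl

lemma IsFinslerMetric.diffX (h : IsFinslerMetric U F) (hx : x ∈ U) (hw : w ≠ 0) :
    DifferentiableAt ℝ (fun x' => F x' w ^ 2) x :=
  (h.hasFDerivAt_sliceX hx hw).differentiableAt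

lemma IsFinslerMetric.pdy_eq_joint (h : IsFinslerMetric U F) (hx : x ∈ U) (hw : w ≠ 0) (β : ι) :
    pdy (fun x' y' => F x' y' ^ 2) β x w
      = fderiv ℝ (fun p : (ι → ℝ) × (ι → ℝ) => (F p.1 p.2) ^ 2) (x, w) (0, Pi.single β 1) := by
  have hJ : HasFDerivAt (fun p : (ι → ℝ) × (ι → ℝ) => (F p.1 p.2) ^ 2)
      (fderiv ℝ (fun p : (ι → ℝ) × (ι → ℝ) => (F p.1 p.2) ^ 2) (x, w)) (x, w) :=
    ((h.contDiffAt_joint hx hw).differentiableAt one_le_top').hasFDerivAt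
  have hincl : HasFDerivAt (fun y : ι → ℝ => ((x, y) : (ι → ℝ) × (ι → ℝ)))
      ((0 : (ι → ℝ) →L[ℝ] (ι → ℝ)).prod (ContinuousLinearMap.id ℝ (ι → ℝ))) w :=
    (hasFDerivAt_const x w).prodMk (hasFDerivAt_id w)
  have hcomp := hJ.comp w hincl
  have hcomp' : HasFDerivAt (fun y : ι → ℝ => F x y ^ 2)
      ((fderiv ℝ (fun p : (ι → ℝ) × (ι → ℝ) => (F p.1 p.2) ^ 2) (x, w)).comp
        ((0 : (ι → ℝ) →L[ℝ] (ι → ℝ)).prod (ContinuousLinearMap.id ℝ (ι → ℝ)))) w := hcomp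
  show fderiv ℝ (fun y => F x y ^ 2) w (Pi.single β 1) = _
  rw [hcomp'.fderiv]
  simp

lemma IsFinslerMetric.contDiffOn_fderiv_joint (h : IsFinslerMetric U F) :
    ContDiffOn ℝ ((⊤:ℕ∞) : WithTop ℕ∞)
      (fderiv ℝ (fun p : (ι → ℝ) × (ι → ℝ) => (F p.1 p.2) ^ 2)) (U ×ˢ {y : ι → ℝ | y ≠ 0}) :=
  h.smooth.fderiv_of_isOpen (h.isOpen.prod isOpen_slit) top_add_one_le

lemma IsFinslerMetric.diffX_pdy (h : IsFinslerMetric U F) (hx : x ∈ U) (hw : w ≠ 0) (β : ι) :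
    DifferentiableAt ℝ (fun x' => pdy (fun a b => F a b ^ 2) β x' w) x := by
  have hev : (fun x' => pdy (fun a b => F a b ^ 2) β x' w)
      =ᶠ[nhds x] (fun x' => fderiv ℝ (fun p : (ι → ℝ) × (ι → ℝ) => (F p.1 p.2) ^ 2) (x', w)
        (0, Pi.single β 1)) := by
    filter_upwards [h.isOpen.mem_nhds hx] with x' hx'
    exact h.pdy_eq_joint hx' hw β
  rw [hev.differentiableAt_iff]
  have h1 : ContDiffAt ℝ ((⊤:ℕ∞) : WithTop ℕ∞)
      (fun x' : ι → ℝ => fderiv ℝ (fun p : (ι → ℝ) × (ι → ℝ) => (F p.1 p.2) ^ 2) (x', w)) x :=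
    ((h.contDiffOn_fderiv_joint).contDiffAt
      ((h.isOpen.prod isOpen_slit).mem_nhds (Set.mk_mem_prod hx hw))).comp x
      (contDiffAt_id.prodMk contDiffAt_const)
  exact (h1.differentiableAt one_le_top').clm_apply (differentiableAt_const _)

lemma IsFinslerMetric.euler3 (h : IsFinslerMetric U F) (hx : x ∈ U) (hw : w ≠ 0) (γ : ι) :
    ∑ l, pdx (pdy (fun x' y' => F x' y' ^ 2) l) γ x w * w l
      = 2 * pdx (fun x' y' => F x' y' ^ 2) γ x w := by
  have hdl : ∀ l : ι, DifferentiableAt ℝ (fun x' => pdy (fun a b => F a b ^ 2) l x' w) x :=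
    fun l => h.diffX_pdy hx hw l
  have hL : HasFDerivAt (fun x' => ∑ l, pdy (fun a b => F a b ^ 2) l x' w * w l)
      (∑ l, w l • fderiv ℝ (fun x' => pdy (fun a b => F a b ^ 2) l x' w) x) x := by
    refine HasFDerivAt.fun_sum fun l _ => ?_
    have := ((hdl l).hasFDerivAt).mul_const (w l)
    simpa [smul_smul, mul_comm] using this
  have hR : HasFDerivAt (fun x' => 2 * F x' w ^ 2)
      ((2:ℝ) • fderiv ℝ (fun x' => F x' w ^ 2) x) x :=
    ((h.diffX hx hw).hasFDerivAt).const_mul 2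
  have hev : (fun x' => ∑ l, pdy (fun a b => F a b ^ 2) l x' w * w l)
      =ᶠ[nhds x] (fun x' => 2 * F x' w ^ 2) := by
    filter_upwards [h.isOpen.mem_nhds hx] with x' hx'
    exact h.euler1 hx' hw
  have hL' : HasFDerivAt (fun x' => 2 * F x' w ^ 2)
      (∑ l, w l • fderiv ℝ (fun x' => pdy (fun a b => F a b ^ 2) l x' w) x) x :=
    hL.congr_of_eventuallyEq hev.symm
  have hu := hL'.unique hR
  have happ := congrFun (congrArg DFunLike.coe hu) (Pi.single γ 1)
  simp only [ContinuousLinearMap.coe_sum', Finset.sum_apply,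
    ContinuousLinearMap.coe_smul', Pi.smul_apply, smul_eq_mul] at happ
  calc ∑ l, pdx (pdy (fun x' y' => F x' y' ^ 2) l) γ x w * w l
      = ∑ l, w l * fderiv ℝ (fun x' => pdy (fun a b => F a b ^ 2) l x' w) x (Pi.single γ 1) := by
        refine Finset.sum_congr rfl fun l _ => ?_
        show fderiv ℝ (fun x' => pdy (fun a b => F a b ^ 2) l x' w) x (Pi.single γ 1) * w l = _
        ring
    _ = 2 * fderiv ℝ (fun x' => F x' w ^ 2) x (Pi.single γ 1) := happ
    _ = 2 * pdx (fun x' y' => F x' y' ^ 2) γ x w := rfl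

end FinslerAux2

section FinslerAux3

set_option linter.unusedSectionVars false
set_option maxHeartbeats 1000000

variable {ι : Type*} [Fintype ι] [DecidableEq ι]
variable {U : Set (ι → ℝ)} {F : (ι → ℝ) → (ι → ℝ) → ℝ}
variable {x w : ι → ℝ}

lemma IsFinslerMetric.contract1 (h : IsFinslerMetric U F) (hx : x ∈ U) (hw : w ≠ 0) (i : ι) :
    ∑ j, fundTensor F x w i j * spray F j x w
      = (1/2) * ((∑ q, pdx (pdy (fun a b => F a b ^ 2) i) q x w * w q)
          - pdx (fun a b => F a b ^ 2) i x w) := by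
  set D : ι → ℝ := fun β => (∑ γ, pdx (pdy (fun a b => F a b ^ 2) β) γ x w * w γ)
      - pdx (fun a b => F a b ^ 2) β x w with hD
  have hdet : IsUnit (fundTensor F x w).det :=
    isUnit_iff_ne_zero.mpr (h.posDef x hx w hw).det_pos.ne'
  have hsp : ∀ j, spray F j x w = (1/2) * ((fundTensor F x w)⁻¹ *ᵥ D) j := by
    intro j
    show (1/2) * ∑ β, (fundTensor F x w)⁻¹ j β * D β = _
    rw [Matrix.mulVec, dotProduct]
  calc ∑ j, fundTensor F x w i j * spray F j x w
      = (1/2) * ∑ j, fundTensor F x w i j * ((fundTensor F x w)⁻¹ *ᵥ D) j := by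
        rw [Finset.mul_sum]
        refine Finset.sum_congr rfl fun j _ => ?_
        rw [hsp j]; ring
    _ = (1/2) * ((fundTensor F x w) *ᵥ ((fundTensor F x w)⁻¹ *ᵥ D)) i := by
        rw [Matrix.mulVec, dotProduct]
    _ = (1/2) * D i := by
        rw [Matrix.mulVec_mulVec, Matrix.mul_nonsing_inv _ hdet, Matrix.one_mulVec]

lemma IsFinslerMetric.contract2 (h : IsFinslerMetric U F) (hx : x ∈ U) (hw : w ≠ 0) :
    ∑ j, pdy (fun a b => F a b ^ 2) j x w * spray F j x w
      = (1/2) * ∑ q, pdx (fun a b => F a b ^ 2) q x w * w q := by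
  have h1 : ∀ j : ι, pdy (fun a b => F a b ^ 2) j x w
      = ∑ l, fundTensor F x w l j * w l := by
    intro j
    rw [← h.euler2 hx hw j]
    rfl
  calc ∑ j, pdy (fun a b => F a b ^ 2) j x w * spray F j x w
      = ∑ j, ∑ l, w l * (fundTensor F x w l j * spray F j x w) := by
        refine Finset.sum_congr rfl fun j _ => ?_
        rw [h1 j, Finset.sum_mul]
        exact Finset.sum_congr rfl fun l _ => by ring
    _ = ∑ l, w l * ∑ j, fundTensor F x w l j * spray F j x w := by
        rw [Finset.sum_comm]
        exact Finset.sum_congr rfl fun l _ => by rw [Finset.mul_sum]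
    _ = ∑ l, w l * ((1/2) * ((∑ q, pdx (pdy (fun a b => F a b ^ 2) l) q x w * w q)
          - pdx (fun a b => F a b ^ 2) l x w)) :=
        Finset.sum_congr rfl fun l _ => by rw [h.contract1 hx hw l]
    _ = (1/2) * ∑ l, (w l * ∑ q, pdx (pdy (fun a b => F a b ^ 2) l) q x w * w q
          - w l * pdx (fun a b => F a b ^ 2) l x w) := by
        rw [Finset.mul_sum]
        exact Finset.sum_congr rfl fun l _ => by ring
    _ = (1/2) * ((∑ l, w l * ∑ q, pdx (pdy (fun a b => F a b ^ 2) l) q x w * w q)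
          - ∑ l, w l * pdx (fun a b => F a b ^ 2) l x w) := by
        rw [Finset.sum_sub_distrib]
    _ = (1/2) * ((2 * ∑ q, pdx (fun a b => F a b ^ 2) q x w * w q)
          - ∑ l, w l * pdx (fun a b => F a b ^ 2) l x w) := by
        have h2 : (∑ l, w l * ∑ q, pdx (pdy (fun a b => F a b ^ 2) l) q x w * w q)
            = 2 * ∑ q, pdx (fun a b => F a b ^ 2) q x w * w q := by
          have h3 : ∀ l : ι, w l * ∑ q, pdx (pdy (fun a b => F a b ^ 2) l) q x w * w q
              = ∑ q, (pdx (pdy (fun a b => F a b ^ 2) l) q x w * w l) * w q := by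
            intro l
            rw [Finset.mul_sum]
            exact Finset.sum_congr rfl fun q _ => by ring
          calc (∑ l, w l * ∑ q, pdx (pdy (fun a b => F a b ^ 2) l) q x w * w q)
              = ∑ l, ∑ q, (pdx (pdy (fun a b => F a b ^ 2) l) q x w * w l) * w q :=
                Finset.sum_congr rfl fun l _ => h3 l
            _ = ∑ q, (∑ l, pdx (pdy (fun a b => F a b ^ 2) l) q x w * w l) * w q := by
                rw [Finset.sum_comm]
                exact Finset.sum_congr rfl fun q _ => by rw [Finset.sum_mul]
            _ = ∑ q, (2 * pdx (fun a b => F a b ^ 2) q x w) * w q :=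
                Finset.sum_congr rfl fun q _ => by rw [h.euler3 hx hw q]
            _ = 2 * ∑ q, pdx (fun a b => F a b ^ 2) q x w * w q := by
                rw [Finset.mul_sum]
                exact Finset.sum_congr rfl fun q _ => by ring
        rw [h2]
    _ = (1/2) * ∑ q, pdx (fun a b => F a b ^ 2) q x w * w q := by
        have : (∑ l, w l * pdx (fun a b => F a b ^ 2) l x w)
            = ∑ q, pdx (fun a b => F a b ^ 2) q x w * w q :=
          Finset.sum_congr rfl fun l _ => by ring
        rw [this]
        ring

end FinslerAux3

section ProductAux

set_option linter.unusedSectionVars false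
set_option maxHeartbeats 1000000

open ContinuousLinearMap in
noncomputable def prL (m n : ℕ) : ((Fin m ⊕ Fin n) → ℝ) →L[ℝ] (Fin m → ℝ) :=
  ContinuousLinearMap.pi fun i => ContinuousLinearMap.proj (Sum.inl i)

open ContinuousLinearMap in
noncomputable def prR (m n : ℕ) : ((Fin m ⊕ Fin n) → ℝ) →L[ℝ] (Fin n → ℝ) :=
  ContinuousLinearMap.pi fun i => ContinuousLinearMap.proj (Sum.inr i)

variable {m n : ℕ}

lemma prL_apply (w : Fin m ⊕ Fin n → ℝ) : prL m n w = w ∘ Sum.inl := rfl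
lemma prR_apply (w : Fin m ⊕ Fin n → ℝ) : prR m n w = w ∘ Sum.inr := rfl

lemma prL_single_inl (j : Fin m) :
    prL m n (Pi.single (Sum.inl j) (1:ℝ)) = Pi.single j 1 := by
  funext i
  simp only [prL, ContinuousLinearMap.pi_apply, ContinuousLinearMap.proj_apply]
  by_cases hij : i = j
  · subst hij; simp
  · rw [Pi.single_apply, Pi.single_apply, if_neg (by simpa using hij), if_neg hij]

lemma prL_single_inr (j : Fin n) :
    prL m n (Pi.single (Sum.inr j) (1:ℝ)) = 0 := by
  funext i
  simp only [prL, ContinuousLinearMap.pi_apply, ContinuousLinearMap.proj_apply]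
  rw [Pi.single_apply, if_neg (by simp)]
  rfl

lemma prR_single_inr (j : Fin n) :
    prR m n (Pi.single (Sum.inr j) (1:ℝ)) = Pi.single j 1 := by
  funext i
  simp only [prR, ContinuousLinearMap.pi_apply, ContinuousLinearMap.proj_apply]
  by_cases hij : i = j
  · subst hij; simp
  · rw [Pi.single_apply, Pi.single_apply, if_neg (by simpa using hij), if_neg hij]

lemma prR_single_inl (j : Fin m) :
    prR m n (Pi.single (Sum.inl j) (1:ℝ)) = 0 := by
  funext i
  simp only [prR, ContinuousLinearMap.pi_apply, ContinuousLinearMap.proj_apply]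
  rw [Pi.single_apply, if_neg (by simp)]
  rfl

variable {U₁ : Set (Fin m → ℝ)} {U₂ : Set (Fin n → ℝ)}
variable {F₁ : (Fin m → ℝ) → (Fin m → ℝ) → ℝ} {F₂ : (Fin n → ℝ) → (Fin n → ℝ) → ℝ}
variable {f : ℝ → ℝ → ℝ} {F : (Fin m ⊕ Fin n → ℝ) → (Fin m ⊕ Fin n → ℝ) → ℝ}
variable {x w : Fin m ⊕ Fin n → ℝ}

lemma IsMinkowskianProduct.G_eq (hprod : IsMinkowskianProduct U₁ U₂ F₁ F₂ f F)
    (x w : Fin m ⊕ Fin n → ℝ) :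
    F x w ^ 2 = f ((F₁ (x ∘ Sum.inl) (w ∘ Sum.inl)) ^ 2)
      ((F₂ (x ∘ Sum.inr) (w ∘ Sum.inr)) ^ 2) := by
  rw [hprod.F_def x w]
  exact Real.sq_sqrt (hprod.f_nonneg _ (Set.mem_Ici.mpr (sq_nonneg _)) _ (Set.mem_Ici.mpr (sq_nonneg _)))

lemma IsMinkowskianProduct.phi_contDiffAt (hprod : IsMinkowskianProduct U₁ U₂ F₁ F₂ f F)
    {s t : ℝ} (hs : 0 < s) (ht : 0 < t) :
    ContDiffAt ℝ ((⊤:ℕ∞) : WithTop ℕ∞) (fun p : ℝ × ℝ => f p.1 p.2) (s, t) :=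
  hprod.f_smooth.contDiffAt ((isOpen_Ioi.prod isOpen_Ioi).mem_nhds (Set.mk_mem_prod hs ht))

lemma IsMinkowskianProduct.phi_hasFDerivAt (hprod : IsMinkowskianProduct U₁ U₂ F₁ F₂ f F)
    {s t : ℝ} (hs : 0 < s) (ht : 0 < t) :
    HasFDerivAt (fun p : ℝ × ℝ => f p.1 p.2)
      (fderiv ℝ (fun p : ℝ × ℝ => f p.1 p.2) (s, t)) (s, t) :=
  ((hprod.phi_contDiffAt hs ht).differentiableAt one_le_top').hasFDerivAt

lemma IsMinkowskianProduct.phi_fderiv_hasFDerivAt (hprod : IsMinkowskianProduct U₁ U₂ F₁ F₂ f F)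
    {s t : ℝ} (hs : 0 < s) (ht : 0 < t) :
    HasFDerivAt (fderiv ℝ (fun p : ℝ × ℝ => f p.1 p.2))
      (fderiv ℝ (fderiv ℝ (fun p : ℝ × ℝ => f p.1 p.2)) (s, t)) (s, t) := by
  have h1 : ContDiffOn ℝ ((⊤:ℕ∞) : WithTop ℕ∞)
      (fderiv ℝ (fun p : ℝ × ℝ => f p.1 p.2)) (Set.Ioi 0 ×ˢ Set.Ioi 0) :=
    hprod.f_smooth.fderiv_of_isOpen (isOpen_Ioi.prod isOpen_Ioi) top_add_one_le
  exact (((h1.differentiableOn one_le_top').differentiableAt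
    ((isOpen_Ioi.prod isOpen_Ioi).mem_nhds (Set.mk_mem_prod hs ht)))).hasFDerivAt

end ProductAux

section ProductAux2

set_option linter.unusedSectionVars false
set_option maxHeartbeats 1000000

variable {m n : ℕ}
variable {U₁ : Set (Fin m → ℝ)} {U₂ : Set (Fin n → ℝ)}
variable {F₁ : (Fin m → ℝ) → (Fin m → ℝ) → ℝ} {F₂ : (Fin n → ℝ) → (Fin n → ℝ) → ℝ}
variable {f : ℝ → ℝ → ℝ} {F : (Fin m ⊕ Fin n → ℝ) → (Fin m ⊕ Fin n → ℝ) → ℝ}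
variable {x w : Fin m ⊕ Fin n → ℝ}

lemma IsMinkowskianProduct.s_pos (hprod : IsMinkowskianProduct U₁ U₂ F₁ F₂ f F)
    (hx1 : x ∘ Sum.inl ∈ U₁) (hw1 : w ∘ Sum.inl ≠ 0) :
    0 < (F₁ (x ∘ Sum.inl) (w ∘ Sum.inl)) ^ 2 :=
  pow_pos (hprod.finsler₁.pos _ hx1 _ hw1) 2

lemma IsMinkowskianProduct.t_pos (hprod : IsMinkowskianProduct U₁ U₂ F₁ F₂ f F)
    (hx2 : x ∘ Sum.inr ∈ U₂) (hw2 : w ∘ Sum.inr ≠ 0) :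
    0 < (F₂ (x ∘ Sum.inr) (w ∘ Sum.inr)) ^ 2 :=
  pow_pos (hprod.finsler₂.pos _ hx2 _ hw2) 2

lemma IsMinkowskianProduct.hasFDerivAt_pairY (hprod : IsMinkowskianProduct U₁ U₂ F₁ F₂ f F)
    (hx1 : x ∘ Sum.inl ∈ U₁) (hx2 : x ∘ Sum.inr ∈ U₂)
    (hw1 : w ∘ Sum.inl ≠ 0) (hw2 : w ∘ Sum.inr ≠ 0) :
    HasFDerivAt (fun w' => ((F₁ (x ∘ Sum.inl) (prL m n w')) ^ 2,
        (F₂ (x ∘ Sum.inr) (prR m n w')) ^ 2))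
      (((fderiv ℝ (fun b => F₁ (x ∘ Sum.inl) b ^ 2) (w ∘ Sum.inl)).comp (prL m n)).prod
        ((fderiv ℝ (fun b => F₂ (x ∘ Sum.inr) b ^ 2) (w ∘ Sum.inr)).comp (prR m n))) w :=
  by
    have h1 := (hprod.finsler₁.diffY hx1 hw1).hasFDerivAt.comp w (prL m n).hasFDerivAt
    have h2 := (hprod.finsler₂.diffY hx2 hw2).hasFDerivAt.comp w (prR m n).hasFDerivAt
    exact h1.prodMk h2

lemma IsMinkowskianProduct.hasFDerivAt_Gy (hprod : IsMinkowskianProduct U₁ U₂ F₁ F₂ f F)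
    (hx1 : x ∘ Sum.inl ∈ U₁) (hx2 : x ∘ Sum.inr ∈ U₂)
    (hw1 : w ∘ Sum.inl ≠ 0) (hw2 : w ∘ Sum.inr ≠ 0) :
    HasFDerivAt (fun w' => F x w' ^ 2)
      ((fderiv ℝ (fun p : ℝ × ℝ => f p.1 p.2)
          ((F₁ (x ∘ Sum.inl) (w ∘ Sum.inl)) ^ 2, (F₂ (x ∘ Sum.inr) (w ∘ Sum.inr)) ^ 2)).comp
        ((((fderiv ℝ (fun b => F₁ (x ∘ Sum.inl) b ^ 2) (w ∘ Sum.inl)).comp (prL m n)).prod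
          ((fderiv ℝ (fun b => F₂ (x ∘ Sum.inr) b ^ 2) (w ∘ Sum.inr)).comp (prR m n))))) w := by
  have h1 := (hprod.phi_hasFDerivAt (hprod.s_pos hx1 hw1) (hprod.t_pos hx2 hw2)).comp w
    (hprod.hasFDerivAt_pairY hx1 hx2 hw1 hw2)
  have heq : (fun w' => F x w' ^ 2)
      = (fun p : ℝ × ℝ => f p.1 p.2) ∘ (fun w' => ((F₁ (x ∘ Sum.inl) (prL m n w')) ^ 2,
          (F₂ (x ∘ Sum.inr) (prR m n w')) ^ 2)) := by
    funext w'
    exact hprod.G_eq x w'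
  rw [heq]
  exact h1

lemma IsMinkowskianProduct.pdy_G_inl (hprod : IsMinkowskianProduct U₁ U₂ F₁ F₂ f F)
    (hx1 : x ∘ Sum.inl ∈ U₁) (hx2 : x ∘ Sum.inr ∈ U₂)
    (hw1 : w ∘ Sum.inl ≠ 0) (hw2 : w ∘ Sum.inr ≠ 0) (j : Fin m) :
    pdy (fun a b => F a b ^ 2) (Sum.inl j) x w
      = fderiv ℝ (fun p : ℝ × ℝ => f p.1 p.2)
          ((F₁ (x ∘ Sum.inl) (w ∘ Sum.inl)) ^ 2, (F₂ (x ∘ Sum.inr) (w ∘ Sum.inr)) ^ 2) (1, 0)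
        * pdy (fun a b => F₁ a b ^ 2) j (x ∘ Sum.inl) (w ∘ Sum.inl) := by
  show fderiv ℝ (fun w' => F x w' ^ 2) w (Pi.single (Sum.inl j) 1) = _
  rw [(hprod.hasFDerivAt_Gy hx1 hx2 hw1 hw2).fderiv]
  rw [ContinuousLinearMap.comp_apply, ContinuousLinearMap.prod_apply,
    ContinuousLinearMap.comp_apply, ContinuousLinearMap.comp_apply,
    prL_single_inl, prR_single_inl, map_zero, clm2_apply]
  show fderiv ℝ (fun b => F₁ (x ∘ Sum.inl) b ^ 2) (w ∘ Sum.inl) (Pi.single j 1) * _ + 0 * _ = _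
  rw [zero_mul, add_zero, mul_comm]
  rfl

lemma IsMinkowskianProduct.pdy_G_inr (hprod : IsMinkowskianProduct U₁ U₂ F₁ F₂ f F)
    (hx1 : x ∘ Sum.inl ∈ U₁) (hx2 : x ∘ Sum.inr ∈ U₂)
    (hw1 : w ∘ Sum.inl ≠ 0) (hw2 : w ∘ Sum.inr ≠ 0) (j : Fin n) :
    pdy (fun a b => F a b ^ 2) (Sum.inr j) x w
      = fderiv ℝ (fun p : ℝ × ℝ => f p.1 p.2)
          ((F₁ (x ∘ Sum.inl) (w ∘ Sum.inl)) ^ 2, (F₂ (x ∘ Sum.inr) (w ∘ Sum.inr)) ^ 2) (0, 1)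
        * pdy (fun a b => F₂ a b ^ 2) j (x ∘ Sum.inr) (w ∘ Sum.inr) := by
  show fderiv ℝ (fun w' => F x w' ^ 2) w (Pi.single (Sum.inr j) 1) = _
  rw [(hprod.hasFDerivAt_Gy hx1 hx2 hw1 hw2).fderiv]
  rw [ContinuousLinearMap.comp_apply, ContinuousLinearMap.prod_apply,
    ContinuousLinearMap.comp_apply, ContinuousLinearMap.comp_apply,
    prL_single_inr, prR_single_inr, map_zero, clm2_apply]
  show 0 * _ + fderiv ℝ (fun b => F₂ (x ∘ Sum.inr) b ^ 2) (w ∘ Sum.inr) (Pi.single j 1) * _ = _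
  rw [zero_mul, zero_add, mul_comm]
  rfl

lemma IsMinkowskianProduct.hasFDerivAt_Gx (hprod : IsMinkowskianProduct U₁ U₂ F₁ F₂ f F)
    (hx1 : x ∘ Sum.inl ∈ U₁) (hx2 : x ∘ Sum.inr ∈ U₂)
    (hw1 : w ∘ Sum.inl ≠ 0) (hw2 : w ∘ Sum.inr ≠ 0) :
    HasFDerivAt (fun x' => F x' w ^ 2)
      ((fderiv ℝ (fun p : ℝ × ℝ => f p.1 p.2)
          ((F₁ (x ∘ Sum.inl) (w ∘ Sum.inl)) ^ 2, (F₂ (x ∘ Sum.inr) (w ∘ Sum.inr)) ^ 2)).comp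
        ((((fderiv ℝ (fun a => F₁ a (w ∘ Sum.inl) ^ 2) (x ∘ Sum.inl)).comp (prL m n)).prod
          ((fderiv ℝ (fun a => F₂ a (w ∘ Sum.inr) ^ 2) (x ∘ Sum.inr)).comp (prR m n))))) x := by
  have hpair : HasFDerivAt (fun x' => ((F₁ (prL m n x') (w ∘ Sum.inl)) ^ 2,
        (F₂ (prR m n x') (w ∘ Sum.inr)) ^ 2))
      (((fderiv ℝ (fun a => F₁ a (w ∘ Sum.inl) ^ 2) (x ∘ Sum.inl)).comp (prL m n)).prod
        ((fderiv ℝ (fun a => F₂ a (w ∘ Sum.inr) ^ 2) (x ∘ Sum.inr)).comp (prR m n))) x :=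
    by
      have h1 := (hprod.finsler₁.diffX hx1 hw1).hasFDerivAt.comp x (prL m n).hasFDerivAt
      have h2 := (hprod.finsler₂.diffX hx2 hw2).hasFDerivAt.comp x (prR m n).hasFDerivAt
      exact h1.prodMk h2
  have h1 := (hprod.phi_hasFDerivAt (hprod.s_pos hx1 hw1) (hprod.t_pos hx2 hw2)).comp x hpair
  have heq : (fun x' => F x' w ^ 2)
      = (fun p : ℝ × ℝ => f p.1 p.2) ∘ (fun x' => ((F₁ (prL m n x') (w ∘ Sum.inl)) ^ 2,
          (F₂ (prR m n x') (w ∘ Sum.inr)) ^ 2)) := by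
    funext x'
    exact hprod.G_eq x' w
  rw [heq]
  exact h1

lemma IsMinkowskianProduct.pdx_G_inl (hprod : IsMinkowskianProduct U₁ U₂ F₁ F₂ f F)
    (hx1 : x ∘ Sum.inl ∈ U₁) (hx2 : x ∘ Sum.inr ∈ U₂)
    (hw1 : w ∘ Sum.inl ≠ 0) (hw2 : w ∘ Sum.inr ≠ 0) (j : Fin m) :
    pdx (fun a b => F a b ^ 2) (Sum.inl j) x w
      = fderiv ℝ (fun p : ℝ × ℝ => f p.1 p.2)
          ((F₁ (x ∘ Sum.inl) (w ∘ Sum.inl)) ^ 2, (F₂ (x ∘ Sum.inr) (w ∘ Sum.inr)) ^ 2) (1, 0)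
        * pdx (fun a b => F₁ a b ^ 2) j (x ∘ Sum.inl) (w ∘ Sum.inl) := by
  show fderiv ℝ (fun x' => F x' w ^ 2) x (Pi.single (Sum.inl j) 1) = _
  rw [(hprod.hasFDerivAt_Gx hx1 hx2 hw1 hw2).fderiv]
  rw [ContinuousLinearMap.comp_apply, ContinuousLinearMap.prod_apply,
    ContinuousLinearMap.comp_apply, ContinuousLinearMap.comp_apply,
    prL_single_inl, prR_single_inl, map_zero, clm2_apply]
  show fderiv ℝ (fun a => F₁ a (w ∘ Sum.inl) ^ 2) (x ∘ Sum.inl) (Pi.single j 1) * _ + 0 * _ = _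
  rw [zero_mul, add_zero, mul_comm]
  rfl

lemma IsMinkowskianProduct.pdx_G_inr (hprod : IsMinkowskianProduct U₁ U₂ F₁ F₂ f F)
    (hx1 : x ∘ Sum.inl ∈ U₁) (hx2 : x ∘ Sum.inr ∈ U₂)
    (hw1 : w ∘ Sum.inl ≠ 0) (hw2 : w ∘ Sum.inr ≠ 0) (j : Fin n) :
    pdx (fun a b => F a b ^ 2) (Sum.inr j) x w
      = fderiv ℝ (fun p : ℝ × ℝ => f p.1 p.2)
          ((F₁ (x ∘ Sum.inl) (w ∘ Sum.inl)) ^ 2, (F₂ (x ∘ Sum.inr) (w ∘ Sum.inr)) ^ 2) (0, 1)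
        * pdx (fun a b => F₂ a b ^ 2) j (x ∘ Sum.inr) (w ∘ Sum.inr) := by
  show fderiv ℝ (fun x' => F x' w ^ 2) x (Pi.single (Sum.inr j) 1) = _
  rw [(hprod.hasFDerivAt_Gx hx1 hx2 hw1 hw2).fderiv]
  rw [ContinuousLinearMap.comp_apply, ContinuousLinearMap.prod_apply,
    ContinuousLinearMap.comp_apply, ContinuousLinearMap.comp_apply,
    prL_single_inr, prR_single_inr, map_zero, clm2_apply]
  show 0 * _ + fderiv ℝ (fun a => F₂ a (w ∘ Sum.inr) ^ 2) (x ∘ Sum.inr) (Pi.single j 1) * _ = _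
  rw [zero_mul, zero_add, mul_comm]
  rfl

end ProductAux2

section ProductAux3

set_option linter.unusedSectionVars false
set_option maxHeartbeats 1000000

variable {m n : ℕ}
variable {U₁ : Set (Fin m → ℝ)} {U₂ : Set (Fin n → ℝ)}
variable {F₁ : (Fin m → ℝ) → (Fin m → ℝ) → ℝ} {F₂ : (Fin n → ℝ) → (Fin n → ℝ) → ℝ}
variable {f : ℝ → ℝ → ℝ} {F : (Fin m ⊕ Fin n → ℝ) → (Fin m ⊕ Fin n → ℝ) → ℝ}
variable {x w : Fin m ⊕ Fin n → ℝ}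

lemma clm2_apply₂ (L : (ℝ × ℝ) →L[ℝ] (ℝ × ℝ) →L[ℝ] ℝ) (a b : ℝ) (v : ℝ × ℝ) :
    L (a, b) v = a * L (1, 0) v + b * L (0, 1) v := by
  have h : (a, b) = a • ((1:ℝ), (0:ℝ)) + b • ((0:ℝ), (1:ℝ)) := by
    simp [Prod.ext_iff]
  rw [h, map_add, _root_.map_smul, _root_.map_smul]
  simp

lemma isOpen_Omega :
    IsOpen {w' : Fin m ⊕ Fin n → ℝ | w' ∘ Sum.inl ≠ 0 ∧ w' ∘ Sum.inr ≠ 0} := by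
  have h1 : {w' : Fin m ⊕ Fin n → ℝ | w' ∘ Sum.inl ≠ 0 ∧ w' ∘ Sum.inr ≠ 0}
      = (prL m n) ⁻¹' {y | y ≠ 0} ∩ (prR m n) ⁻¹' {y | y ≠ 0} := rfl
  rw [h1]
  exact (isOpen_slit.preimage (prL m n).continuous).inter
    (isOpen_slit.preimage (prR m n).continuous)

lemma IsMinkowskianProduct.hasFDerivAt_coefY (hprod : IsMinkowskianProduct U₁ U₂ F₁ F₂ f F)
    (hx1 : x ∘ Sum.inl ∈ U₁) (hx2 : x ∘ Sum.inr ∈ U₂)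
    (hw1 : w ∘ Sum.inl ≠ 0) (hw2 : w ∘ Sum.inr ≠ 0) (v : ℝ × ℝ) :
    HasFDerivAt (fun w' => fderiv ℝ (fun p : ℝ × ℝ => f p.1 p.2)
        ((F₁ (x ∘ Sum.inl) (prL m n w')) ^ 2, (F₂ (x ∘ Sum.inr) (prR m n w')) ^ 2) v)
      (((fderiv ℝ (fderiv ℝ (fun p : ℝ × ℝ => f p.1 p.2))
          ((F₁ (x ∘ Sum.inl) (w ∘ Sum.inl)) ^ 2, (F₂ (x ∘ Sum.inr) (w ∘ Sum.inr)) ^ 2)).flip v).comp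
        (((fderiv ℝ (fun b => F₁ (x ∘ Sum.inl) b ^ 2) (w ∘ Sum.inl)).comp (prL m n)).prod
          ((fderiv ℝ (fun b => F₂ (x ∘ Sum.inr) b ^ 2) (w ∘ Sum.inr)).comp (prR m n)))) w := by
  have h0 : HasFDerivAt (fun p : ℝ × ℝ => fderiv ℝ (fun q : ℝ × ℝ => f q.1 q.2) p v)
      ((fderiv ℝ (fderiv ℝ (fun p : ℝ × ℝ => f p.1 p.2))
        ((F₁ (x ∘ Sum.inl) (w ∘ Sum.inl)) ^ 2, (F₂ (x ∘ Sum.inr) (w ∘ Sum.inr)) ^ 2)).flip v)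
      ((F₁ (x ∘ Sum.inl) (w ∘ Sum.inl)) ^ 2, (F₂ (x ∘ Sum.inr) (w ∘ Sum.inr)) ^ 2) := by
    have := (hprod.phi_fderiv_hasFDerivAt (hprod.s_pos hx1 hw1)
      (hprod.t_pos hx2 hw2)).clm_apply (hasFDerivAt_const v _)
    simpa using this
  exact h0.comp w (hprod.hasFDerivAt_pairY hx1 hx2 hw1 hw2)

lemma IsMinkowskianProduct.fderiv_pdyG_inl (hprod : IsMinkowskianProduct U₁ U₂ F₁ F₂ f F)
    (hx1 : x ∘ Sum.inl ∈ U₁) (hx2 : x ∘ Sum.inr ∈ U₂)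
    (hw1 : w ∘ Sum.inl ≠ 0) (hw2 : w ∘ Sum.inr ≠ 0) (j : Fin m) :
    fderiv ℝ (fun w' => pdy (fun a b => F a b ^ 2) (Sum.inl j) x w') w
      = fderiv ℝ (fun p : ℝ × ℝ => f p.1 p.2)
          ((F₁ (x ∘ Sum.inl) (w ∘ Sum.inl)) ^ 2, (F₂ (x ∘ Sum.inr) (w ∘ Sum.inr)) ^ 2) (1, 0)
          • (((fderiv ℝ (fderiv ℝ (fun b => F₁ (x ∘ Sum.inl) b ^ 2)) (w ∘ Sum.inl)).flip
              (Pi.single j 1)).comp (prL m n))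
        + pdy (fun a b => F₁ a b ^ 2) j (x ∘ Sum.inl) (w ∘ Sum.inl)
          • (((fderiv ℝ (fderiv ℝ (fun p : ℝ × ℝ => f p.1 p.2))
              ((F₁ (x ∘ Sum.inl) (w ∘ Sum.inl)) ^ 2,
                (F₂ (x ∘ Sum.inr) (w ∘ Sum.inr)) ^ 2)).flip (1, 0)).comp
            (((fderiv ℝ (fun b => F₁ (x ∘ Sum.inl) b ^ 2) (w ∘ Sum.inl)).comp (prL m n)).prod
              ((fderiv ℝ (fun b => F₂ (x ∘ Sum.inr) b ^ 2) (w ∘ Sum.inr)).comp (prR m n)))) := by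
  have hc := hprod.hasFDerivAt_coefY hx1 hx2 hw1 hw2 (1, 0)
  have hd : HasFDerivAt (fun w' => fderiv ℝ (fun b => F₁ (x ∘ Sum.inl) b ^ 2) (prL m n w')
        (Pi.single j 1))
      (((fderiv ℝ (fderiv ℝ (fun b => F₁ (x ∘ Sum.inl) b ^ 2)) (w ∘ Sum.inl)).flip
        (Pi.single j 1)).comp (prL m n)) w :=
    by have := (hprod.finsler₁.hasFDerivAt_pdyY hx1 hw1 j).comp w (prL m n).hasFDerivAt; exact this
  have hmul := hc.fun_mul hd
  have hev : (fun w' => pdy (fun a b => F a b ^ 2) (Sum.inl j) x w')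
      =ᶠ[nhds w] (fun w' => fderiv ℝ (fun p : ℝ × ℝ => f p.1 p.2)
        ((F₁ (x ∘ Sum.inl) (prL m n w')) ^ 2, (F₂ (x ∘ Sum.inr) (prR m n w')) ^ 2) (1, 0)
        * fderiv ℝ (fun b => F₁ (x ∘ Sum.inl) b ^ 2) (prL m n w') (Pi.single j 1)) := by
    filter_upwards [isOpen_Omega.mem_nhds ⟨hw1, hw2⟩] with w' hw'
    exact hprod.pdy_G_inl hx1 hx2 hw'.1 hw'.2 j
  rw [hev.fderiv_eq, hmul.fderiv]
  rfl

lemma IsMinkowskianProduct.fderiv_pdyG_inr (hprod : IsMinkowskianProduct U₁ U₂ F₁ F₂ f F)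
    (hx1 : x ∘ Sum.inl ∈ U₁) (hx2 : x ∘ Sum.inr ∈ U₂)
    (hw1 : w ∘ Sum.inl ≠ 0) (hw2 : w ∘ Sum.inr ≠ 0) (j : Fin n) :
    fderiv ℝ (fun w' => pdy (fun a b => F a b ^ 2) (Sum.inr j) x w') w
      = fderiv ℝ (fun p : ℝ × ℝ => f p.1 p.2)
          ((F₁ (x ∘ Sum.inl) (w ∘ Sum.inl)) ^ 2, (F₂ (x ∘ Sum.inr) (w ∘ Sum.inr)) ^ 2) (0, 1)
          • (((fderiv ℝ (fderiv ℝ (fun b => F₂ (x ∘ Sum.inr) b ^ 2)) (w ∘ Sum.inr)).flip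
              (Pi.single j 1)).comp (prR m n))
        + pdy (fun a b => F₂ a b ^ 2) j (x ∘ Sum.inr) (w ∘ Sum.inr)
          • (((fderiv ℝ (fderiv ℝ (fun p : ℝ × ℝ => f p.1 p.2))
              ((F₁ (x ∘ Sum.inl) (w ∘ Sum.inl)) ^ 2,
                (F₂ (x ∘ Sum.inr) (w ∘ Sum.inr)) ^ 2)).flip (0, 1)).comp
            (((fderiv ℝ (fun b => F₁ (x ∘ Sum.inl) b ^ 2) (w ∘ Sum.inl)).comp (prL m n)).prod
              ((fderiv ℝ (fun b => F₂ (x ∘ Sum.inr) b ^ 2) (w ∘ Sum.inr)).comp (prR m n)))) := by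
  have hc := hprod.hasFDerivAt_coefY hx1 hx2 hw1 hw2 (0, 1)
  have hd : HasFDerivAt (fun w' => fderiv ℝ (fun b => F₂ (x ∘ Sum.inr) b ^ 2) (prR m n w')
        (Pi.single j 1))
      (((fderiv ℝ (fderiv ℝ (fun b => F₂ (x ∘ Sum.inr) b ^ 2)) (w ∘ Sum.inr)).flip
        (Pi.single j 1)).comp (prR m n)) w :=
    by have := (hprod.finsler₂.hasFDerivAt_pdyY hx2 hw2 j).comp w (prR m n).hasFDerivAt; exact this
  have hmul := hc.fun_mul hd
  have hev : (fun w' => pdy (fun a b => F a b ^ 2) (Sum.inr j) x w')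
      =ᶠ[nhds w] (fun w' => fderiv ℝ (fun p : ℝ × ℝ => f p.1 p.2)
        ((F₁ (x ∘ Sum.inl) (prL m n w')) ^ 2, (F₂ (x ∘ Sum.inr) (prR m n w')) ^ 2) (0, 1)
        * fderiv ℝ (fun b => F₂ (x ∘ Sum.inr) b ^ 2) (prR m n w') (Pi.single j 1)) := by
    filter_upwards [isOpen_Omega.mem_nhds ⟨hw1, hw2⟩] with w' hw'
    exact hprod.pdy_G_inr hx1 hx2 hw'.1 hw'.2 j
  rw [hev.fderiv_eq, hmul.fderiv]
  rfl

end ProductAux3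

section ProductAux4

set_option linter.unusedSectionVars false
set_option maxHeartbeats 1000000

variable {m n : ℕ}
variable {U₁ : Set (Fin m → ℝ)} {U₂ : Set (Fin n → ℝ)}
variable {F₁ : (Fin m → ℝ) → (Fin m → ℝ) → ℝ} {F₂ : (Fin n → ℝ) → (Fin n → ℝ) → ℝ}
variable {f : ℝ → ℝ → ℝ} {F : (Fin m ⊕ Fin n → ℝ) → (Fin m ⊕ Fin n → ℝ) → ℝ}
variable {x w : Fin m ⊕ Fin n → ℝ}

lemma IsMinkowskianProduct.fund_inl_inl (hprod : IsMinkowskianProduct U₁ U₂ F₁ F₂ f F)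
    (hx1 : x ∘ Sum.inl ∈ U₁) (hx2 : x ∘ Sum.inr ∈ U₂)
    (hw1 : w ∘ Sum.inl ≠ 0) (hw2 : w ∘ Sum.inr ≠ 0) (i j : Fin m) :
    fundTensor F x w (Sum.inl i) (Sum.inl j)
      = fderiv ℝ (fun p : ℝ × ℝ => f p.1 p.2)
          ((F₁ (x ∘ Sum.inl) (w ∘ Sum.inl)) ^ 2, (F₂ (x ∘ Sum.inr) (w ∘ Sum.inr)) ^ 2) (1, 0)
          * fundTensor F₁ (x ∘ Sum.inl) (w ∘ Sum.inl) i j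
        + fderiv ℝ (fderiv ℝ (fun p : ℝ × ℝ => f p.1 p.2))
            ((F₁ (x ∘ Sum.inl) (w ∘ Sum.inl)) ^ 2, (F₂ (x ∘ Sum.inr) (w ∘ Sum.inr)) ^ 2) (1, 0) (1, 0)
          * (pdy (fun a b => F₁ a b ^ 2) i (x ∘ Sum.inl) (w ∘ Sum.inl)
            * pdy (fun a b => F₁ a b ^ 2) j (x ∘ Sum.inl) (w ∘ Sum.inl)) := by
  show fderiv ℝ (fun w' => pdy (fun a b => F a b ^ 2) (Sum.inl j) x w') w
      (Pi.single (Sum.inl i) 1) = _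
  rw [hprod.fderiv_pdyG_inl hx1 hx2 hw1 hw2 j]
  simp only [ContinuousLinearMap.add_apply, ContinuousLinearMap.coe_smul', Pi.smul_apply,
    ContinuousLinearMap.coe_comp', Function.comp_apply, ContinuousLinearMap.flip_apply,
    ContinuousLinearMap.prod_apply, prL_single_inl, prR_single_inl, map_zero, smul_eq_mul]
  rw [clm2_apply₂]
  rw [← hprod.finsler₁.fundTensor_eq hx1 hw1 i j]
  show _ * fundTensor F₁ (x ∘ Sum.inl) (w ∘ Sum.inl) i j
      + pdy (fun a b => F₁ a b ^ 2) j (x ∘ Sum.inl) (w ∘ Sum.inl)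
        * (pdy (fun a b => F₁ a b ^ 2) i (x ∘ Sum.inl) (w ∘ Sum.inl) * _ + 0 * _) = _
  ring

lemma IsMinkowskianProduct.fund_inr_inl (hprod : IsMinkowskianProduct U₁ U₂ F₁ F₂ f F)
    (hx1 : x ∘ Sum.inl ∈ U₁) (hx2 : x ∘ Sum.inr ∈ U₂)
    (hw1 : w ∘ Sum.inl ≠ 0) (hw2 : w ∘ Sum.inr ≠ 0) (i : Fin n) (j : Fin m) :
    fundTensor F x w (Sum.inr i) (Sum.inl j)
      = fderiv ℝ (fderiv ℝ (fun p : ℝ × ℝ => f p.1 p.2))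
            ((F₁ (x ∘ Sum.inl) (w ∘ Sum.inl)) ^ 2, (F₂ (x ∘ Sum.inr) (w ∘ Sum.inr)) ^ 2) (0, 1) (1, 0)
          * (pdy (fun a b => F₂ a b ^ 2) i (x ∘ Sum.inr) (w ∘ Sum.inr)
            * pdy (fun a b => F₁ a b ^ 2) j (x ∘ Sum.inl) (w ∘ Sum.inl)) := by
  show fderiv ℝ (fun w' => pdy (fun a b => F a b ^ 2) (Sum.inl j) x w') w
      (Pi.single (Sum.inr i) 1) = _
  rw [hprod.fderiv_pdyG_inl hx1 hx2 hw1 hw2 j]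
  simp only [ContinuousLinearMap.add_apply, ContinuousLinearMap.coe_smul', Pi.smul_apply,
    ContinuousLinearMap.coe_comp', Function.comp_apply, ContinuousLinearMap.flip_apply,
    ContinuousLinearMap.prod_apply, prL_single_inr, prR_single_inr, map_zero, smul_eq_mul]
  rw [clm2_apply₂]
  show _ * 0 + pdy (fun a b => F₁ a b ^ 2) j (x ∘ Sum.inl) (w ∘ Sum.inl)
      * (0 * _ + pdy (fun a b => F₂ a b ^ 2) i (x ∘ Sum.inr) (w ∘ Sum.inr) * _) = _
  ring

lemma IsMinkowskianProduct.fund_inl_inr (hprod : IsMinkowskianProduct U₁ U₂ F₁ F₂ f F)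
    (hx1 : x ∘ Sum.inl ∈ U₁) (hx2 : x ∘ Sum.inr ∈ U₂)
    (hw1 : w ∘ Sum.inl ≠ 0) (hw2 : w ∘ Sum.inr ≠ 0) (i : Fin m) (j : Fin n) :
    fundTensor F x w (Sum.inl i) (Sum.inr j)
      = fderiv ℝ (fderiv ℝ (fun p : ℝ × ℝ => f p.1 p.2))
            ((F₁ (x ∘ Sum.inl) (w ∘ Sum.inl)) ^ 2, (F₂ (x ∘ Sum.inr) (w ∘ Sum.inr)) ^ 2) (1, 0) (0, 1)
          * (pdy (fun a b => F₁ a b ^ 2) i (x ∘ Sum.inl) (w ∘ Sum.inl)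
            * pdy (fun a b => F₂ a b ^ 2) j (x ∘ Sum.inr) (w ∘ Sum.inr)) := by
  show fderiv ℝ (fun w' => pdy (fun a b => F a b ^ 2) (Sum.inr j) x w') w
      (Pi.single (Sum.inl i) 1) = _
  rw [hprod.fderiv_pdyG_inr hx1 hx2 hw1 hw2 j]
  simp only [ContinuousLinearMap.add_apply, ContinuousLinearMap.coe_smul', Pi.smul_apply,
    ContinuousLinearMap.coe_comp', Function.comp_apply, ContinuousLinearMap.flip_apply,
    ContinuousLinearMap.prod_apply, prL_single_inl, prR_single_inl, map_zero, smul_eq_mul]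
  rw [clm2_apply₂]
  show _ * 0 + pdy (fun a b => F₂ a b ^ 2) j (x ∘ Sum.inr) (w ∘ Sum.inr)
      * (pdy (fun a b => F₁ a b ^ 2) i (x ∘ Sum.inl) (w ∘ Sum.inl) * _ + 0 * _) = _
  ring

lemma IsMinkowskianProduct.fund_inr_inr (hprod : IsMinkowskianProduct U₁ U₂ F₁ F₂ f F)
    (hx1 : x ∘ Sum.inl ∈ U₁) (hx2 : x ∘ Sum.inr ∈ U₂)
    (hw1 : w ∘ Sum.inl ≠ 0) (hw2 : w ∘ Sum.inr ≠ 0) (i j : Fin n) :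
    fundTensor F x w (Sum.inr i) (Sum.inr j)
      = fderiv ℝ (fun p : ℝ × ℝ => f p.1 p.2)
          ((F₁ (x ∘ Sum.inl) (w ∘ Sum.inl)) ^ 2, (F₂ (x ∘ Sum.inr) (w ∘ Sum.inr)) ^ 2) (0, 1)
          * fundTensor F₂ (x ∘ Sum.inr) (w ∘ Sum.inr) i j
        + fderiv ℝ (fderiv ℝ (fun p : ℝ × ℝ => f p.1 p.2))
            ((F₁ (x ∘ Sum.inl) (w ∘ Sum.inl)) ^ 2, (F₂ (x ∘ Sum.inr) (w ∘ Sum.inr)) ^ 2) (0, 1) (0, 1)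
          * (pdy (fun a b => F₂ a b ^ 2) i (x ∘ Sum.inr) (w ∘ Sum.inr)
            * pdy (fun a b => F₂ a b ^ 2) j (x ∘ Sum.inr) (w ∘ Sum.inr)) := by
  show fderiv ℝ (fun w' => pdy (fun a b => F a b ^ 2) (Sum.inr j) x w') w
      (Pi.single (Sum.inr i) 1) = _
  rw [hprod.fderiv_pdyG_inr hx1 hx2 hw1 hw2 j]
  simp only [ContinuousLinearMap.add_apply, ContinuousLinearMap.coe_smul', Pi.smul_apply,
    ContinuousLinearMap.coe_comp', Function.comp_apply, ContinuousLinearMap.flip_apply,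
    ContinuousLinearMap.prod_apply, prL_single_inr, prR_single_inr, map_zero, smul_eq_mul]
  rw [clm2_apply₂]
  rw [← hprod.finsler₂.fundTensor_eq hx2 hw2 i j]
  show _ * fundTensor F₂ (x ∘ Sum.inr) (w ∘ Sum.inr) i j
      + pdy (fun a b => F₂ a b ^ 2) j (x ∘ Sum.inr) (w ∘ Sum.inr)
        * (0 * _ + pdy (fun a b => F₂ a b ^ 2) i (x ∘ Sum.inr) (w ∘ Sum.inr) * _) = _
  ring

end ProductAux4

section ProductAux5

set_option linter.unusedSectionVars false
set_option maxHeartbeats 1000000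

variable {m n : ℕ}
variable {U₁ : Set (Fin m → ℝ)} {U₂ : Set (Fin n → ℝ)}
variable {F₁ : (Fin m → ℝ) → (Fin m → ℝ) → ℝ} {F₂ : (Fin n → ℝ) → (Fin n → ℝ) → ℝ}
variable {f : ℝ → ℝ → ℝ} {F : (Fin m ⊕ Fin n → ℝ) → (Fin m ⊕ Fin n → ℝ) → ℝ}
variable {x w : Fin m ⊕ Fin n → ℝ}

lemma IsMinkowskianProduct.hasFDerivAt_pairX (hprod : IsMinkowskianProduct U₁ U₂ F₁ F₂ f F)
    (hx1 : x ∘ Sum.inl ∈ U₁) (hx2 : x ∘ Sum.inr ∈ U₂)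
    (hw1 : w ∘ Sum.inl ≠ 0) (hw2 : w ∘ Sum.inr ≠ 0) :
    HasFDerivAt (fun x' => ((F₁ (prL m n x') (w ∘ Sum.inl)) ^ 2,
        (F₂ (prR m n x') (w ∘ Sum.inr)) ^ 2))
      (((fderiv ℝ (fun a => F₁ a (w ∘ Sum.inl) ^ 2) (x ∘ Sum.inl)).comp (prL m n)).prod
        ((fderiv ℝ (fun a => F₂ a (w ∘ Sum.inr) ^ 2) (x ∘ Sum.inr)).comp (prR m n))) x :=
  by
    have h1 := (hprod.finsler₁.diffX hx1 hw1).hasFDerivAt.comp x (prL m n).hasFDerivAt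
    have h2 := (hprod.finsler₂.diffX hx2 hw2).hasFDerivAt.comp x (prR m n).hasFDerivAt
    exact h1.prodMk h2

lemma IsMinkowskianProduct.hasFDerivAt_coefX (hprod : IsMinkowskianProduct U₁ U₂ F₁ F₂ f F)
    (hx1 : x ∘ Sum.inl ∈ U₁) (hx2 : x ∘ Sum.inr ∈ U₂)
    (hw1 : w ∘ Sum.inl ≠ 0) (hw2 : w ∘ Sum.inr ≠ 0) (v : ℝ × ℝ) :
    HasFDerivAt (fun x' => fderiv ℝ (fun p : ℝ × ℝ => f p.1 p.2)
        ((F₁ (prL m n x') (w ∘ Sum.inl)) ^ 2, (F₂ (prR m n x') (w ∘ Sum.inr)) ^ 2) v)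
      (((fderiv ℝ (fderiv ℝ (fun p : ℝ × ℝ => f p.1 p.2))
          ((F₁ (x ∘ Sum.inl) (w ∘ Sum.inl)) ^ 2, (F₂ (x ∘ Sum.inr) (w ∘ Sum.inr)) ^ 2)).flip v).comp
        (((fderiv ℝ (fun a => F₁ a (w ∘ Sum.inl) ^ 2) (x ∘ Sum.inl)).comp (prL m n)).prod
          ((fderiv ℝ (fun a => F₂ a (w ∘ Sum.inr) ^ 2) (x ∘ Sum.inr)).comp (prR m n)))) x := by
  have h0 : HasFDerivAt (fun p : ℝ × ℝ => fderiv ℝ (fun q : ℝ × ℝ => f q.1 q.2) p v)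
      ((fderiv ℝ (fderiv ℝ (fun p : ℝ × ℝ => f p.1 p.2))
        ((F₁ (x ∘ Sum.inl) (w ∘ Sum.inl)) ^ 2, (F₂ (x ∘ Sum.inr) (w ∘ Sum.inr)) ^ 2)).flip v)
      ((F₁ (x ∘ Sum.inl) (w ∘ Sum.inl)) ^ 2, (F₂ (x ∘ Sum.inr) (w ∘ Sum.inr)) ^ 2) := by
    have := (hprod.phi_fderiv_hasFDerivAt (hprod.s_pos hx1 hw1)
      (hprod.t_pos hx2 hw2)).clm_apply (hasFDerivAt_const v _)
    simpa using this
  exact h0.comp x (hprod.hasFDerivAt_pairX hx1 hx2 hw1 hw2)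

lemma IsMinkowskianProduct.fderiv_pdxG_inl (hprod : IsMinkowskianProduct U₁ U₂ F₁ F₂ f F)
    (hx1 : x ∘ Sum.inl ∈ U₁) (hx2 : x ∘ Sum.inr ∈ U₂)
    (hw1 : w ∘ Sum.inl ≠ 0) (hw2 : w ∘ Sum.inr ≠ 0) (j : Fin m) :
    fderiv ℝ (fun x' => pdy (fun a b => F a b ^ 2) (Sum.inl j) x' w) x
      = fderiv ℝ (fun p : ℝ × ℝ => f p.1 p.2)
          ((F₁ (x ∘ Sum.inl) (w ∘ Sum.inl)) ^ 2, (F₂ (x ∘ Sum.inr) (w ∘ Sum.inr)) ^ 2) (1, 0)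
          • ((fderiv ℝ (fun a => pdy (fun u v => F₁ u v ^ 2) j a (w ∘ Sum.inl))
              (x ∘ Sum.inl)).comp (prL m n))
        + pdy (fun a b => F₁ a b ^ 2) j (x ∘ Sum.inl) (w ∘ Sum.inl)
          • (((fderiv ℝ (fderiv ℝ (fun p : ℝ × ℝ => f p.1 p.2))
              ((F₁ (x ∘ Sum.inl) (w ∘ Sum.inl)) ^ 2,
                (F₂ (x ∘ Sum.inr) (w ∘ Sum.inr)) ^ 2)).flip (1, 0)).comp
            (((fderiv ℝ (fun a => F₁ a (w ∘ Sum.inl) ^ 2) (x ∘ Sum.inl)).comp (prL m n)).prod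
              ((fderiv ℝ (fun a => F₂ a (w ∘ Sum.inr) ^ 2) (x ∘ Sum.inr)).comp (prR m n)))) := by
  have hc := hprod.hasFDerivAt_coefX hx1 hx2 hw1 hw2 (1, 0)
  have hd : HasFDerivAt (fun x' => pdy (fun u v => F₁ u v ^ 2) j (prL m n x') (w ∘ Sum.inl))
      ((fderiv ℝ (fun a => pdy (fun u v => F₁ u v ^ 2) j a (w ∘ Sum.inl))
        (x ∘ Sum.inl)).comp (prL m n)) x :=
    by have := ((hprod.finsler₁.diffX_pdy hx1 hw1 j).hasFDerivAt).comp x (prL m n).hasFDerivAt; exact this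
  have hmul := hc.fun_mul hd
  have hev : (fun x' => pdy (fun a b => F a b ^ 2) (Sum.inl j) x' w)
      =ᶠ[nhds x] (fun x' => fderiv ℝ (fun p : ℝ × ℝ => f p.1 p.2)
        ((F₁ (prL m n x') (w ∘ Sum.inl)) ^ 2, (F₂ (prR m n x') (w ∘ Sum.inr)) ^ 2) (1, 0)
        * pdy (fun u v => F₁ u v ^ 2) j (prL m n x') (w ∘ Sum.inl)) := by
    filter_upwards [hprod.finsler.isOpen.mem_nhds (Set.mem_setOf.mpr ⟨hx1, hx2⟩)] with x' hx'
    exact hprod.pdy_G_inl hx'.1 hx'.2 hw1 hw2 j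
  rw [hev.fderiv_eq, hmul.fderiv]
  rfl

lemma IsMinkowskianProduct.fderiv_pdxG_inr (hprod : IsMinkowskianProduct U₁ U₂ F₁ F₂ f F)
    (hx1 : x ∘ Sum.inl ∈ U₁) (hx2 : x ∘ Sum.inr ∈ U₂)
    (hw1 : w ∘ Sum.inl ≠ 0) (hw2 : w ∘ Sum.inr ≠ 0) (j : Fin n) :
    fderiv ℝ (fun x' => pdy (fun a b => F a b ^ 2) (Sum.inr j) x' w) x
      = fderiv ℝ (fun p : ℝ × ℝ => f p.1 p.2)
          ((F₁ (x ∘ Sum.inl) (w ∘ Sum.inl)) ^ 2, (F₂ (x ∘ Sum.inr) (w ∘ Sum.inr)) ^ 2) (0, 1)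
          • ((fderiv ℝ (fun a => pdy (fun u v => F₂ u v ^ 2) j a (w ∘ Sum.inr))
              (x ∘ Sum.inr)).comp (prR m n))
        + pdy (fun a b => F₂ a b ^ 2) j (x ∘ Sum.inr) (w ∘ Sum.inr)
          • (((fderiv ℝ (fderiv ℝ (fun p : ℝ × ℝ => f p.1 p.2))
              ((F₁ (x ∘ Sum.inl) (w ∘ Sum.inl)) ^ 2,
                (F₂ (x ∘ Sum.inr) (w ∘ Sum.inr)) ^ 2)).flip (0, 1)).comp
            (((fderiv ℝ (fun a => F₁ a (w ∘ Sum.inl) ^ 2) (x ∘ Sum.inl)).comp (prL m n)).prod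
              ((fderiv ℝ (fun a => F₂ a (w ∘ Sum.inr) ^ 2) (x ∘ Sum.inr)).comp (prR m n)))) := by
  have hc := hprod.hasFDerivAt_coefX hx1 hx2 hw1 hw2 (0, 1)
  have hd : HasFDerivAt (fun x' => pdy (fun u v => F₂ u v ^ 2) j (prR m n x') (w ∘ Sum.inr))
      ((fderiv ℝ (fun a => pdy (fun u v => F₂ u v ^ 2) j a (w ∘ Sum.inr))
        (x ∘ Sum.inr)).comp (prR m n)) x :=
    by have := ((hprod.finsler₂.diffX_pdy hx2 hw2 j).hasFDerivAt).comp x (prR m n).hasFDerivAt; exact this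
  have hmul := hc.fun_mul hd
  have hev : (fun x' => pdy (fun a b => F a b ^ 2) (Sum.inr j) x' w)
      =ᶠ[nhds x] (fun x' => fderiv ℝ (fun p : ℝ × ℝ => f p.1 p.2)
        ((F₁ (prL m n x') (w ∘ Sum.inl)) ^ 2, (F₂ (prR m n x') (w ∘ Sum.inr)) ^ 2) (0, 1)
        * pdy (fun u v => F₂ u v ^ 2) j (prR m n x') (w ∘ Sum.inr)) := by
    filter_upwards [hprod.finsler.isOpen.mem_nhds (Set.mem_setOf.mpr ⟨hx1, hx2⟩)] with x' hx'
    exact hprod.pdy_G_inr hx'.1 hx'.2 hw1 hw2 j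
  rw [hev.fderiv_eq, hmul.fderiv]
  rfl

end ProductAux5

section ProductAux6

set_option linter.unusedSectionVars false
set_option maxHeartbeats 1000000

variable {m n : ℕ}
variable {U₁ : Set (Fin m → ℝ)} {U₂ : Set (Fin n → ℝ)}
variable {F₁ : (Fin m → ℝ) → (Fin m → ℝ) → ℝ} {F₂ : (Fin n → ℝ) → (Fin n → ℝ) → ℝ}
variable {f : ℝ → ℝ → ℝ} {F : (Fin m ⊕ Fin n → ℝ) → (Fin m ⊕ Fin n → ℝ) → ℝ}
variable {x w : Fin m ⊕ Fin n → ℝ}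

lemma IsMinkowskianProduct.pdxy_inl_inl (hprod : IsMinkowskianProduct U₁ U₂ F₁ F₂ f F)
    (hx1 : x ∘ Sum.inl ∈ U₁) (hx2 : x ∘ Sum.inr ∈ U₂)
    (hw1 : w ∘ Sum.inl ≠ 0) (hw2 : w ∘ Sum.inr ≠ 0) (i q : Fin m) :
    pdx (pdy (fun a b => F a b ^ 2) (Sum.inl i)) (Sum.inl q) x w
      = fderiv ℝ (fun p : ℝ × ℝ => f p.1 p.2)
          ((F₁ (x ∘ Sum.inl) (w ∘ Sum.inl)) ^ 2, (F₂ (x ∘ Sum.inr) (w ∘ Sum.inr)) ^ 2) (1, 0)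
          * pdx (pdy (fun a b => F₁ a b ^ 2) i) q (x ∘ Sum.inl) (w ∘ Sum.inl)
        + fderiv ℝ (fderiv ℝ (fun p : ℝ × ℝ => f p.1 p.2))
            ((F₁ (x ∘ Sum.inl) (w ∘ Sum.inl)) ^ 2, (F₂ (x ∘ Sum.inr) (w ∘ Sum.inr)) ^ 2) (1, 0) (1, 0)
          * (pdx (fun a b => F₁ a b ^ 2) q (x ∘ Sum.inl) (w ∘ Sum.inl)
            * pdy (fun a b => F₁ a b ^ 2) i (x ∘ Sum.inl) (w ∘ Sum.inl)) := by
  show fderiv ℝ (fun x' => pdy (fun a b => F a b ^ 2) (Sum.inl i) x' w) x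
      (Pi.single (Sum.inl q) 1) = _
  rw [hprod.fderiv_pdxG_inl hx1 hx2 hw1 hw2 i]
  simp only [ContinuousLinearMap.add_apply, ContinuousLinearMap.coe_smul', Pi.smul_apply,
    ContinuousLinearMap.coe_comp', Function.comp_apply, ContinuousLinearMap.flip_apply,
    ContinuousLinearMap.prod_apply, prL_single_inl, prR_single_inl, map_zero, smul_eq_mul]
  rw [clm2_apply₂]
  show _ * pdx (pdy (fun a b => F₁ a b ^ 2) i) q (x ∘ Sum.inl) (w ∘ Sum.inl)
      + pdy (fun a b => F₁ a b ^ 2) i (x ∘ Sum.inl) (w ∘ Sum.inl)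
        * (pdx (fun a b => F₁ a b ^ 2) q (x ∘ Sum.inl) (w ∘ Sum.inl) * _ + 0 * _) = _
  ring

lemma IsMinkowskianProduct.pdxy_inl_inr (hprod : IsMinkowskianProduct U₁ U₂ F₁ F₂ f F)
    (hx1 : x ∘ Sum.inl ∈ U₁) (hx2 : x ∘ Sum.inr ∈ U₂)
    (hw1 : w ∘ Sum.inl ≠ 0) (hw2 : w ∘ Sum.inr ≠ 0) (i : Fin m) (q : Fin n) :
    pdx (pdy (fun a b => F a b ^ 2) (Sum.inl i)) (Sum.inr q) x w
      = fderiv ℝ (fderiv ℝ (fun p : ℝ × ℝ => f p.1 p.2))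
            ((F₁ (x ∘ Sum.inl) (w ∘ Sum.inl)) ^ 2, (F₂ (x ∘ Sum.inr) (w ∘ Sum.inr)) ^ 2) (0, 1) (1, 0)
          * (pdx (fun a b => F₂ a b ^ 2) q (x ∘ Sum.inr) (w ∘ Sum.inr)
            * pdy (fun a b => F₁ a b ^ 2) i (x ∘ Sum.inl) (w ∘ Sum.inl)) := by
  show fderiv ℝ (fun x' => pdy (fun a b => F a b ^ 2) (Sum.inl i) x' w) x
      (Pi.single (Sum.inr q) 1) = _
  rw [hprod.fderiv_pdxG_inl hx1 hx2 hw1 hw2 i]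
  simp only [ContinuousLinearMap.add_apply, ContinuousLinearMap.coe_smul', Pi.smul_apply,
    ContinuousLinearMap.coe_comp', Function.comp_apply, ContinuousLinearMap.flip_apply,
    ContinuousLinearMap.prod_apply, prL_single_inr, prR_single_inr, map_zero, smul_eq_mul]
  rw [clm2_apply₂]
  show _ * 0 + pdy (fun a b => F₁ a b ^ 2) i (x ∘ Sum.inl) (w ∘ Sum.inl)
      * (0 * _ + pdx (fun a b => F₂ a b ^ 2) q (x ∘ Sum.inr) (w ∘ Sum.inr) * _) = _
  ring

lemma IsMinkowskianProduct.pdxy_inr_inl (hprod : IsMinkowskianProduct U₁ U₂ F₁ F₂ f F)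
    (hx1 : x ∘ Sum.inl ∈ U₁) (hx2 : x ∘ Sum.inr ∈ U₂)
    (hw1 : w ∘ Sum.inl ≠ 0) (hw2 : w ∘ Sum.inr ≠ 0) (i : Fin n) (q : Fin m) :
    pdx (pdy (fun a b => F a b ^ 2) (Sum.inr i)) (Sum.inl q) x w
      = fderiv ℝ (fderiv ℝ (fun p : ℝ × ℝ => f p.1 p.2))
            ((F₁ (x ∘ Sum.inl) (w ∘ Sum.inl)) ^ 2, (F₂ (x ∘ Sum.inr) (w ∘ Sum.inr)) ^ 2) (1, 0) (0, 1)
          * (pdx (fun a b => F₁ a b ^ 2) q (x ∘ Sum.inl) (w ∘ Sum.inl)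
            * pdy (fun a b => F₂ a b ^ 2) i (x ∘ Sum.inr) (w ∘ Sum.inr)) := by
  show fderiv ℝ (fun x' => pdy (fun a b => F a b ^ 2) (Sum.inr i) x' w) x
      (Pi.single (Sum.inl q) 1) = _
  rw [hprod.fderiv_pdxG_inr hx1 hx2 hw1 hw2 i]
  simp only [ContinuousLinearMap.add_apply, ContinuousLinearMap.coe_smul', Pi.smul_apply,
    ContinuousLinearMap.coe_comp', Function.comp_apply, ContinuousLinearMap.flip_apply,
    ContinuousLinearMap.prod_apply, prL_single_inl, prR_single_inl, map_zero, smul_eq_mul]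
  rw [clm2_apply₂]
  show _ * 0 + pdy (fun a b => F₂ a b ^ 2) i (x ∘ Sum.inr) (w ∘ Sum.inr)
      * (pdx (fun a b => F₁ a b ^ 2) q (x ∘ Sum.inl) (w ∘ Sum.inl) * _ + 0 * _) = _
  ring

lemma IsMinkowskianProduct.pdxy_inr_inr (hprod : IsMinkowskianProduct U₁ U₂ F₁ F₂ f F)
    (hx1 : x ∘ Sum.inl ∈ U₁) (hx2 : x ∘ Sum.inr ∈ U₂)
    (hw1 : w ∘ Sum.inl ≠ 0) (hw2 : w ∘ Sum.inr ≠ 0) (i q : Fin n) :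
    pdx (pdy (fun a b => F a b ^ 2) (Sum.inr i)) (Sum.inr q) x w
      = fderiv ℝ (fun p : ℝ × ℝ => f p.1 p.2)
          ((F₁ (x ∘ Sum.inl) (w ∘ Sum.inl)) ^ 2, (F₂ (x ∘ Sum.inr) (w ∘ Sum.inr)) ^ 2) (0, 1)
          * pdx (pdy (fun a b => F₂ a b ^ 2) i) q (x ∘ Sum.inr) (w ∘ Sum.inr)
        + fderiv ℝ (fderiv ℝ (fun p : ℝ × ℝ => f p.1 p.2))
            ((F₁ (x ∘ Sum.inl) (w ∘ Sum.inl)) ^ 2, (F₂ (x ∘ Sum.inr) (w ∘ Sum.inr)) ^ 2) (0, 1) (0, 1)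
          * (pdx (fun a b => F₂ a b ^ 2) q (x ∘ Sum.inr) (w ∘ Sum.inr)
            * pdy (fun a b => F₂ a b ^ 2) i (x ∘ Sum.inr) (w ∘ Sum.inr)) := by
  show fderiv ℝ (fun x' => pdy (fun a b => F a b ^ 2) (Sum.inr i) x' w) x
      (Pi.single (Sum.inr q) 1) = _
  rw [hprod.fderiv_pdxG_inr hx1 hx2 hw1 hw2 i]
  simp only [ContinuousLinearMap.add_apply, ContinuousLinearMap.coe_smul', Pi.smul_apply,
    ContinuousLinearMap.coe_comp', Function.comp_apply, ContinuousLinearMap.flip_apply,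
    ContinuousLinearMap.prod_apply, prL_single_inr, prR_single_inr, map_zero, smul_eq_mul]
  rw [clm2_apply₂]
  show _ * pdx (pdy (fun a b => F₂ a b ^ 2) i) q (x ∘ Sum.inr) (w ∘ Sum.inr)
      + pdy (fun a b => F₂ a b ^ 2) i (x ∘ Sum.inr) (w ∘ Sum.inr)
        * (0 * _ + pdx (fun a b => F₂ a b ^ 2) q (x ∘ Sum.inr) (w ∘ Sum.inr) * _) = _
  ring

end ProductAux6

section ProductMain

set_option linter.unusedSectionVars false
set_option maxHeartbeats 2000000

variable {m n : ℕ}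
variable {U₁ : Set (Fin m → ℝ)} {U₂ : Set (Fin n → ℝ)}
variable {F₁ : (Fin m → ℝ) → (Fin m → ℝ) → ℝ} {F₂ : (Fin n → ℝ) → (Fin n → ℝ) → ℝ}
variable {f : ℝ → ℝ → ℝ} {F : (Fin m ⊕ Fin n → ℝ) → (Fin m ⊕ Fin n → ℝ) → ℝ}
variable {x w : Fin m ⊕ Fin n → ℝ}

lemma IsMinkowskianProduct.spray_split (hprod : IsMinkowskianProduct U₁ U₂ F₁ F₂ f F)
    (hx1 : x ∘ Sum.inl ∈ U₁) (hx2 : x ∘ Sum.inr ∈ U₂)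
    (hw1 : w ∘ Sum.inl ≠ 0) (hw2 : w ∘ Sum.inr ≠ 0) :
    (∀ i : Fin m, spray F (Sum.inl i) x w = spray F₁ i (x ∘ Sum.inl) (w ∘ Sum.inl)) ∧
    (∀ i : Fin n, spray F (Sum.inr i) x w = spray F₂ i (x ∘ Sum.inr) (w ∘ Sum.inr)) := by
  have hw0 : w ≠ 0 := by
    intro h
    exact hw1 (by rw [h]; rfl)
  have hxS : x ∈ {x' : Fin m ⊕ Fin n → ℝ | x' ∘ Sum.inl ∈ U₁ ∧ x' ∘ Sum.inr ∈ U₂} := ⟨hx1, hx2⟩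
  have hPD := hprod.finsler.posDef x hxS w hw0
  have hdet : IsUnit (fundTensor F x w).det := isUnit_iff_ne_zero.mpr hPD.det_pos.ne'
  have hsym : ∀ α β, fundTensor F x w α β = fundTensor F x w β α := by
    intro α β
    rw [← hPD.isHermitian.apply α β]
    exact (star_trivial _).symm
  -- contraction facts, with `w (Sum.inl q)`-shaped statements (defeq casts)
  have con1K : ∀ i : Fin m, ∑ j, fundTensor F₁ (x ∘ Sum.inl) (w ∘ Sum.inl) i j
        * spray F₁ j (x ∘ Sum.inl) (w ∘ Sum.inl)
      = (1/2) * ((∑ q, pdx (pdy (fun a b => F₁ a b ^ 2) i) q (x ∘ Sum.inl) (w ∘ Sum.inl)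
          * w (Sum.inl q))
        - pdx (fun a b => F₁ a b ^ 2) i (x ∘ Sum.inl) (w ∘ Sum.inl)) :=
    fun i => hprod.finsler₁.contract1 hx1 hw1 i
  have con2K : (∑ j, pdy (fun a b => F₁ a b ^ 2) j (x ∘ Sum.inl) (w ∘ Sum.inl)
        * spray F₁ j (x ∘ Sum.inl) (w ∘ Sum.inl))
      = (1/2) * ∑ q, pdx (fun a b => F₁ a b ^ 2) q (x ∘ Sum.inl) (w ∘ Sum.inl)
          * w (Sum.inl q) :=
    hprod.finsler₁.contract2 hx1 hw1
  have con1H : ∀ i : Fin n, ∑ j, fundTensor F₂ (x ∘ Sum.inr) (w ∘ Sum.inr) i j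
        * spray F₂ j (x ∘ Sum.inr) (w ∘ Sum.inr)
      = (1/2) * ((∑ q, pdx (pdy (fun a b => F₂ a b ^ 2) i) q (x ∘ Sum.inr) (w ∘ Sum.inr)
          * w (Sum.inr q))
        - pdx (fun a b => F₂ a b ^ 2) i (x ∘ Sum.inr) (w ∘ Sum.inr)) :=
    fun i => hprod.finsler₂.contract1 hx2 hw2 i
  have con2H : (∑ j, pdy (fun a b => F₂ a b ^ 2) j (x ∘ Sum.inr) (w ∘ Sum.inr)
        * spray F₂ j (x ∘ Sum.inr) (w ∘ Sum.inr))
      = (1/2) * ∑ q, pdx (fun a b => F₂ a b ^ 2) q (x ∘ Sum.inr) (w ∘ Sum.inr)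
          * w (Sum.inr q) :=
    hprod.finsler₂.contract2 hx2 hw2
  -- the key matrix identity D = G *ᵥ c
  have hDc : ∀ β : Fin m ⊕ Fin n,
      (∑ γ, pdx (pdy (fun a b => F a b ^ 2) β) γ x w * w γ)
        - pdx (fun a b => F a b ^ 2) β x w
      = ∑ γ, fundTensor F x w β γ
          * (Sum.elim (fun j => 2 * spray F₁ j (x ∘ Sum.inl) (w ∘ Sum.inl))
              (fun j => 2 * spray F₂ j (x ∘ Sum.inr) (w ∘ Sum.inr)) γ) := by
    intro β
    cases β with
    | inl i =>
      rw [Fintype.sum_sum_type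
          (fun γ => pdx (pdy (fun a b => F a b ^ 2) (Sum.inl i)) γ x w * w γ),
        Fintype.sum_sum_type
          (fun γ => fundTensor F x w (Sum.inl i) γ
            * (Sum.elim (fun j => 2 * spray F₁ j (x ∘ Sum.inl) (w ∘ Sum.inl))
                (fun j => 2 * spray F₂ j (x ∘ Sum.inr) (w ∘ Sum.inr)) γ))]
      have step1 : (∑ j, pdx (pdy (fun a b => F a b ^ 2) (Sum.inl i)) (Sum.inl j) x w
            * w (Sum.inl j))
          = fderiv ℝ (fun p : ℝ × ℝ => f p.1 p.2)
              ((F₁ (x ∘ Sum.inl) (w ∘ Sum.inl)) ^ 2, (F₂ (x ∘ Sum.inr) (w ∘ Sum.inr)) ^ 2) (1, 0)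
              * (∑ j, pdx (pdy (fun a b => F₁ a b ^ 2) i) j (x ∘ Sum.inl) (w ∘ Sum.inl)
                  * w (Sum.inl j))
            + (fderiv ℝ (fderiv ℝ (fun p : ℝ × ℝ => f p.1 p.2))
                ((F₁ (x ∘ Sum.inl) (w ∘ Sum.inl)) ^ 2,
                  (F₂ (x ∘ Sum.inr) (w ∘ Sum.inr)) ^ 2) (1, 0) (1, 0)
                * pdy (fun a b => F₁ a b ^ 2) i (x ∘ Sum.inl) (w ∘ Sum.inl))
              * (∑ j, pdx (fun a b => F₁ a b ^ 2) j (x ∘ Sum.inl) (w ∘ Sum.inl)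
                  * w (Sum.inl j)) := by
        rw [Finset.mul_sum, Finset.mul_sum, ← Finset.sum_add_distrib]
        refine Finset.sum_congr rfl fun j _ => ?_
        rw [hprod.pdxy_inl_inl hx1 hx2 hw1 hw2 i j]
        ring
      have step2 : (∑ j, pdx (pdy (fun a b => F a b ^ 2) (Sum.inl i)) (Sum.inr j) x w
            * w (Sum.inr j))
          = (fderiv ℝ (fderiv ℝ (fun p : ℝ × ℝ => f p.1 p.2))
                ((F₁ (x ∘ Sum.inl) (w ∘ Sum.inl)) ^ 2,
                  (F₂ (x ∘ Sum.inr) (w ∘ Sum.inr)) ^ 2) (0, 1) (1, 0)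
                * pdy (fun a b => F₁ a b ^ 2) i (x ∘ Sum.inl) (w ∘ Sum.inl))
              * (∑ j, pdx (fun a b => F₂ a b ^ 2) j (x ∘ Sum.inr) (w ∘ Sum.inr)
                  * w (Sum.inr j)) := by
        rw [Finset.mul_sum]
        refine Finset.sum_congr rfl fun j _ => ?_
        rw [hprod.pdxy_inl_inr hx1 hx2 hw1 hw2 i j]
        ring
      have step3 : pdx (fun a b => F a b ^ 2) (Sum.inl i) x w
          = fderiv ℝ (fun p : ℝ × ℝ => f p.1 p.2)
              ((F₁ (x ∘ Sum.inl) (w ∘ Sum.inl)) ^ 2, (F₂ (x ∘ Sum.inr) (w ∘ Sum.inr)) ^ 2) (1, 0)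
            * pdx (fun a b => F₁ a b ^ 2) i (x ∘ Sum.inl) (w ∘ Sum.inl) :=
        hprod.pdx_G_inl hx1 hx2 hw1 hw2 i
      have step4 : (∑ j, fundTensor F x w (Sum.inl i) (Sum.inl j)
            * (Sum.elim (fun j => 2 * spray F₁ j (x ∘ Sum.inl) (w ∘ Sum.inl))
                (fun j => 2 * spray F₂ j (x ∘ Sum.inr) (w ∘ Sum.inr)) (Sum.inl j)))
          = (2 * fderiv ℝ (fun p : ℝ × ℝ => f p.1 p.2)
              ((F₁ (x ∘ Sum.inl) (w ∘ Sum.inl)) ^ 2, (F₂ (x ∘ Sum.inr) (w ∘ Sum.inr)) ^ 2) (1, 0))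
              * (∑ j, fundTensor F₁ (x ∘ Sum.inl) (w ∘ Sum.inl) i j
                  * spray F₁ j (x ∘ Sum.inl) (w ∘ Sum.inl))
            + (2 * fderiv ℝ (fderiv ℝ (fun p : ℝ × ℝ => f p.1 p.2))
                ((F₁ (x ∘ Sum.inl) (w ∘ Sum.inl)) ^ 2,
                  (F₂ (x ∘ Sum.inr) (w ∘ Sum.inr)) ^ 2) (1, 0) (1, 0)
                * pdy (fun a b => F₁ a b ^ 2) i (x ∘ Sum.inl) (w ∘ Sum.inl))
              * (∑ j, pdy (fun a b => F₁ a b ^ 2) j (x ∘ Sum.inl) (w ∘ Sum.inl)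
                  * spray F₁ j (x ∘ Sum.inl) (w ∘ Sum.inl)) := by
        rw [Finset.mul_sum, Finset.mul_sum, ← Finset.sum_add_distrib]
        refine Finset.sum_congr rfl fun j _ => ?_
        rw [hprod.fund_inl_inl hx1 hx2 hw1 hw2 i j, Sum.elim_inl]
        ring
      have step5 : (∑ j, fundTensor F x w (Sum.inl i) (Sum.inr j)
            * (Sum.elim (fun j => 2 * spray F₁ j (x ∘ Sum.inl) (w ∘ Sum.inl))
                (fun j => 2 * spray F₂ j (x ∘ Sum.inr) (w ∘ Sum.inr)) (Sum.inr j)))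
          = (2 * fderiv ℝ (fderiv ℝ (fun p : ℝ × ℝ => f p.1 p.2))
                ((F₁ (x ∘ Sum.inl) (w ∘ Sum.inl)) ^ 2,
                  (F₂ (x ∘ Sum.inr) (w ∘ Sum.inr)) ^ 2) (0, 1) (1, 0)
                * pdy (fun a b => F₁ a b ^ 2) i (x ∘ Sum.inl) (w ∘ Sum.inl))
              * (∑ j, pdy (fun a b => F₂ a b ^ 2) j (x ∘ Sum.inr) (w ∘ Sum.inr)
                  * spray F₂ j (x ∘ Sum.inr) (w ∘ Sum.inr)) := by
        rw [Finset.mul_sum]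
        refine Finset.sum_congr rfl fun j _ => ?_
        rw [hsym (Sum.inl i) (Sum.inr j), hprod.fund_inr_inl hx1 hx2 hw1 hw2 j i, Sum.elim_inr]
        ring
      rw [step1, step2, step3, step4, step5, con1K i, con2K, con2H]
      ring
    | inr i =>
      rw [Fintype.sum_sum_type
          (fun γ => pdx (pdy (fun a b => F a b ^ 2) (Sum.inr i)) γ x w * w γ),
        Fintype.sum_sum_type
          (fun γ => fundTensor F x w (Sum.inr i) γ
            * (Sum.elim (fun j => 2 * spray F₁ j (x ∘ Sum.inl) (w ∘ Sum.inl))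
                (fun j => 2 * spray F₂ j (x ∘ Sum.inr) (w ∘ Sum.inr)) γ))]
      have step1 : (∑ j, pdx (pdy (fun a b => F a b ^ 2) (Sum.inr i)) (Sum.inr j) x w
            * w (Sum.inr j))
          = fderiv ℝ (fun p : ℝ × ℝ => f p.1 p.2)
              ((F₁ (x ∘ Sum.inl) (w ∘ Sum.inl)) ^ 2, (F₂ (x ∘ Sum.inr) (w ∘ Sum.inr)) ^ 2) (0, 1)
              * (∑ j, pdx (pdy (fun a b => F₂ a b ^ 2) i) j (x ∘ Sum.inr) (w ∘ Sum.inr)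
                  * w (Sum.inr j))
            + (fderiv ℝ (fderiv ℝ (fun p : ℝ × ℝ => f p.1 p.2))
                ((F₁ (x ∘ Sum.inl) (w ∘ Sum.inl)) ^ 2,
                  (F₂ (x ∘ Sum.inr) (w ∘ Sum.inr)) ^ 2) (0, 1) (0, 1)
                * pdy (fun a b => F₂ a b ^ 2) i (x ∘ Sum.inr) (w ∘ Sum.inr))
              * (∑ j, pdx (fun a b => F₂ a b ^ 2) j (x ∘ Sum.inr) (w ∘ Sum.inr)
                  * w (Sum.inr j)) := by
        rw [Finset.mul_sum, Finset.mul_sum, ← Finset.sum_add_distrib]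
        refine Finset.sum_congr rfl fun j _ => ?_
        rw [hprod.pdxy_inr_inr hx1 hx2 hw1 hw2 i j]
        ring
      have step2 : (∑ j, pdx (pdy (fun a b => F a b ^ 2) (Sum.inr i)) (Sum.inl j) x w
            * w (Sum.inl j))
          = (fderiv ℝ (fderiv ℝ (fun p : ℝ × ℝ => f p.1 p.2))
                ((F₁ (x ∘ Sum.inl) (w ∘ Sum.inl)) ^ 2,
                  (F₂ (x ∘ Sum.inr) (w ∘ Sum.inr)) ^ 2) (1, 0) (0, 1)
                * pdy (fun a b => F₂ a b ^ 2) i (x ∘ Sum.inr) (w ∘ Sum.inr))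
              * (∑ j, pdx (fun a b => F₁ a b ^ 2) j (x ∘ Sum.inl) (w ∘ Sum.inl)
                  * w (Sum.inl j)) := by
        rw [Finset.mul_sum]
        refine Finset.sum_congr rfl fun j _ => ?_
        rw [hprod.pdxy_inr_inl hx1 hx2 hw1 hw2 i j]
        ring
      have step3 : pdx (fun a b => F a b ^ 2) (Sum.inr i) x w
          = fderiv ℝ (fun p : ℝ × ℝ => f p.1 p.2)
              ((F₁ (x ∘ Sum.inl) (w ∘ Sum.inl)) ^ 2, (F₂ (x ∘ Sum.inr) (w ∘ Sum.inr)) ^ 2) (0, 1)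
            * pdx (fun a b => F₂ a b ^ 2) i (x ∘ Sum.inr) (w ∘ Sum.inr) :=
        hprod.pdx_G_inr hx1 hx2 hw1 hw2 i
      have step4 : (∑ j, fundTensor F x w (Sum.inr i) (Sum.inr j)
            * (Sum.elim (fun j => 2 * spray F₁ j (x ∘ Sum.inl) (w ∘ Sum.inl))
                (fun j => 2 * spray F₂ j (x ∘ Sum.inr) (w ∘ Sum.inr)) (Sum.inr j)))
          = (2 * fderiv ℝ (fun p : ℝ × ℝ => f p.1 p.2)
              ((F₁ (x ∘ Sum.inl) (w ∘ Sum.inl)) ^ 2, (F₂ (x ∘ Sum.inr) (w ∘ Sum.inr)) ^ 2) (0, 1))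
              * (∑ j, fundTensor F₂ (x ∘ Sum.inr) (w ∘ Sum.inr) i j
                  * spray F₂ j (x ∘ Sum.inr) (w ∘ Sum.inr))
            + (2 * fderiv ℝ (fderiv ℝ (fun p : ℝ × ℝ => f p.1 p.2))
                ((F₁ (x ∘ Sum.inl) (w ∘ Sum.inl)) ^ 2,
                  (F₂ (x ∘ Sum.inr) (w ∘ Sum.inr)) ^ 2) (0, 1) (0, 1)
                * pdy (fun a b => F₂ a b ^ 2) i (x ∘ Sum.inr) (w ∘ Sum.inr))
              * (∑ j, pdy (fun a b => F₂ a b ^ 2) j (x ∘ Sum.inr) (w ∘ Sum.inr)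
                  * spray F₂ j (x ∘ Sum.inr) (w ∘ Sum.inr)) := by
        rw [Finset.mul_sum, Finset.mul_sum, ← Finset.sum_add_distrib]
        refine Finset.sum_congr rfl fun j _ => ?_
        rw [hprod.fund_inr_inr hx1 hx2 hw1 hw2 i j, Sum.elim_inr]
        ring
      have step5 : (∑ j, fundTensor F x w (Sum.inr i) (Sum.inl j)
            * (Sum.elim (fun j => 2 * spray F₁ j (x ∘ Sum.inl) (w ∘ Sum.inl))
                (fun j => 2 * spray F₂ j (x ∘ Sum.inr) (w ∘ Sum.inr)) (Sum.inl j)))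
          = (2 * fderiv ℝ (fderiv ℝ (fun p : ℝ × ℝ => f p.1 p.2))
                ((F₁ (x ∘ Sum.inl) (w ∘ Sum.inl)) ^ 2,
                  (F₂ (x ∘ Sum.inr) (w ∘ Sum.inr)) ^ 2) (1, 0) (0, 1)
                * pdy (fun a b => F₂ a b ^ 2) i (x ∘ Sum.inr) (w ∘ Sum.inr))
              * (∑ j, pdy (fun a b => F₁ a b ^ 2) j (x ∘ Sum.inl) (w ∘ Sum.inl)
                  * spray F₁ j (x ∘ Sum.inl) (w ∘ Sum.inl)) := by
        rw [Finset.mul_sum]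
        refine Finset.sum_congr rfl fun j _ => ?_
        rw [hsym (Sum.inr i) (Sum.inl j), hprod.fund_inl_inr hx1 hx2 hw1 hw2 j i, Sum.elim_inl]
        ring
      rw [step1, step2, step3, step4, step5, con1H i, con2K, con2H]
      ring
  -- conclude
  have hsp : ∀ α : Fin m ⊕ Fin n, spray F α x w
      = (1/2) * (Sum.elim (fun j => 2 * spray F₁ j (x ∘ Sum.inl) (w ∘ Sum.inl))
          (fun j => 2 * spray F₂ j (x ∘ Sum.inr) (w ∘ Sum.inr)) α) := by
    intro α
    have h1 : spray F α x w = (1/2) * ((fundTensor F x w)⁻¹ *ᵥ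
        (fun β => (∑ γ, pdx (pdy (fun a b => F a b ^ 2) β) γ x w * w γ)
          - pdx (fun a b => F a b ^ 2) β x w)) α := by
      show (1/2) * ∑ β, (fundTensor F x w)⁻¹ α β * _ = _
      rw [Matrix.mulVec, dotProduct]
    rw [h1]
    have h2 : (fun β => (∑ γ, pdx (pdy (fun a b => F a b ^ 2) β) γ x w * w γ)
          - pdx (fun a b => F a b ^ 2) β x w)
        = (fundTensor F x w) *ᵥ (Sum.elim (fun j => 2 * spray F₁ j (x ∘ Sum.inl) (w ∘ Sum.inl))
            (fun j => 2 * spray F₂ j (x ∘ Sum.inr) (w ∘ Sum.inr))) := by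
      funext β
      rw [hDc β, Matrix.mulVec, dotProduct]
    rw [h2, Matrix.mulVec_mulVec, Matrix.nonsing_inv_mul _ hdet, Matrix.one_mulVec]
  constructor
  · intro i
    rw [hsp (Sum.inl i), Sum.elim_inl]
    ring
  · intro i
    rw [hsp (Sum.inr i), Sum.elim_inr]
    ring

end ProductMain

section FinalAux

set_option linter.unusedSectionVars false
set_option maxHeartbeats 1000000

variable {m n : ℕ}

noncomputable def embL (m n : ℕ) : (Fin m → ℝ) →L[ℝ] (Fin m ⊕ Fin n → ℝ) :=
  ContinuousLinearMap.pi (fun α : Fin m ⊕ Fin n =>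
    match α with
    | Sum.inl i => ContinuousLinearMap.proj i
    | Sum.inr _ => 0)

noncomputable def embR (m n : ℕ) : (Fin n → ℝ) →L[ℝ] (Fin m ⊕ Fin n → ℝ) :=
  ContinuousLinearMap.pi (fun α : Fin m ⊕ Fin n =>
    match α with
    | Sum.inl _ => 0
    | Sum.inr i => ContinuousLinearMap.proj i)

lemma nondiff_transfer_l (g : (Fin m → ℝ) → ℝ) (y : Fin m ⊕ Fin n → ℝ)
    (hd : ¬ DifferentiableAt ℝ g (y ∘ Sum.inl)) :
    ¬ DifferentiableAt ℝ (fun w : Fin m ⊕ Fin n → ℝ => g (w ∘ Sum.inl)) y := by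
  intro h
  apply hd
  have hA : DifferentiableAt ℝ
      (fun v : Fin m → ℝ => embL m n v + Sum.elim (fun _ => (0:ℝ)) (y ∘ Sum.inr)) (y ∘ Sum.inl) :=
    (embL m n).differentiableAt.add_const _
  have hpt : (fun v : Fin m → ℝ => embL m n v + Sum.elim (fun _ => (0:ℝ)) (y ∘ Sum.inr))
      (y ∘ Sum.inl) = y := by
    funext α
    cases α with
    | inl i => show embL m n (y ∘ Sum.inl) (Sum.inl i) + 0 = y (Sum.inl i); simp [embL]
    | inr i => show embL m n (y ∘ Sum.inl) (Sum.inr i) + y (Sum.inr i) = y (Sum.inr i); simp [embL]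
  have hgy : g = (fun w : Fin m ⊕ Fin n → ℝ => g (w ∘ Sum.inl))
      ∘ (fun v : Fin m → ℝ => embL m n v + Sum.elim (fun _ => (0:ℝ)) (y ∘ Sum.inr)) := by
    funext v
    have h2 : ((embL m n v + Sum.elim (fun _ => (0:ℝ)) (y ∘ Sum.inr)) ∘ Sum.inl) = v := by
      funext i
      show embL m n v (Sum.inl i) + 0 = v i
      simp [embL]
    simp only [Function.comp_apply, h2]
  rw [hgy]
  have h' := h
  rw [← hpt] at h'
  exact DifferentiableAt.comp _ h' hA

lemma nondiff_transfer_r (g : (Fin n → ℝ) → ℝ) (y : Fin m ⊕ Fin n → ℝ)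
    (hd : ¬ DifferentiableAt ℝ g (y ∘ Sum.inr)) :
    ¬ DifferentiableAt ℝ (fun w : Fin m ⊕ Fin n → ℝ => g (w ∘ Sum.inr)) y := by
  intro h
  apply hd
  have hA : DifferentiableAt ℝ
      (fun v : Fin n → ℝ => embR m n v + Sum.elim (y ∘ Sum.inl) (fun _ => (0:ℝ))) (y ∘ Sum.inr) :=
    (embR m n).differentiableAt.add_const _
  have hpt : (fun v : Fin n → ℝ => embR m n v + Sum.elim (y ∘ Sum.inl) (fun _ => (0:ℝ)))
      (y ∘ Sum.inr) = y := by
    funext α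
    cases α with
    | inl i => show embR m n (y ∘ Sum.inr) (Sum.inl i) + y (Sum.inl i) = y (Sum.inl i); simp [embR]
    | inr i => show embR m n (y ∘ Sum.inr) (Sum.inr i) + 0 = y (Sum.inr i); simp [embR]
  have hgy : g = (fun w : Fin m ⊕ Fin n → ℝ => g (w ∘ Sum.inr))
      ∘ (fun v : Fin n → ℝ => embR m n v + Sum.elim (y ∘ Sum.inl) (fun _ => (0:ℝ))) := by
    funext v
    have h2 : ((embR m n v + Sum.elim (y ∘ Sum.inl) (fun _ => (0:ℝ))) ∘ Sum.inr) = v := by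
      funext i
      show embR m n v (Sum.inr i) + 0 = v i
      simp [embR]
    simp only [Function.comp_apply, h2]
  rw [hgy]
  have h' := h
  rw [← hpt] at h'
  exact DifferentiableAt.comp _ h' hA

end FinalAux


/-- The Cartan nonlinear connection coefficients of a Minkowskian product Finsler
metric split: `Γ^i_j = Γ₁^i_j`, `Γ^{i'}_{j'} = Γ₂^{i'}_{j'}`, and the mixed
coefficients vanish. -/
theorem nonlinConn_of_minkowskian_product {m n : ℕ}
    (U₁ : Set (Fin m → ℝ)) (U₂ : Set (Fin n → ℝ))
    (F₁ : (Fin m → ℝ) → (Fin m → ℝ) → ℝ) (F₂ : (Fin n → ℝ) → (Fin n → ℝ) → ℝ)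
    (f : ℝ → ℝ → ℝ) (F : (Fin m ⊕ Fin n → ℝ) → (Fin m ⊕ Fin n → ℝ) → ℝ)
    (hprod : IsMinkowskianProduct U₁ U₂ F₁ F₂ f F) :
    ∀ x : Fin m ⊕ Fin n → ℝ, (x ∘ Sum.inl) ∈ U₁ → (x ∘ Sum.inr) ∈ U₂ →
    ∀ y : Fin m ⊕ Fin n → ℝ, (y ∘ Sum.inl) ≠ 0 → (y ∘ Sum.inr) ≠ 0 →
      (∀ i j : Fin m,
        nonlinConn F (Sum.inl i) (Sum.inl j) x y =
          nonlinConn F₁ i j (x ∘ Sum.inl) (y ∘ Sum.inl)) ∧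
      (∀ i' j' : Fin n,
        nonlinConn F (Sum.inr i') (Sum.inr j') x y =
          nonlinConn F₂ i' j' (x ∘ Sum.inr) (y ∘ Sum.inr)) ∧
      (∀ (i' : Fin n) (j : Fin m), nonlinConn F (Sum.inr i') (Sum.inl j) x y = 0) ∧
      (∀ (i : Fin m) (j' : Fin n), nonlinConn F (Sum.inl i) (Sum.inr j') x y = 0) := by
  intro x hx1 hx2 y hy1 hy2
  have hevl : ∀ i : Fin m, (spray F (Sum.inl i) x) =ᶠ[nhds y]
      (fun w : Fin m ⊕ Fin n → ℝ => spray F₁ i (x ∘ Sum.inl) (w ∘ Sum.inl)) := by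
    intro i
    filter_upwards [isOpen_Omega.mem_nhds ⟨hy1, hy2⟩] with w hw
    exact (hprod.spray_split hx1 hx2 hw.1 hw.2).1 i
  have hevr : ∀ i : Fin n, (spray F (Sum.inr i) x) =ᶠ[nhds y]
      (fun w : Fin m ⊕ Fin n → ℝ => spray F₂ i (x ∘ Sum.inr) (w ∘ Sum.inr)) := by
    intro i
    filter_upwards [isOpen_Omega.mem_nhds ⟨hy1, hy2⟩] with w hw
    exact (hprod.spray_split hx1 hx2 hw.1 hw.2).2 i
  refine ⟨fun i j => ?_, fun i j => ?_, fun i j => ?_, fun i j => ?_⟩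
  · show fderiv ℝ (spray F (Sum.inl i) x) y (Pi.single (Sum.inl j) 1)
      = fderiv ℝ (spray F₁ i (x ∘ Sum.inl)) (y ∘ Sum.inl) (Pi.single j 1)
    rw [(hevl i).fderiv_eq]
    by_cases hd : DifferentiableAt ℝ (spray F₁ i (x ∘ Sum.inl)) (y ∘ Sum.inl)
    · have hcomp : HasFDerivAt
          (fun w : Fin m ⊕ Fin n → ℝ => spray F₁ i (x ∘ Sum.inl) (w ∘ Sum.inl))
          ((fderiv ℝ (spray F₁ i (x ∘ Sum.inl)) (y ∘ Sum.inl)).comp (prL m n)) y :=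
        by have := hd.hasFDerivAt.comp y (prL m n).hasFDerivAt; exact this
      rw [hcomp.fderiv, ContinuousLinearMap.coe_comp', Function.comp_apply, prL_single_inl]
    · rw [fderiv_zero_of_not_differentiableAt (nondiff_transfer_l _ y hd),
        fderiv_zero_of_not_differentiableAt hd]
      rfl
  · show fderiv ℝ (spray F (Sum.inr i) x) y (Pi.single (Sum.inr j) 1)
      = fderiv ℝ (spray F₂ i (x ∘ Sum.inr)) (y ∘ Sum.inr) (Pi.single j 1)
    rw [(hevr i).fderiv_eq]
    by_cases hd : DifferentiableAt ℝ (spray F₂ i (x ∘ Sum.inr)) (y ∘ Sum.inr)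
    · have hcomp : HasFDerivAt
          (fun w : Fin m ⊕ Fin n → ℝ => spray F₂ i (x ∘ Sum.inr) (w ∘ Sum.inr))
          ((fderiv ℝ (spray F₂ i (x ∘ Sum.inr)) (y ∘ Sum.inr)).comp (prR m n)) y :=
        by have := hd.hasFDerivAt.comp y (prR m n).hasFDerivAt; exact this
      rw [hcomp.fderiv, ContinuousLinearMap.coe_comp', Function.comp_apply, prR_single_inr]
    · rw [fderiv_zero_of_not_differentiableAt (nondiff_transfer_r _ y hd),
        fderiv_zero_of_not_differentiableAt hd]
      rfl
  · show fderiv ℝ (spray F (Sum.inr i) x) y (Pi.single (Sum.inl j) 1) = 0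
    rw [(hevr i).fderiv_eq]
    by_cases hd : DifferentiableAt ℝ (spray F₂ i (x ∘ Sum.inr)) (y ∘ Sum.inr)
    · have hcomp : HasFDerivAt
          (fun w : Fin m ⊕ Fin n → ℝ => spray F₂ i (x ∘ Sum.inr) (w ∘ Sum.inr))
          ((fderiv ℝ (spray F₂ i (x ∘ Sum.inr)) (y ∘ Sum.inr)).comp (prR m n)) y :=
        by have := hd.hasFDerivAt.comp y (prR m n).hasFDerivAt; exact this
      rw [hcomp.fderiv, ContinuousLinearMap.coe_comp', Function.comp_apply, prR_single_inl,
        map_zero]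
    · rw [fderiv_zero_of_not_differentiableAt (nondiff_transfer_r _ y hd)]
      rfl
  · show fderiv ℝ (spray F (Sum.inl i) x) y (Pi.single (Sum.inr j) 1) = 0
    rw [(hevl i).fderiv_eq]
    by_cases hd : DifferentiableAt ℝ (spray F₁ i (x ∘ Sum.inl)) (y ∘ Sum.inl)
    · have hcomp : HasFDerivAt
          (fun w : Fin m ⊕ Fin n → ℝ => spray F₁ i (x ∘ Sum.inl) (w ∘ Sum.inl))
          ((fderiv ℝ (spray F₁ i (x ∘ Sum.inl)) (y ∘ Sum.inl)).comp (prL m n)) y :=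
        by have := hd.hasFDerivAt.comp y (prL m n).hasFDerivAt; exact this
      rw [hcomp.fderiv, ContinuousLinearMap.coe_comp', Function.comp_apply, prL_single_inr,
        map_zero]
    · rw [fderiv_zero_of_not_differentiableAt (nondiff_transfer_l _ y hd)]
      rfl
end
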